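/- arXiv:1912.07203 — 5 statements merged into one kernel-verified Lean document; each statement's English description precedes it below -/
import Mathlib

section
/- Let G be a connected simple graph on n ≥ 333 vertices and let 0 < p ≤ 1. Let 𝒞 be a random subset of V(G) in which each vertex is included independently with probability p. Then with probability at least 0.9 the following holds: for every subset A ⊆ V(G) and every natural number i such that |B(A,i)| ≥ |A|·(log n)²/p, we have |B(A,i) ∩ 𝒞| ≥ |A|. -/
open MeasureTheory
open scoped ENNReal

/-- `graphBall G A i` is the set of vertices of `G` at graph distance at most `i`
from some vertex of `A`. -/
def graphBall {V : Type*} (G : SimpleGraph V) (A : Set V) (i : ℕ) : Set V :=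
  {v | ∃ a ∈ A, G.dist a v ≤ i}

section aux

variable {V : Type} [Fintype V]

lemma meas_all (s : Set (V → Bool)) : MeasurableSet s :=
  s.to_countable.measurableSet

lemma miss_prob (p : ℝ) (hp0 : 0 ≤ p) (hp1 : p ≤ 1) (S : Finset V) :
    (Measure.pi fun _ : V =>
        (PMF.bernoulli (Real.toNNReal p) (Real.toNNReal_le_one.mpr hp1)).toMeasure)
      {f : V → Bool | ∀ v ∈ S, f v = false} = ENNReal.ofReal ((1 - p) ^ S.card) := by
  classical
  have hset : {f : V → Bool | ∀ v ∈ S, f v = false} =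
      Set.pi Set.univ (fun v => if v ∈ S then ({false} : Set Bool) else Set.univ) := by
    ext f
    simp only [Set.mem_setOf_eq, Set.mem_pi, Set.mem_univ, forall_true_left]
    constructor
    · intro h v
      by_cases hv : v ∈ S <;> simp [hv, h]
    · intro h v hv
      have := h v
      simp [hv] at this
      exact this
  rw [hset, Measure.pi_pi]
  have hone : ∀ v : V, v ∉ S →
      ((PMF.bernoulli (Real.toNNReal p) (Real.toNNReal_le_one.mpr hp1)).toMeasure)
        (if v ∈ S then ({false} : Set Bool) else Set.univ) = 1 := by
    intro v hv; rw [if_neg hv]; exact measure_univ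
  rw [← Finset.prod_subset (Finset.subset_univ S) (fun v _ hv => hone v hv)]
  have hfalse : ∀ v ∈ S,
      ((PMF.bernoulli (Real.toNNReal p) (Real.toNNReal_le_one.mpr hp1)).toMeasure)
        (if v ∈ S then ({false} : Set Bool) else Set.univ) = ENNReal.ofReal (1 - p) := by
    intro v hv
    rw [if_pos hv, PMF.toMeasure_apply_singleton _ _ (measurableSet_singleton _),
      PMF.bernoulli_apply]
    show (1:ℝ≥0∞) - ENNReal.ofReal p = _
    rw [← ENNReal.ofReal_one, ← ENNReal.ofReal_sub _ hp0]
  rw [Finset.prod_congr rfl hfalse, Finset.prod_const, ENNReal.ofReal_pow (by linarith)]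

lemma ball_stab (G : SimpleGraph V) (hG : G.Connected) (A : Set V) (i : ℕ)
    (hi : Fintype.card V ≤ i) : graphBall G A i = graphBall G A (Fintype.card V) := by
  ext v
  simp only [graphBall, Set.mem_setOf_eq]
  constructor <;> rintro ⟨a, ha, hd⟩ <;> refine ⟨a, ha, ?_⟩
  · obtain ⟨pth, hp, hlen⟩ := (hG a v).exists_path_of_dist
    have := hp.length_lt
    omega
  · exact hd.trans hi

end aux

lemma key_numeric (n a : ℕ) (hn : 333 ≤ n) (ha : 1 ≤ a) :
    ((n:ℝ)^a) * (((n:ℝ)+1) * (n:ℝ)^(a-1) * Real.exp ((a:ℝ) - (a:ℝ) * (Real.logb 2 n)^2))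
      ≤ Real.exp (-(39:ℝ)) * (1/2:ℝ)^a := by
  have hn0 : (0:ℝ) < n := by positivity
  set L : ℝ := Real.logb 2 n with hLdef
  set c : ℝ := Real.log 2 with hcdef
  have hc1 : 0.6931 ≤ c := by
    have := Real.log_two_gt_d9; rw [hcdef]; linarith
  have hc2 : c ≤ 0.6932 := by
    have := Real.log_two_lt_d9; rw [hcdef]; linarith
  have hL8 : (8:ℝ) ≤ L := by
    have h256 : Real.logb 2 (256:ℝ) ≤ L := by
      apply Real.logb_le_logb_of_le (by norm_num) (by norm_num)
      have : (333:ℝ) ≤ n := by exact_mod_cast hn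
      linarith
    have : Real.logb 2 (256:ℝ) = 8 := by
      rw [show (256:ℝ) = 2^(8:ℕ) by norm_num, Real.logb_pow,
        Real.logb_self_eq_one (by norm_num)]
      norm_num
    linarith
  have hlogn : Real.log n = L * c := by
    rw [hLdef, Real.logb, div_mul_cancel₀]
    exact ne_of_gt (Real.log_pos (by norm_num))
  have h1 : (n:ℝ)^a = Real.exp ((a:ℝ) * Real.log n) := by
    rw [Real.exp_nat_mul, Real.exp_log hn0]
  have h2 : (n:ℝ)^(a-1) = Real.exp (((a-1:ℕ):ℝ) * Real.log n) := by
    rw [Real.exp_nat_mul, Real.exp_log hn0]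
  have h3 : (n:ℝ) + 1 ≤ Real.exp (Real.log n + c) := by
    rw [Real.exp_add, Real.exp_log hn0, hcdef, Real.exp_log (by norm_num)]
    have h333 : (333:ℝ) ≤ n := by exact_mod_cast hn
    linarith
  have hhalf : ((1:ℝ)/2)^a = Real.exp ((a:ℝ) * (-c)) := by
    rw [Real.exp_nat_mul, Real.exp_neg, hcdef, Real.exp_log (by norm_num)]
    norm_num
  have hka : ((a-1:ℕ):ℝ) = (a:ℝ) - 1 := by
    have := Nat.cast_sub ha (R := ℝ); simpa using this
  have ha1 : (1:ℝ) ≤ (a:ℝ) := by exact_mod_cast ha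
  calc ((n:ℝ)^a) * (((n:ℝ)+1) * (n:ℝ)^(a-1) * Real.exp ((a:ℝ) - (a:ℝ) * L^2))
      ≤ Real.exp ((a:ℝ) * Real.log n) * (Real.exp (Real.log n + c) *
          Real.exp (((a-1:ℕ):ℝ) * Real.log n) * Real.exp ((a:ℝ) - (a:ℝ) * L^2)) := by
        rw [h1, h2]; gcongr
    _ = Real.exp ((a:ℝ) * Real.log n + (Real.log n + c + ((a-1:ℕ):ℝ) * Real.log n
          + ((a:ℝ) - (a:ℝ) * L^2))) := by
        rw [← Real.exp_add, ← Real.exp_add, ← Real.exp_add]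
    _ ≤ Real.exp (-(39:ℝ) + (a:ℝ) * (-c)) := by
        apply Real.exp_le_exp.mpr
        rw [hlogn, hka]
        nlinarith [mul_nonneg (sub_nonneg.2 ha1) (sub_nonneg.2 hL8),
          mul_nonneg (mul_nonneg (sub_nonneg.2 ha1) (sub_nonneg.2 hL8)) (le_trans (by norm_num) hL8),
          sq_nonneg (L - 8), mul_le_mul_of_nonneg_left hc2 (le_of_lt (lt_of_lt_of_le zero_lt_one ha1))]
    _ = Real.exp (-(39:ℝ)) * (1/2:ℝ)^a := by rw [Real.exp_add, hhalf]

/-- Lemma 2.1: Let `G` be a connected graph on `n ≥ 333` vertices and `0 < p ≤ 1`.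
If `𝒞` is a random subset of `V(G)` in which every vertex is included independently
with probability `p`, then with probability at least `0.9`, for every `A ⊆ V(G)` and
every `i : ℕ` with `|B(A,i)| ≥ |A| (log₂ n)² / p`, we have `|B(A,i) ∩ 𝒞| ≥ |A|`. -/
theorem random_set_hits_balls
    {V : Type} [Fintype V] (G : SimpleGraph V) (hG : G.Connected)
    (n : ℕ) (hn : Fintype.card V = n) (hn333 : 333 ≤ n)
    (p : ℝ) (hp0 : 0 < p) (hp1 : p ≤ 1) :
    ENNReal.ofReal 0.9 ≤
      (Measure.pi fun _ : V =>
          (PMF.bernoulli (Real.toNNReal p) (Real.toNNReal_le_one.mpr hp1)).toMeasure)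
        {f : V → Bool |
          ∀ (A : Set V) (i : ℕ),
            (A.ncard : ℝ) * (Real.logb 2 n) ^ 2 / p ≤ ((graphBall G A i).ncard : ℝ) →
            (A.ncard : ℝ) ≤ (((graphBall G A i) ∩ {v | f v = true}).ncard : ℝ)} := by
  classical
  subst hn
  set N := Fintype.card V with hN
  set L : ℝ := Real.logb 2 N with hLdef
  set μ : Measure (V → Bool) := Measure.pi fun _ : V =>
      (PMF.bernoulli (Real.toNNReal p) (Real.toNNReal_le_one.mpr hp1)).toMeasure with hμ
  set E : Set (V → Bool) := {f : V → Bool |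
      ∀ (A : Set V) (i : ℕ),
        (A.ncard : ℝ) * L ^ 2 / p ≤ ((graphBall G A i).ncard : ℝ) →
        (A.ncard : ℝ) ≤ (((graphBall G A i) ∩ {v | f v = true}).ncard : ℝ)} with hE
  haveI : IsProbabilityMeasure μ := by rw [hμ]; infer_instance
  -- index structures
  set ballF : Finset V → ℕ → Finset V :=
    fun A i => (Set.toFinite (graphBall G (↑A) i)).toFinset with hballF
  set M : Finset V × Finset V × ℕ → Set (V → Bool) :=
    fun x => {f : V → Bool | ∀ v ∈ ballF x.1 x.2.2 \ x.2.1, f v = false} with hM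
  set P : Finset (Finset V) := (Finset.univ : Finset V).powerset with hP
  set R : Finset ℕ := Finset.range (N + 1) with hR
  set I : Finset (Finset V × Finset V × ℕ) :=
    (P ×ˢ P ×ˢ R).filter (fun x => x.2.1.card + 1 = x.1.card ∧
      ((x.1.card : ℝ) * L ^ 2 / p ≤ ((ballF x.1 x.2.2).card : ℝ))) with hI
  -- Step A : complement covered by union
  have hsub : Eᶜ ⊆ ⋃ x ∈ I, M x := by
    intro f hf
    rw [Set.mem_compl_iff, hE, Set.mem_setOf_eq] at hf
    push_neg at hf
    obtain ⟨A, i, hcond, hlt⟩ := hf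
    have hAfin : A.Finite := Set.toFinite A
    set A' : Finset V := hAfin.toFinset with hA'
    have hAcard : A.ncard = A'.card := Set.ncard_eq_toFinset_card A hAfin
    have hAcoe : (↑A' : Set V) = A := hAfin.coe_toFinset
    have ha1 : 1 ≤ A'.card := by
      rcases Nat.eq_zero_or_pos A'.card with h0 | h
      · exfalso
        have : (A.ncard : ℝ) = 0 := by rw [hAcard, h0]; norm_num
        have hnn : (0:ℝ) ≤ (((graphBall G A i) ∩ {v | f v = true}).ncard : ℝ) :=
          Nat.cast_nonneg _
        rw [this] at hlt; linarith
      · exact h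
    set i' : ℕ := min i N with hi'
    have hball : graphBall G A i' = graphBall G A i := by
      rcases le_total i N with h | h
      · rw [hi', min_eq_left h]
      · rw [hi', min_eq_right h, ball_stab G hG A i h]
    have hBcard : (graphBall G A i).ncard = (ballF A' i').card := by
      rw [hballF]
      simp only [hAcoe, hball]
      exact Set.ncard_eq_toFinset_card _ _
    -- pick T
    set D : Finset V := (Set.toFinite ((graphBall G A i) ∩ {v | f v = true})).toFinset with hD
    have hDcard : D.card < A'.card := by
      have := hlt
      rw [hAcard, Set.ncard_eq_toFinset_card _ (Set.toFinite _)] at this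
      exact_mod_cast this
    obtain ⟨T, hDT, -, hTcard⟩ :=
      Finset.exists_subsuperset_card_eq (Finset.subset_univ D)
        (by omega : D.card ≤ A'.card - 1)
        (by
          have h := Finset.card_le_univ A'
          rw [Finset.card_univ]
          omega : A'.card - 1 ≤ (Finset.univ : Finset V).card)
    have hT1 : T.card + 1 = A'.card := by omega
    have hxI : ((A', T, i') : Finset V × Finset V × ℕ) ∈ I := by
      rw [hI, Finset.mem_filter]
      refine ⟨?_, hT1, ?_⟩
      · rw [Finset.mem_product]
        refine ⟨Finset.mem_powerset.mpr (Finset.subset_univ _), ?_⟩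
        rw [Finset.mem_product]
        exact ⟨Finset.mem_powerset.mpr (Finset.subset_univ _),
          Finset.mem_range.mpr (Nat.lt_succ_of_le (min_le_right i N))⟩
      · rw [← hBcard, ← hAcard]
        exact hcond
    have hfM : f ∈ M (A', T, i') := by
      rw [hM]
      intro v hv
      rw [Finset.mem_sdiff] at hv
      obtain ⟨hvB, hvT⟩ := hv
      have hvball : v ∈ graphBall G A i := by
        rw [← hball]
        have : v ∈ (Set.toFinite (graphBall G (↑A') i')).toFinset := hvB
        rw [Set.Finite.mem_toFinset] at this
        rwa [hAcoe] at this
      have hvD : v ∉ D := fun h => hvT (hDT h)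
      rw [hD, Set.Finite.mem_toFinset] at hvD
      by_contra hfv
      have : f v = true := by
        cases hfvv : f v
        · exact absurd hfvv hfv
        · rfl
      exact hvD ⟨hvball, this⟩
    exact Set.mem_biUnion hxI hfM
  -- Step B : per-index bound
  have hbound : ∀ x ∈ I, μ (M x) ≤
      ENNReal.ofReal (Real.exp ((x.1.card:ℝ) - (x.1.card:ℝ) * L^2)) := by
    rintro ⟨A, T, i⟩ hx
    rw [hI, Finset.mem_filter] at hx
    obtain ⟨-, hTA, hcond⟩ := hx
    have hMis : M (A, T, i) = {f : V → Bool | ∀ v ∈ ballF A i \ T, f v = false} := rfl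
    rw [hMis, hμ, miss_prob p hp0.le hp1]
    apply ENNReal.ofReal_le_ofReal
    set m : ℕ := (ballF A i \ T).card with hm
    set a : ℕ := A.card with haa
    set b : ℕ := (ballF A i).card with hb
    have hbm : (b:ℝ) ≤ (m:ℝ) + ((a:ℝ) - 1) := by
      have h1 : b ≤ m + T.card := Finset.card_le_card_sdiff_add_card
      have h2 : (T.card : ℝ) = (a:ℝ) - 1 := by
        have : (T.card : ℝ) + 1 = (a:ℝ) := by exact_mod_cast hTA
        linarith
      have := (Nat.cast_le (α := ℝ)).mpr h1
      push_cast at this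
      linarith
    have hpb : (a:ℝ) * L^2 ≤ p * (b:ℝ) := by
      rw [div_le_iff₀ hp0] at hcond
      linarith
    have ha1 : (1:ℝ) ≤ (a:ℝ) := by
      have : 1 ≤ a := by omega
      exact_mod_cast this
    calc (1 - p)^m ≤ (Real.exp (-p))^m := by
          apply pow_le_pow_left₀ (by linarith)
          nlinarith [Real.add_one_le_exp (-p)]
      _ = Real.exp ((m:ℝ) * (-p)) := (Real.exp_nat_mul _ m).symm
      _ ≤ Real.exp ((a:ℝ) - (a:ℝ) * L^2) := by
          apply Real.exp_le_exp.mpr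
          nlinarith [mul_le_mul_of_nonneg_left hbm hp0.le]
  -- Step C : sum bound
  have hunion : μ Eᶜ ≤ ∑ x ∈ I, ENNReal.ofReal
      (Real.exp ((x.1.card:ℝ) - (x.1.card:ℝ) * L^2)) :=
    le_trans (measure_mono hsub)
      (le_trans (measure_biUnion_finset_le _ _) (Finset.sum_le_sum hbound))
  have hsum : ∑ x ∈ I, ENNReal.ofReal
      (Real.exp ((x.1.card:ℝ) - (x.1.card:ℝ) * L^2)) ≤ ENNReal.ofReal 0.1 := by
    rw [← ENNReal.ofReal_sum_of_nonneg (fun x _ => Real.exp_nonneg _)]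
    apply ENNReal.ofReal_le_ofReal
    set e : ℕ → ℝ := fun k => Real.exp ((k:ℝ) - (k:ℝ) * L^2) with he
    have hepos : ∀ k, 0 ≤ e k := fun k => Real.exp_nonneg _
    set J : Finset (Finset V × Finset V × ℕ) :=
      (P ×ˢ P ×ˢ R).filter (fun x => x.2.1.card + 1 = x.1.card) with hJ
    have hIJ : I ⊆ J := by
      rw [hI, hJ]
      intro x hx
      rw [Finset.mem_filter] at hx ⊢
      exact ⟨hx.1, hx.2.1⟩
    calc ∑ x ∈ I, e x.1.card ≤ ∑ x ∈ J, e x.1.card :=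
          Finset.sum_le_sum_of_subset_of_nonneg hIJ (fun x _ _ => hepos _)
      _ = ∑ A ∈ P, ∑ T ∈ P, ∑ i ∈ R,
            (if T.card + 1 = A.card then e A.card else 0) := by
          rw [hJ, Finset.sum_filter, Finset.sum_product]
          refine Finset.sum_congr rfl fun A _ => ?_
          rw [Finset.sum_product]
      _ = ∑ A ∈ P, ∑ T ∈ P, (N + 1 : ℝ) * (if T.card + 1 = A.card then e A.card else 0) := by
          refine Finset.sum_congr rfl fun A _ => Finset.sum_congr rfl fun T _ => ?_
          rw [Finset.sum_const, hR, Finset.card_range, nsmul_eq_mul]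
          push_cast
          ring
      _ ≤ ∑ A ∈ P, (if A.card = 0 then (0:ℝ) else
            ((N:ℝ)+1) * (N:ℝ)^(A.card - 1) * e A.card) := by
          refine Finset.sum_le_sum fun A _ => ?_
          rcases Nat.eq_zero_or_pos A.card with h0 | hpos
          · rw [if_pos h0]
            apply le_of_eq
            rw [h0]
            apply Finset.sum_eq_zero
            intro T _
            rw [if_neg (by omega)]
            ring
          · rw [if_neg (by omega)]
            have hsplit : ∑ T ∈ P, (N + 1 : ℝ) * (if T.card + 1 = A.card then e A.card else 0)
                = (N + 1 : ℝ) * ((P.filter (fun T => T.card + 1 = A.card)).card : ℝ) * e A.card := by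
              rw [← Finset.mul_sum, ← Finset.sum_filter, Finset.sum_const, nsmul_eq_mul]
              ring
            rw [hsplit]
            have hcount : ((P.filter (fun T => T.card + 1 = A.card)).card : ℝ)
                ≤ (N:ℝ)^(A.card - 1) := by
              have hsub2 : P.filter (fun T => T.card + 1 = A.card)
                  ⊆ Finset.powersetCard (A.card - 1) Finset.univ := by
                intro T hT
                rw [Finset.mem_filter] at hT
                rw [Finset.mem_powersetCard]
                exact ⟨Finset.subset_univ _, by omega⟩
              have := Finset.card_le_card hsub2
              rw [Finset.card_powersetCard, Finset.card_univ, ← hN] at this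
              have h1 : ((P.filter (fun T => T.card + 1 = A.card)).card : ℝ)
                  ≤ (N.choose (A.card - 1) : ℝ) := by exact_mod_cast this
              have h2 := Nat.cast_le (α := ℝ) |>.mpr (Nat.choose_le_pow N (A.card - 1))
              push_cast at h2
              linarith
            calc (N + 1 : ℝ) * ((P.filter (fun T => T.card + 1 = A.card)).card : ℝ) * e A.card
                ≤ (N + 1 : ℝ) * (N:ℝ)^(A.card - 1) * e A.card := by
                  have h1 : (0:ℝ) ≤ N + 1 := by positivity
                  have := mul_le_mul_of_nonneg_left hcount h1
                  exact mul_le_mul_of_nonneg_right this (hepos _)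
              _ = ((N:ℝ)+1) * (N:ℝ)^(A.card - 1) * e A.card := by push_cast; ring
      _ = ∑ j ∈ Finset.range (N + 1), (N.choose j : ℕ) •
            (if j = 0 then (0:ℝ) else ((N:ℝ)+1) * (N:ℝ)^(j - 1) * e j) := by
          rw [hP]
          have := Finset.sum_powerset_apply_card
            (f := fun k => (if k = 0 then (0:ℝ) else ((N:ℝ)+1) * (N:ℝ)^(k - 1) * e k))
            (x := (Finset.univ : Finset V))
          rw [Finset.card_univ, ← hN] at this
          exact this
      _ ≤ ∑ j ∈ Finset.range (N + 1), Real.exp (-(39:ℝ)) * (1/2:ℝ)^j := by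
          refine Finset.sum_le_sum fun j _ => ?_
          rcases Nat.eq_zero_or_pos j with h0 | hpos
          · subst h0
            rw [if_pos rfl, smul_zero]
            positivity
          · rw [if_neg (by omega), nsmul_eq_mul]
            calc (N.choose j : ℝ) * (((N:ℝ)+1) * (N:ℝ)^(j - 1) * e j)
                ≤ (N:ℝ)^j * (((N:ℝ)+1) * (N:ℝ)^(j - 1) * e j) := by
                  apply mul_le_mul_of_nonneg_right
                  · have hc := Nat.cast_le (α := ℝ) |>.mpr (Nat.choose_le_pow N j)
                    push_cast at hc
                    exact hc
                  · positivity
              _ ≤ Real.exp (-(39:ℝ)) * (1/2:ℝ)^j := by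
                  have hthis := key_numeric N j hn333 hpos
                  simp only [he, hLdef]
                  exact hthis
      _ = Real.exp (-(39:ℝ)) * ∑ j ∈ Finset.range (N + 1), (1/2:ℝ)^j := by
          rw [Finset.mul_sum]
      _ ≤ Real.exp (-(39:ℝ)) * 2 := by
          have hg := sum_geometric_two_le (N + 1)
          have h2 : (0:ℝ) ≤ Real.exp (-(39:ℝ)) := Real.exp_nonneg _
          exact mul_le_mul_of_nonneg_left hg h2
      _ ≤ 0.1 := by
          have h40 : (40:ℝ) ≤ Real.exp 39 := by
            have := Real.add_one_le_exp (39:ℝ)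
            linarith
          have hinv : (Real.exp 39)⁻¹ ≤ (40:ℝ)⁻¹ := by
            apply inv_anti₀ (by norm_num) h40
          rw [Real.exp_neg]
          norm_num at hinv ⊢
          linarith
  -- conclude
  have hEcomp : μ Eᶜ ≤ ENNReal.ofReal 0.1 := le_trans hunion hsum
  have hadd : μ E + μ Eᶜ = 1 := by
    rw [measure_add_measure_compl (meas_all E)]
    exact measure_univ
  have h1 : ENNReal.ofReal 0.9 + ENNReal.ofReal 0.1 = 1 := by
    rw [← ENNReal.ofReal_add (by norm_num) (by norm_num)]
    norm_num
  have hle : ENNReal.ofReal 0.9 + ENNReal.ofReal 0.1 ≤ μ E + ENNReal.ofReal 0.1 := by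
    rw [h1, ← hadd]
    exact add_le_add_right hEcomp _
  have := (ENNReal.add_le_add_iff_right (by simp : (ENNReal.ofReal 0.1) ≠ ⊤)).mp hle
  exact this
end

section
/- Let G be a connected simple graph on n ≥ 333 vertices, let ℐ ⊆ V(G) be a fixed set of vertices, and let 0 < p ≤ 1. Then there exists a set ℛ ⊆ ℐ with |ℛ| ≤ 2|ℐ|p such that for every natural number i and every subset A ⊆ V(G) with |B(A,i) ∩ ℐ| ≥ |A|·(log n)²/p, we have |B(A,i) ∩ ℛ| ≥ |A|. -/
open Finset

private lemma prod_ite_card {V : Type} [DecidableEq V] (T S : Finset V) (hS : S ⊆ T) (a b : ℝ) :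
    ∏ i ∈ T, (if i ∈ S then a else b) = a ^ S.card * b ^ (T.card - S.card) := by
  rw [← Finset.prod_filter_mul_prod_filter_not T (· ∈ S)]
  have h1 : T.filter (· ∈ S) = S := by
    ext x; simp only [mem_filter]; exact ⟨fun h => h.2, fun h => ⟨hS h, h⟩⟩
  have h2 : (T.filter (fun x => ¬ x ∈ S)).card = T.card - S.card := by
    have h3 := Finset.card_filter_add_card_filter_not (s := T) (p := (· ∈ S))
    rw [h1] at h3; omega
  have e1 : (∏ x ∈ T.filter (· ∈ S), (if x ∈ S then a else b)) = a ^ S.card := by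
    refine (Finset.prod_congr h1 (fun x hx => by rw [if_pos hx])).trans ?_
    rw [Finset.prod_const]
  have e2 : (∏ x ∈ T.filter (fun x => ¬ x ∈ S), (if x ∈ S then a else b)) = b ^ (T.card - S.card) := by
    refine (Finset.prod_congr rfl (fun x hx => by rw [if_neg (Finset.mem_filter.mp hx).2])).trans ?_
    rw [Finset.prod_const, h2]
  rw [e1, e2]

private lemma bern_sum {V : Type} [DecidableEq V] (T S : Finset V) (hS : S ⊆ T) (p q r : ℝ) :
    ∑ R ∈ T.powerset, p ^ R.card * q ^ (T.card - R.card) * r ^ ((R ∩ S).card)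
      = (p * r + q) ^ S.card * (p + q) ^ (T.card - S.card) := by
  have h := Finset.prod_add (fun i => if i ∈ S then p * r else p) (fun _ => q) T
  have hL : ∏ i ∈ T, ((if i ∈ S then p * r else p) + q)
      = (p * r + q) ^ S.card * (p + q) ^ (T.card - S.card) := by
    refine (Finset.prod_congr rfl (fun x _ => ?_)).trans (prod_ite_card T S hS (p*r+q) (p+q))
    by_cases hx : x ∈ S <;> simp [hx]
  rw [hL] at h
  rw [h]
  apply Finset.sum_congr rfl
  intro t ht
  rw [Finset.mem_powerset] at ht
  have hle : (t ∩ S).card ≤ t.card := Finset.card_le_card Finset.inter_subset_left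
  have hA : (∏ i ∈ t, if i ∈ S then p * r else p)
      = (p*r) ^ (t ∩ S).card * p ^ (t.card - (t ∩ S).card) := by
    have := prod_ite_card t (t ∩ S) Finset.inter_subset_left (p*r) p
    rw [← this]
    refine Finset.prod_congr rfl (fun x hx => ?_)
    by_cases hxS : x ∈ S
    · rw [if_pos hxS, if_pos (Finset.mem_inter.mpr ⟨hx, hxS⟩)]
    · rw [if_neg hxS, if_neg (fun hc => hxS (Finset.mem_inter.mp hc).2)]
  have hB : (∏ _i ∈ T \ t, q) = q ^ (T.card - t.card) := by
    rw [Finset.prod_const, Finset.card_sdiff_of_subset ht]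
  rw [hA, hB, mul_pow]
  have hp : p ^ (t ∩ S).card * p ^ (t.card - (t ∩ S).card) = p ^ t.card := by
    rw [← pow_add, Nat.add_sub_cancel' hle]
  symm
  calc p ^ (t ∩ S).card * r ^ (t ∩ S).card * p ^ (t.card - (t ∩ S).card) * q ^ (T.card - t.card)
      = (p ^ (t ∩ S).card * p ^ (t.card - (t ∩ S).card)) * q ^ (T.card - t.card) * r ^ (t ∩ S).card := by ring
    _ = p ^ t.card * q ^ (T.card - t.card) * r ^ (t ∩ S).card := by rw [hp]

private lemma pow_card_sum {V : Type} [DecidableEq V] (T : Finset V) (x : ℝ) :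
    ∑ A ∈ T.powerset, x ^ A.card = (x + 1) ^ T.card := by
  have h := bern_sum T ∅ (Finset.empty_subset T) x 1 1
  simpa using h

private lemma num_logb (n : ℕ) (hn : 333 ≤ n) : 8 ≤ Real.logb 2 n := by
  have hy : (0:ℝ) < n := by
    have : (333:ℝ) ≤ n := by exact_mod_cast hn
    linarith
  rw [Real.le_logb_iff_rpow_le one_lt_two hy]
  have h8 : (2:ℝ) ^ (8:ℝ) = 256 := by
    rw [show (8:ℝ) = ((8:ℕ):ℝ) by norm_num, Real.rpow_natCast]; norm_num
  rw [h8]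
  have : (333:ℝ) ≤ n := by exact_mod_cast hn
  linarith

private lemma num_x0 (n : ℕ) (hn333 : 333 ≤ n) (L : ℝ) (hL : L = Real.logb 2 n) :
    8 * (n:ℝ)^2 * (L^2 * Real.exp (1 - L^2)) ≤ 1 := by
  have hL8 : 8 ≤ L := hL ▸ num_logb n hn333
  have hn0 : (0:ℝ) < n := by
    have : (333:ℝ) ≤ n := by exact_mod_cast hn333
    linarith
  have h2' : (0:ℝ) < Real.log 2 := Real.log_pos one_lt_two
  have hlogn : Real.log n = L * Real.log 2 := by
    rw [hL, Real.logb]; field_simp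
  have key : 8*(n:ℝ)^2*L^2 ≤ Real.exp (L^2 - 1) := by
    have hpos : (0:ℝ) < 8*(n:ℝ)^2*L^2 := by positivity
    rw [← Real.exp_log hpos]
    apply Real.exp_le_exp.mpr
    have hsplit : Real.log (8*(n:ℝ)^2*L^2) = Real.log 8 + 2*Real.log n + 2*Real.log L := by
      rw [Real.log_mul (by positivity) (by positivity),
          Real.log_mul (by norm_num) (by positivity), Real.log_pow, Real.log_pow]
      push_cast; ring
    rw [hsplit, hlogn]
    have h2 : Real.log 2 < 0.6931471808 := Real.log_two_lt_d9
    have h8 : Real.log 8 = 3 * Real.log 2 := by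
      rw [show (8:ℝ) = 2^(3:ℕ) by norm_num, Real.log_pow]; push_cast; ring
    have hlogL : Real.log L ≤ L - 1 := Real.log_le_sub_one_of_pos (by linarith)
    have hcL : L * Real.log 2 ≤ L * 0.6931471808 := by nlinarith
    have hLL : 8*L ≤ L^2 := by nlinarith
    nlinarith
  calc 8*(n:ℝ)^2*(L^2*Real.exp (1-L^2)) = (8*(n:ℝ)^2*L^2) * Real.exp (1-L^2) := by ring
    _ ≤ Real.exp (L^2-1) * Real.exp (1-L^2) :=
        mul_le_mul_of_nonneg_right key (Real.exp_nonneg _)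
    _ = 1 := by rw [← Real.exp_add, show L^2-1+(1-L^2) = 0 by ring, Real.exp_zero]

private lemma num_sum_bound (n : ℕ) (hn : 1 ≤ n) (x : ℝ) (hx0 : 0 ≤ x) (hx : 8*(n:ℝ)^2*x ≤ 1) :
    ((n:ℝ)+1) * ((x+1)^n - 1) ≤ 1/2 := by
  have hn1 : (1:ℝ) ≤ n := by exact_mod_cast hn
  have hz : (n:ℝ)*x ≤ 1/8 := by nlinarith
  have hz0 : 0 ≤ (n:ℝ)*x := by positivity
  have h1 : (x+1)^n ≤ Real.exp ((n:ℝ)*x) := by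
    calc (x+1)^n ≤ (Real.exp x)^n := by
          apply pow_le_pow_left₀ (by linarith) (by linarith [Real.add_one_le_exp x]) n
      _ = Real.exp ((n:ℝ)*x) := (Real.exp_nat_mul x n).symm
  have hpos : 0 < 1 - (n:ℝ)*x := by linarith
  have h2 : Real.exp ((n:ℝ)*x) ≤ 1/(1 - (n:ℝ)*x) := by
    have h3 := Real.add_one_le_exp (-((n:ℝ)*x))
    have h4 : Real.exp ((n:ℝ)*x) * (1 - (n:ℝ)*x) ≤ 1 := by
      have h5 : Real.exp ((n:ℝ)*x) * (1 - (n:ℝ)*x) ≤ Real.exp ((n:ℝ)*x) * Real.exp (-((n:ℝ)*x)) := by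
        apply mul_le_mul_of_nonneg_left (by linarith) (Real.exp_nonneg _)
      rw [← Real.exp_add, show (n:ℝ)*x + -((n:ℝ)*x) = 0 by ring, Real.exp_zero] at h5
      exact h5
    rw [le_div_iff₀ hpos]
    exact h4
  have h6 : 1/(1-(n:ℝ)*x) ≤ 1 + 2*((n:ℝ)*x) := by
    rw [div_le_iff₀ hpos]
    nlinarith
  have h4 : (x+1)^n - 1 ≤ 2*((n:ℝ)*x) := by
    have := h1.trans (h2.trans h6); linarith
  calc ((n:ℝ)+1)*((x+1)^n - 1) ≤ ((n:ℝ)+1)*(2*((n:ℝ)*x)) := by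
        apply mul_le_mul_of_nonneg_left h4 (by linarith)
    _ ≤ 1/2 := by nlinarith [sq_nonneg ((n:ℝ) - 1)]

private lemma num_size (pm L : ℝ) (hL : 8 ≤ L) (hpm : L^2 ≤ pm) :
    Real.exp (pm - 2*pm*Real.log 2) ≤ 1/4 := by
  have h2 : (0.6931471803:ℝ) < Real.log 2 := Real.log_two_gt_d9
  have h64 : (64:ℝ) ≤ pm := by nlinarith
  have hle : pm - 2*pm*Real.log 2 ≤ -21 := by nlinarith
  calc Real.exp (pm - 2*pm*Real.log 2) ≤ Real.exp (-21) := Real.exp_le_exp.mpr hle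
    _ ≤ 1/4 := by
      rw [Real.exp_neg]
      have h4 : (4:ℝ) ≤ Real.exp 21 := by
        have := Real.add_one_le_exp (21:ℝ); linarith
      have := inv_anti₀ (by norm_num : (0:ℝ) < 4) h4
      linarith

private lemma num_event (L p : ℝ) (t k : ℕ) (hL : 8 ≤ L) (hp0 : 0 < p) (hp1 : p ≤ 1)
    (ht : (k:ℝ) * L^2 / p ≤ (t:ℝ)) :
    (L^2)^(k-1) * (p * (1/L^2) + (1-p))^t ≤ (L^2 * Real.exp (1 - L^2))^k := by
  have hL0 : 0 < L := by linarith
  have hL2pos : (0:ℝ) < L^2 := by positivity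
  have hL2 : 1 ≤ L^2 := by nlinarith
  have hinv : (0:ℝ) ≤ 1/L^2 := by positivity
  have hinv1 : (1:ℝ)/L^2 ≤ 1 := by rw [div_le_one hL2pos]; linarith
  have hx : 0 ≤ 1 - p*(1 - 1/L^2) := by nlinarith
  have hkt : (k:ℝ)*L^2 ≤ p*t := by
    rw [div_le_iff₀ hp0] at ht; linarith
  have hbase : p*(1/L^2) + (1-p) = 1 - p*(1-1/L^2) := by ring
  have step1 : (p*(1/L^2) + (1-p))^t ≤ Real.exp (-(p*(1-1/L^2)))^t := by
    rw [hbase]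
    apply pow_le_pow_left₀ hx ?_ t
    have h := Real.add_one_le_exp (-(p*(1-1/L^2)))
    linarith
  have step2 : Real.exp (-(p*(1-1/L^2)))^t = Real.exp (-(p*(1-1/L^2)) * t) := by
    rw [← Real.exp_nat_mul]; congr 1; ring
  have step3 : -(p*(1-1/L^2)) * t ≤ (k:ℝ)*(1-L^2) := by
    have hmul : (k:ℝ)*L^2 * (1 - 1/L^2) ≤ p*(t:ℝ)*(1-1/L^2) := by
      apply mul_le_mul_of_nonneg_right hkt (by linarith)
    have hid : (k:ℝ)*L^2*(1-1/L^2) = (k:ℝ)*(L^2-1) := by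
      field_simp
    rw [hid] at hmul
    nlinarith
  have step4 : (L^2)^(k-1) ≤ (L^2)^k := by
    apply pow_le_pow_right₀ (by linarith) (Nat.sub_le k 1)
  have hmid : (p * (1/L^2) + (1-p))^t ≤ Real.exp ((k:ℝ)*(1-L^2)) :=
    (step1.trans_eq step2).trans (Real.exp_le_exp.mpr step3)
  calc (L^2)^(k-1) * (p * (1/L^2) + (1-p))^t
      ≤ (L^2)^k * Real.exp ((k:ℝ)*(1-L^2)) := by
        apply mul_le_mul step4 hmid (by rw [hbase]; exact pow_nonneg hx t) (by positivity)
    _ = (L^2 * Real.exp (1-L^2))^k := by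
        rw [mul_pow, ← Real.exp_nat_mul]
open scoped Classical in
private noncomputable def fball {V : Type} [Fintype V] (G : SimpleGraph V)
    (A : Finset V) (i : ℕ) : Finset V :=
  Finset.univ.filter (fun v => ∃ a ∈ A, G.dist a v ≤ i)

private lemma exists_good {V : Type} [Fintype V] [DecidableEq V] (G : SimpleGraph V)
    (n : ℕ) (hn : Fintype.card V = n) (hn1 : 1 ≤ n) (IF : Finset V) (p L : ℝ)
    (hp0 : 0 < p) (hp1 : p ≤ 1) (hL : 8 ≤ L)
    (hnum1 : 8*(n:ℝ)^2*(L^2*Real.exp (1-L^2)) ≤ 1)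
    (hsize : Real.exp (p*(IF.card:ℝ) - 2*(p*(IF.card:ℝ))*Real.log 2) ≤ 1/4) :
    ∃ Rf : Finset V, Rf ⊆ IF ∧ ((Rf.card:ℝ) ≤ 2*p*(IF.card:ℝ)) ∧
      ∀ (A : Finset V) (i : ℕ), i ≤ n →
        ((A.card:ℝ) * L^2 / p ≤ (((fball G A i) ∩ IF).card:ℝ)) →
        ((A.card:ℝ) ≤ (((fball G A i) ∩ Rf).card:ℝ)) := by
  classical
  by_contra hno
  push_neg at hno
  set m : ℕ := IF.card with hm
  set q : ℝ := 1 - p with hqdef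
  have hq0 : 0 ≤ q := by rw [hqdef]; linarith
  have hpq : p + q = 1 := by rw [hqdef]; ring
  set x₀ : ℝ := L^2 * Real.exp (1 - L^2) with hx₀def
  have hx₀0 : 0 ≤ x₀ := by rw [hx₀def]; positivity
  set w : Finset V → ℝ := fun R => p ^ R.card * q ^ (m - R.card) with hwdef
  have hw0 : ∀ R : Finset V, 0 ≤ w R := fun R =>
    mul_nonneg (pow_nonneg hp0.le _) (pow_nonneg hq0 _)
  have hsum1 : ∑ R ∈ IF.powerset, w R = 1 := by
    have h := bern_sum IF ∅ (Finset.empty_subset IF) p q 1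
    simp only [Finset.inter_empty, Finset.card_empty, pow_zero, mul_one, one_pow,
      Nat.sub_zero, hpq, one_mul] at h
    rw [hwdef]
    simpa using h
  set ind : Finset V × ℕ → Finset V → ℝ := fun Ai R =>
      if ((Ai.1.card:ℝ) * L^2 / p ≤ (((fball G Ai.1 Ai.2) ∩ IF).card:ℝ)) ∧
         ((((fball G Ai.1 Ai.2) ∩ R).card:ℝ) < (Ai.1.card:ℝ)) then 1 else 0 with hinddef
  set inds : Finset V → ℝ := fun R => if (2*p*(m:ℝ) < (R.card:ℝ)) then 1 else 0 with hindsdef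
  set idx : Finset (Finset V × ℕ) :=
    (Finset.univ : Finset V).powerset ×ˢ Finset.range (n+1) with hidxdef
  have hind0 : ∀ Ai R, 0 ≤ ind Ai R := by
    intro Ai R; rw [hinddef]; dsimp only; split <;> norm_num
  have hinds0 : ∀ R, 0 ≤ inds R := by
    intro R; rw [hindsdef]; dsimp only; split <;> norm_num
  -- step 1 : every R is bad
  have step1 : ∀ R ∈ IF.powerset, (1:ℝ) ≤ inds R + ∑ Ai ∈ idx, ind Ai R := by
    intro R hR
    rcases le_or_gt (R.card:ℝ) (2*p*(m:ℝ)) with hs | hs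
    · obtain ⟨A, i, hin, hmass, hlt⟩ := hno R (Finset.mem_powerset.mp hR) hs
      have hmem : (A, i) ∈ idx := by
        rw [hidxdef]
        exact Finset.mem_product.mpr ⟨Finset.mem_powerset.mpr (Finset.subset_univ A),
          Finset.mem_range.mpr (by omega)⟩
      have h1 : ind (A,i) R = 1 := by
        rw [hinddef]; exact if_pos ⟨hmass, hlt⟩
      have h2 : ind (A,i) R ≤ ∑ Ai ∈ idx, ind Ai R :=
        Finset.single_le_sum (fun Ai _ => hind0 Ai R) hmem
      have := hinds0 R
      linarith [h1 ▸ h2]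
    · have h1 : inds R = 1 := by rw [hindsdef]; exact if_pos hs
      have h2 : 0 ≤ ∑ Ai ∈ idx, ind Ai R :=
        Finset.sum_nonneg (fun Ai _ => hind0 Ai R)
      linarith
  -- step 2 : expand
  have step2 : (1:ℝ) ≤ (∑ R ∈ IF.powerset, w R * inds R)
      + ∑ Ai ∈ idx, ∑ R ∈ IF.powerset, w R * ind Ai R := by
    have e1 : (1:ℝ) ≤ ∑ R ∈ IF.powerset, w R * (inds R + ∑ Ai ∈ idx, ind Ai R) := by
      rw [← hsum1]
      apply Finset.sum_le_sum
      intro R hR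
      exact le_mul_of_one_le_right (hw0 R) (step1 R hR)
    have e2 : ∑ R ∈ IF.powerset, w R * (inds R + ∑ Ai ∈ idx, ind Ai R)
        = (∑ R ∈ IF.powerset, w R * inds R)
          + ∑ R ∈ IF.powerset, ∑ Ai ∈ idx, w R * ind Ai R := by
      rw [← Finset.sum_add_distrib]
      apply Finset.sum_congr rfl
      intro R _
      rw [mul_add, Finset.mul_sum]
    rw [e2, Finset.sum_comm] at e1
    exact e1
  -- step 4 : size term
  have step4 : ∑ R ∈ IF.powerset, w R * inds R ≤ 1/4 := by
    have hpt : ∀ R ∈ IF.powerset, w R * inds R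
        ≤ (w R * (2:ℝ)^R.card) * Real.exp (-(2*(p*(m:ℝ))*Real.log 2)) := by
      intro R hR
      have : inds R ≤ (2:ℝ)^R.card * Real.exp (-(2*(p*(m:ℝ))*Real.log 2)) := by
        rw [hindsdef]; dsimp only; split_ifs with h
        · have e1 : (2:ℝ)^R.card = Real.exp ((R.card:ℝ) * Real.log 2) := by
            rw [Real.exp_nat_mul, Real.exp_log two_pos]
          rw [e1, ← Real.exp_add]
          have hlog2 : (0:ℝ) < Real.log 2 := Real.log_pos one_lt_two
          have : (0:ℝ) ≤ (R.card:ℝ) * Real.log 2 + -(2*(p*(m:ℝ))*Real.log 2) := by nlinarith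
          calc (1:ℝ) = Real.exp 0 := Real.exp_zero.symm
            _ ≤ _ := Real.exp_le_exp.mpr this
        · positivity
      calc w R * inds R ≤ w R * ((2:ℝ)^R.card * Real.exp (-(2*(p*(m:ℝ))*Real.log 2))) :=
            mul_le_mul_of_nonneg_left this (hw0 R)
        _ = (w R * (2:ℝ)^R.card) * Real.exp (-(2*(p*(m:ℝ))*Real.log 2)) := by ring
    have e2 : ∑ R ∈ IF.powerset, w R * (2:ℝ)^R.card = (1+p)^m := by
      have h := bern_sum IF IF (subset_refl IF) p q 2
      rw [Nat.sub_self, pow_zero, mul_one] at h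
      have e3 : ∑ R ∈ IF.powerset, w R * (2:ℝ)^R.card
          = ∑ R ∈ IF.powerset, p ^ R.card * q ^ (m - R.card) * 2 ^ ((R ∩ IF).card) := by
        apply Finset.sum_congr rfl
        intro R hR
        rw [Finset.inter_eq_left.mpr (Finset.mem_powerset.mp hR), hwdef]
      rw [e3, h, hqdef]; ring_nf; rfl
    calc ∑ R ∈ IF.powerset, w R * inds R
        ≤ ∑ R ∈ IF.powerset, (w R * (2:ℝ)^R.card) * Real.exp (-(2*(p*(m:ℝ))*Real.log 2)) :=
          Finset.sum_le_sum hpt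
      _ = (∑ R ∈ IF.powerset, w R * (2:ℝ)^R.card) * Real.exp (-(2*(p*(m:ℝ))*Real.log 2)) := by
          rw [← Finset.sum_mul]
      _ = (1+p)^m * Real.exp (-(2*(p*(m:ℝ))*Real.log 2)) := by rw [e2]
      _ ≤ Real.exp (p*(m:ℝ)) * Real.exp (-(2*(p*(m:ℝ))*Real.log 2)) := by
          apply mul_le_mul_of_nonneg_right ?_ (Real.exp_nonneg _)
          calc (1+p)^m ≤ (Real.exp p)^m := by
                apply pow_le_pow_left₀ (by linarith) (by linarith [Real.add_one_le_exp p]) m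
            _ = Real.exp (p*(m:ℝ)) := by rw [mul_comm p ((m:ℝ)), ← Real.exp_nat_mul]
      _ = Real.exp (p*(m:ℝ) - 2*(p*(m:ℝ))*Real.log 2) := by
          rw [← Real.exp_add]; ring_nf
      _ ≤ 1/4 := hsize
  -- step 5 : per-event bound
  have step5 : ∀ Ai ∈ idx, ∑ R ∈ IF.powerset, w R * ind Ai R
      ≤ (if Ai.1 = ∅ then 0 else x₀ ^ Ai.1.card) := by
    rintro ⟨A, i⟩ _
    by_cases hA : A = ∅
    · rw [if_pos hA]
      apply le_of_eq
      apply Finset.sum_eq_zero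
      intro R _
      have : ind (A, i) R = 0 := by
        rw [hinddef]; dsimp only
        apply if_neg
        rintro ⟨-, hlt⟩
        rw [hA] at hlt
        simp only [Finset.card_empty, Nat.cast_zero] at hlt
        exact absurd hlt (not_lt.mpr (Nat.cast_nonneg _))
      rw [this, mul_zero]
    · rw [if_neg hA]
      dsimp only
      by_cases hmass : ((A.card:ℝ) * L^2 / p ≤ (((fball G A i) ∩ IF).card:ℝ))
      · set SS : Finset V := (fball G A i) ∩ IF with hSS
        have hSsub : SS ⊆ IF := Finset.inter_subset_right
        set k : ℕ := A.card with hk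
        have hk1 : 1 ≤ k := Finset.card_pos.mpr (Finset.nonempty_of_ne_empty hA)
        have hL2pos : (0:ℝ) < L^2 := by positivity
        have hpt : ∀ R ∈ IF.powerset, w R * ind (A,i) R
            ≤ (L^2)^(k-1) * (w R * ((1:ℝ)/L^2)^((R ∩ SS).card)) := by
          intro R hR
          have hibd : ind (A,i) R ≤ (L^2)^(k-1) * ((1:ℝ)/L^2)^((R ∩ SS).card) := by
            rw [hinddef]; dsimp only; split_ifs with h
            · obtain ⟨-, hlt⟩ := h
              have hltn : ((fball G A i) ∩ R).card < k := by exact_mod_cast hlt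
              have hRI : R ∩ SS = (fball G A i) ∩ R := by
                rw [hSS]
                ext x
                simp only [Finset.mem_inter]
                constructor
                · rintro ⟨hxR, hxf, -⟩; exact ⟨hxf, hxR⟩
                · rintro ⟨hxf, hxR⟩
                  exact ⟨hxR, hxf, Finset.mem_powerset.mp hR hxR⟩
              have hcard : (R ∩ SS).card ≤ k - 1 := by rw [hRI]; omega
              have hinv1 : ((1:ℝ)/L^2) ≤ 1 := by
                rw [div_le_one hL2pos]; nlinarith
              have h1 : ((1:ℝ)/L^2)^(k-1) ≤ ((1:ℝ)/L^2)^((R ∩ SS).card) :=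
                pow_le_pow_of_le_one (by positivity) hinv1 hcard
              calc (1:ℝ) = (L^2)^(k-1) * ((1:ℝ)/L^2)^(k-1) := by
                    rw [← mul_pow, mul_one_div, div_self (ne_of_gt hL2pos), one_pow]
                _ ≤ _ := mul_le_mul_of_nonneg_left h1 (by positivity)
            · positivity
          calc w R * ind (A,i) R ≤ w R * ((L^2)^(k-1) * ((1:ℝ)/L^2)^((R ∩ SS).card)) :=
                mul_le_mul_of_nonneg_left hibd (hw0 R)
            _ = (L^2)^(k-1) * (w R * ((1:ℝ)/L^2)^((R ∩ SS).card)) := by ring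
        have e5 : ∑ R ∈ IF.powerset, w R * ((1:ℝ)/L^2)^((R ∩ SS).card)
            = (p * (1/L^2) + q)^SS.card * (p+q)^(m - SS.card) := by
          rw [← bern_sum IF SS hSsub p q ((1:ℝ)/L^2)]
        calc ∑ R ∈ IF.powerset, w R * ind (A,i) R
            ≤ ∑ R ∈ IF.powerset, (L^2)^(k-1) * (w R * ((1:ℝ)/L^2)^((R ∩ SS).card)) :=
              Finset.sum_le_sum hpt
          _ = (L^2)^(k-1) * ∑ R ∈ IF.powerset, w R * ((1:ℝ)/L^2)^((R ∩ SS).card) := by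
              rw [← Finset.mul_sum]
          _ = (L^2)^(k-1) * ((p * (1/L^2) + q)^SS.card * (p+q)^(m - SS.card)) := by rw [e5]
          _ = (L^2)^(k-1) * (p * (1/L^2) + (1-p))^SS.card := by
              rw [hpq, one_pow, mul_one, hqdef]
          _ ≤ (L^2 * Real.exp (1 - L^2))^k := num_event L p SS.card k hL hp0 hp1 hmass
          _ = x₀ ^ k := by rw [hx₀def]
      · apply le_trans (le_of_eq ?_) (by positivity : (0:ℝ) ≤ x₀ ^ A.card)
        apply Finset.sum_eq_zero
        intro R _
        have : ind (A, i) R = 0 := by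
          rw [hinddef]; dsimp only
          apply if_neg
          rintro ⟨hm1, -⟩
          exact hmass hm1
        rw [this, mul_zero]
  -- step 6 : sum the per-event bounds
  have step6 : ∑ Ai ∈ idx, (if Ai.1 = ∅ then (0:ℝ) else x₀ ^ Ai.1.card)
      = ((n:ℝ)+1) * ((x₀+1)^n - 1) := by
    rw [hidxdef, Finset.sum_product]
    have e1 : ∀ A ∈ (Finset.univ : Finset V).powerset,
        ∑ _i ∈ Finset.range (n+1), (if A = ∅ then (0:ℝ) else x₀ ^ A.card)
          = ((n:ℝ)+1) * (if A = ∅ then (0:ℝ) else x₀ ^ A.card) := by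
      intro A _
      rw [Finset.sum_const, Finset.card_range, nsmul_eq_mul]
      push_cast; ring
    rw [Finset.sum_congr rfl e1, ← Finset.mul_sum]
    congr 1
    have hsplit : ∀ A ∈ (Finset.univ : Finset V).powerset,
        (if A = ∅ then (0:ℝ) else x₀ ^ A.card)
          = x₀ ^ A.card - (if A = ∅ then 1 else 0) := by
      intro A _
      split_ifs with h
      · rw [h]; simp
      · ring
    rw [Finset.sum_congr rfl hsplit, Finset.sum_sub_distrib, pow_card_sum,
        Finset.card_univ, hn]
    have hone : ∑ A ∈ (Finset.univ : Finset V).powerset, (if A = ∅ then (1:ℝ) else 0) = 1 := by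
      rw [Finset.sum_ite_eq' (Finset.univ : Finset V).powerset (∅ : Finset V) (fun _ => (1:ℝ))]
      rw [if_pos (Finset.mem_powerset.mpr (Finset.empty_subset _))]
    rw [hone]
  have step7 : ((n:ℝ)+1) * ((x₀+1)^n - 1) ≤ 1/2 := num_sum_bound n hn1 x₀ hx₀0 hnum1
  have step8 : ∑ Ai ∈ idx, ∑ R ∈ IF.powerset, w R * ind Ai R ≤ 1/2 := by
    calc ∑ Ai ∈ idx, ∑ R ∈ IF.powerset, w R * ind Ai R
        ≤ ∑ Ai ∈ idx, (if Ai.1 = ∅ then (0:ℝ) else x₀ ^ Ai.1.card) := Finset.sum_le_sum step5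
      _ = ((n:ℝ)+1) * ((x₀+1)^n - 1) := step6
      _ ≤ 1/2 := step7
  linarith

/-- Corollary 2.3: Let `G` be a connected graph on `n ≥ 333` vertices, `ℐ ⊆ V(G)` a
fixed set of vertices, and `0 < p ≤ 1`. There is a set `ℛ ⊆ ℐ` with `|ℛ| ≤ 2|ℐ|p`
such that for every `i : ℕ` and every `A ⊆ V(G)` with
`|B(A,i) ∩ ℐ| ≥ |A| (log₂ n)² / p`, we have `|B(A,i) ∩ ℛ| ≥ |A|`. -/
theorem exists_subset_hitting_balls_inside
    {V : Type} [Fintype V] (G : SimpleGraph V) (hG : G.Connected)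
    (n : ℕ) (hn : Fintype.card V = n) (hn333 : 333 ≤ n)
    (I : Set V) (p : ℝ) (hp0 : 0 < p) (hp1 : p ≤ 1) :
    ∃ R : Set V, R ⊆ I ∧ (R.ncard : ℝ) ≤ 2 * I.ncard * p ∧
      ∀ (i : ℕ) (A : Set V),
        (A.ncard : ℝ) * (Real.logb 2 n) ^ 2 / p ≤ ((graphBall G A i ∩ I).ncard : ℝ) →
        (A.ncard : ℝ) ≤ ((graphBall G A i ∩ R).ncard : ℝ) := by
  classical
  have hI : I.Finite := Set.toFinite I
  have hn1 : 1 ≤ n := by omega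
  set L : ℝ := Real.logb 2 n with hLdef
  have hL8 : 8 ≤ L := num_logb n hn333
  set IF : Finset V := hI.toFinset with hIFdef
  have hIFcoe : (IF : Set V) = I := hI.coe_toFinset
  have hmI : (I.ncard : ℝ) = (IF.card : ℝ) := by
    exact_mod_cast Set.ncard_eq_toFinset_card I hI
  have hdist : ∀ a v : V, G.dist a v ≤ n := by
    intro a v
    obtain ⟨wlk⟩ := hG.preconnected a v
    have h1 : G.dist a v ≤ wlk.bypass.length := SimpleGraph.dist_le _
    have h2 : wlk.bypass.length < Fintype.card V :=
      SimpleGraph.Walk.IsPath.length_lt (SimpleGraph.Walk.bypass_isPath wlk)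
    omega
  have hfb : ∀ (A : Set V) (hA : A.Finite) (jj : ℕ),
      ((fball G hA.toFinset jj : Finset V) : Set V) = graphBall G A jj := by
    intro A hA jj
    ext v
    constructor
    · intro hv
      have hmem := Finset.mem_coe.mp hv
      simp only [fball, Finset.mem_filter, Finset.mem_univ, true_and] at hmem
      obtain ⟨a, ha, hd⟩ := hmem
      exact ⟨a, hA.mem_toFinset.mp ha, hd⟩
    · rintro ⟨a, ha, hd⟩
      apply Finset.mem_coe.mpr
      simp only [fball, Finset.mem_filter, Finset.mem_univ, true_and]
      exact ⟨a, hA.mem_toFinset.mpr ha, hd⟩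
  by_cases hpm : p * (IF.card:ℝ) < L^2
  · refine ⟨∅, Set.empty_subset I, ?_, ?_⟩
    · simp only [Set.ncard_empty, Nat.cast_zero]
      positivity
    · intro i A hA
      by_cases hA0 : A.ncard = 0
      · rw [hA0]
        simp only [Nat.cast_zero]
        positivity
      · exfalso
        have h1 : (1:ℝ) ≤ (A.ncard:ℝ) := by
          exact_mod_cast Nat.one_le_iff_ne_zero.mpr hA0
        have h2 : ((graphBall G A i ∩ I).ncard:ℝ) ≤ (I.ncard:ℝ) := by
          exact_mod_cast Set.ncard_le_ncard Set.inter_subset_right hI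
        have hL2 : (0:ℝ) < L^2 := by nlinarith
        have h3 : L^2/p ≤ (A.ncard:ℝ) * L^2/p := by
          gcongr
          nlinarith
        have h4 : L^2/p ≤ (I.ncard:ℝ) := le_trans h3 (le_trans hA h2)
        rw [div_le_iff₀ hp0, hmI] at h4
        nlinarith
  · push_neg at hpm
    have hnum1 := num_x0 n hn333 L hLdef
    have hsizeb := num_size (p*(IF.card:ℝ)) L hL8 hpm
    obtain ⟨Rf, hRsub, hRcard, hRprop⟩ :=
      exists_good G n hn hn1 IF p L hp0 hp1 hL8 hnum1 hsizeb
    refine ⟨(Rf : Set V), ?_, ?_, ?_⟩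
    · rw [← hIFcoe]; exact Finset.coe_subset.mpr hRsub
    · rw [Set.ncard_coe_finset, hmI]
      calc (Rf.card:ℝ) ≤ 2*p*(IF.card:ℝ) := hRcard
        _ = 2*(IF.card:ℝ)*p := by ring
    · intro i A hA
      have hAfin : A.Finite := Set.toFinite A
      set AF := hAfin.toFinset with hAFdef
      have hAcard : (A.ncard:ℝ) = (AF.card:ℝ) := by
        exact_mod_cast Set.ncard_eq_toFinset_card A hAfin
      set j := min i n with hj
      have hji : graphBall G A i = graphBall G A j := by
        rcases le_total i n with h | h
        · rw [hj, min_eq_left h]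
        · rw [hj, min_eq_right h]
          apply Set.Subset.antisymm
          · rintro v ⟨a, ha, hd⟩
            exact ⟨a, ha, hdist a v⟩
          · rintro v ⟨a, ha, hd⟩
            exact ⟨a, ha, hd.trans h⟩
      have hball1 : graphBall G A i ∩ I = ((fball G AF j ∩ IF : Finset V) : Set V) := by
        rw [hji, Finset.coe_inter, hfb A hAfin j, hIFcoe]
      have hball2 : graphBall G A i ∩ (Rf : Set V)
          = ((fball G AF j ∩ Rf : Finset V) : Set V) := by
        rw [hji, Finset.coe_inter, hfb A hAfin j]
      rw [hball1, Set.ncard_coe_finset, hAcard] at hA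
      rw [hball2, Set.ncard_coe_finset, hAcard]
      exact hRprop AF j (min_le_right i n) hA
end

section
/- Let G be a finite connected simple graph of girth g ≥ 3 and let ρ = ⌊(g+1)/4⌋. Let u be a vertex of G. In the game of Cops and Robbers on G, two cops both starting at u have a strategy with the following property: against any robber whose starting vertex lies outside B(u, 2ρ−2), if the robber is never caught then the robber's position never lies in B(u, ρ). -/
open SimpleGraph

namespace TwoCopsGuard

variable {V : Type} {G : SimpleGraph V}

lemma egirth_le_of_isCycle {a : V} {w : G.Walk a a} (hw : w.IsCycle) :
    G.egirth ≤ w.length := by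
  unfold SimpleGraph.egirth
  exact (iInf_le _ a).trans ((iInf_le _ w).trans (iInf_le _ hw))

/-- Two short paths between the same endpoints coincide (girth bound). -/
lemma path_unique {g : ℕ} (hgirth : (g : ℕ∞) ≤ G.egirth) {x y : V}
    (p q : G.Walk x y) (hp : p.IsPath) (hq : q.IsPath)
    (hlen : p.length + q.length < g) : p = q := by
  classical
  set S : Set (Sym2 V) := {e | e ∈ p.edges ∨ e ∈ q.edges} with hS
  have hSG : S ⊆ G.edgeSet := by
    rintro e (he | he)
    · exact p.edges_subset_edgeSet he
    · exact q.edges_subset_edgeSet he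
  set H : SimpleGraph V := SimpleGraph.fromEdgeSet S with hH
  have hHG : ∀ e ∈ H.edgeSet, e ∈ G.edgeSet := by
    intro e he
    rw [hH, edgeSet_fromEdgeSet] at he
    exact hSG he.1
  have hpe : ∀ e ∈ p.edges, e ∈ H.edgeSet := by
    intro e he
    rw [hH, edgeSet_fromEdgeSet]
    exact ⟨Or.inl he, G.not_isDiag_of_mem_edgeSet (p.edges_subset_edgeSet he)⟩
  have hqe : ∀ e ∈ q.edges, e ∈ H.edgeSet := by
    intro e he
    rw [hH, edgeSet_fromEdgeSet]
    exact ⟨Or.inr he, G.not_isDiag_of_mem_edgeSet (q.edges_subset_edgeSet he)⟩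
  by_cases hac : H.IsAcyclic
  · have h1 : (⟨p.transfer H hpe, hp.transfer hpe⟩ : H.Path x y)
        = ⟨q.transfer H hqe, hq.transfer hqe⟩ := hac.path_unique _ _
    have h2 : p.transfer H hpe = q.transfer H hqe := congrArg Subtype.val h1
    have h3 := congrArg
      (fun w : H.Walk x y => w.transfer G (fun e he => hHG e (w.edges_subset_edgeSet he))) h2
    simpa only [Walk.transfer_transfer, Walk.transfer_self] using h3
  · rw [SimpleGraph.IsAcyclic] at hac
    push_neg at hac
    obtain ⟨a, w, hw⟩ := hac
    have hwe : ∀ e ∈ w.edges, e ∈ G.edgeSet := fun e he => hHG e (w.edges_subset_edgeSet he)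
    have hcyc : (w.transfer G hwe).IsCycle := hw.transfer hwe
    have hgl : (g : ℕ∞) ≤ ((w.transfer G hwe).length : ℕ∞) :=
      hgirth.trans (egirth_le_of_isCycle hcyc)
    have hgl' : g ≤ w.length := by
      rw [Walk.length_transfer] at hgl
      exact_mod_cast hgl
    have hsub : w.edges ⊆ p.edges ++ q.edges := by
      intro e he
      have he2 : e ∈ H.edgeSet := w.edges_subset_edgeSet he
      rw [hH, edgeSet_fromEdgeSet] at he2
      rcases he2.1 with h | h
      · exact List.mem_append_left _ h
      · exact List.mem_append_right _ h
    have hnd : w.edges.Nodup := hw.edges_nodup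
    have hle : w.edges.length ≤ (p.edges ++ q.edges).length :=
      (List.subperm_of_subset hnd hsub).length_le
    rw [List.length_append, Walk.length_edges, Walk.length_edges, Walk.length_edges] at hle
    omega

/-- Master lemma: geodesy-like comparison of two paths to adjacent vertices. -/
lemma master {g : ℕ} (hgirth : (g : ℕ∞) ≤ G.egirth) {u v v' : V} (e : G.Adj v v')
    (p : G.Walk u v) (q : G.Walk u v') (hp : p.IsPath) (hq : q.IsPath)
    (hlen : p.length + q.length + 1 < g) :
    (q.length = p.length + 1 ∧ ∀ k ≤ p.length, q.getVert k = p.getVert k) ∨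
    (p.length = q.length + 1 ∧ ∀ k ≤ q.length, p.getVert k = q.getVert k) := by
  classical
  by_cases hv' : v' ∈ p.support
  · right
    have hsp := p.take_spec hv'
    set p₁ := p.takeUntil v' hv' with hp₁def
    set p₂ := p.dropUntil v' hv' with hp₂def
    have hp₁ : p₁.IsPath := hp.takeUntil hv'
    have hp₂ : p₂.IsPath := hp.dropUntil hv'
    have hlsum : p₁.length + p₂.length = p.length := by
      rw [← Walk.length_append, hsp]
    have hsingle : (Walk.cons e.symm Walk.nil : G.Walk v' v).IsPath := by
      simp [Walk.cons_isPath_iff, e.ne']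
    have h2 : p₂ = Walk.cons e.symm Walk.nil := by
      apply path_unique hgirth p₂ _ hp₂ hsingle
      simp only [Walk.length_cons, Walk.length_nil]
      omega
    have hp₂len : p₂.length = 1 := by rw [h2]; simp
    have h1 : p₁ = q := by
      apply path_unique hgirth p₁ q hp₁ hq
      omega
    have hq1 : p₁.length = q.length := by rw [h1]
    constructor
    · omega
    · intro k hk
      have hk' : k ≤ p₁.length := by omega
      rw [← hsp, Walk.getVert_append]
      rcases lt_or_eq_of_le hk' with hlt | heq
      · rw [if_pos hlt, h1]
      · rw [← heq, if_neg (lt_irrefl _), Nat.sub_self]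
        rw [Walk.getVert_zero]
        have : q.getVert k = v' := by
          have : k = q.length := by omega
          rw [this, Walk.getVert_length]
        rw [this]
  · left
    have hconc : (p.concat e).IsPath := by
      rw [← Walk.isPath_reverse_iff, Walk.reverse_concat]
      rw [Walk.cons_isPath_iff]
      constructor
      · rwa [Walk.isPath_reverse_iff]
      · rwa [Walk.support_reverse, List.mem_reverse]
    have h1 : q = p.concat e := by
      apply path_unique hgirth q _ hq hconc
      rw [Walk.length_concat]
      omega
    constructor
    · rw [h1, Walk.length_concat]
    · intro k hk
      rw [h1, Walk.concat_eq_append, Walk.getVert_append]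
      rcases lt_or_eq_of_le hk with hlt | heq
      · rw [if_pos hlt]
      · rw [heq, if_neg (lt_irrefl _), Nat.sub_self, Walk.getVert_zero, Walk.getVert_length]

variable (G) in
/-- a chosen geodesic -/
noncomputable def geo (hG : G.Connected) (u v : V) : G.Walk u v :=
  (hG.exists_walk_length_eq_dist u v).choose

lemma geo_length (hG : G.Connected) (u v : V) : (geo G hG u v).length = G.dist u v :=
  (hG.exists_walk_length_eq_dist u v).choose_spec

lemma geo_isPath (hG : G.Connected) (u v : V) : (geo G hG u v).IsPath :=
  Walk.isPath_of_length_eq_dist _ (geo_length hG u v)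

lemma dist_getVert_le (hG : G.Connected) {a b : V} (p : G.Walk a b) (k : ℕ) :
    G.dist a (p.getVert k) ≤ k := by
  induction p generalizing k with
  | nil => simp [Walk.getVert, SimpleGraph.dist_self]
  | @cons a c b h p ih =>
    cases k with
    | zero => simp [Walk.getVert, SimpleGraph.dist_self]
    | succ k =>
      calc G.dist a ((Walk.cons h p).getVert (k+1))
          ≤ G.dist a c + G.dist c (p.getVert k) := hG.dist_triangle
        _ ≤ 1 + k := by
            have h1 : G.dist a c ≤ 1 := by
              have := SimpleGraph.dist_le (Walk.cons h (Walk.nil) : G.Walk a c)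
              simpa using this
            have h2 := ih k
            omega
        _ = k + 1 := by omega

lemma dist_getVert_right_le (hG : G.Connected) {a b : V} (p : G.Walk a b) (k : ℕ) :
    G.dist (p.getVert k) b ≤ p.length - k := by
  induction p generalizing k with
  | nil => simp [Walk.getVert]
  | @cons a c b h p ih =>
    cases k with
    | zero =>
      have := SimpleGraph.dist_le (Walk.cons h p)
      simpa using this
    | succ k =>
      have := ih k
      simpa [Walk.getVert, Walk.length_cons] using this

/-- on a geodesic, the `k`-th vertex is at distance `k` from the start -/
lemma dist_geo_getVert (hG : G.Connected) (u v : V) {k : ℕ} (hk : k ≤ G.dist u v) :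
    G.dist u ((geo G hG u v).getVert k) = k := by
  have h1 := dist_getVert_le hG (geo G hG u v) k
  have h2 := dist_getVert_right_le hG (geo G hG u v) k
  rw [geo_length] at h2
  have h3 : G.dist u v ≤ G.dist u ((geo G hG u v).getVert k)
      + G.dist ((geo G hG u v).getVert k) v := hG.dist_triangle
  omega

/-- specialisation of the master lemma to the chosen geodesics -/
lemma geo_master {g : ℕ} (hG : G.Connected) (hgirth : (g : ℕ∞) ≤ G.egirth)
    {u r r' : V} (e : G.Adj r r') (hlen : G.dist u r + G.dist u r' + 1 < g) :
    (G.dist u r' = G.dist u r + 1 ∧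
      ∀ k ≤ G.dist u r, (geo G hG u r').getVert k = (geo G hG u r).getVert k) ∨
    (G.dist u r = G.dist u r' + 1 ∧
      ∀ k ≤ G.dist u r', (geo G hG u r).getVert k = (geo G hG u r').getVert k) := by
  have := master hgirth e (geo G hG u r) (geo G hG u r')
    (geo_isPath hG u r) (geo_isPath hG u r')
    (by rw [geo_length, geo_length]; omega)
  rw [geo_length, geo_length] at this
  tauto


section Strategy

variable (G)

/-- move one step from `x` towards `u` along the chosen geodesic (stays at `u`). -/
noncomputable def toward (hG : G.Connected) (u x : V) : V :=
  (geo G hG u x).getVert (G.dist u x - 1)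

/-- the cops' target vertex, on the chosen geodesic towards the robber. -/
noncomputable def tgt (hG : G.Connected) (u : V) (ρ : ℕ) (r : V) : V :=
  (geo G hG u r).getVert (min (G.dist u r) (max 1 (2 * ρ - G.dist u r)))

/-- one move of the cop pair, as a function of the robber's current position. -/
noncomputable def step (hG : G.Connected) (u : V) (ρ : ℕ) (s : V × V) (r : V) : V × V :=
  if 2 * ρ ≤ G.dist u r then (toward G hG u s.1, toward G hG u s.2)
  else if G.dist u s.2 ≤ G.dist u s.1 then
    (if G.dist s.1 (tgt G hG u ρ r) ≤ 1 then (tgt G hG u ρ r, toward G hG u s.2)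
     else if G.dist s.2 (tgt G hG u ρ r) ≤ 1 then (toward G hG u s.1, tgt G hG u ρ r)
     else s)
  else
    (if G.dist s.2 (tgt G hG u ρ r) ≤ 1 then (toward G hG u s.1, tgt G hG u ρ r)
     else if G.dist s.1 (tgt G hG u ρ r) ≤ 1 then (tgt G hG u ρ r, toward G hG u s.2)
     else s)

/-- cop positions as a function of the reversed robber history -/
noncomputable def frev (hG : G.Connected) (u : V) (ρ : ℕ) : List V → V × V
  | [] => (u, u)
  | r :: l => step G hG u ρ (frev hG u ρ l) r

variable {G}

lemma toward_self (hG : G.Connected) (u : V) : toward G hG u u = u := by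
  unfold toward
  rw [SimpleGraph.dist_self]
  simp [Walk.getVert_zero]

lemma toward_dist_one (hG : G.Connected) {u x : V} (h : G.dist u x = 1) :
    toward G hG u x = u := by
  unfold toward
  rw [h]
  simp [Walk.getVert_zero]

lemma toward_eq_or_adj (hG : G.Connected) (u x : V) :
    toward G hG u x = x ∨ G.Adj x (toward G hG u x) := by
  by_cases h0 : G.dist u x = 0
  · left
    have hux : u = x := (hG.dist_eq_zero_iff).mp h0
    unfold toward
    rw [h0]
    simpa [Walk.getVert_zero] using hux
  · right
    have h1 : G.dist u x - 1 < (geo G hG u x).length := by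
      rw [geo_length]; omega
    have h2 := Walk.adj_getVert_succ (geo G hG u x) h1
    have h3 : G.dist u x - 1 + 1 = G.dist u x := by omega
    rw [h3] at h2
    have h4 : (geo G hG u x).getVert (G.dist u x) = x := by
      rw [← geo_length hG u x, Walk.getVert_length]
    rw [h4] at h2
    exact h2.symm

lemma dist_le_one_cases (hG : G.Connected) {x y : V} (h : G.dist x y ≤ 1) :
    y = x ∨ G.Adj x y := by
  have : G.dist x y = 0 ∨ G.dist x y = 1 := by omega
  rcases this with h0 | h1
  · left; exact ((hG.dist_eq_zero_iff).mp h0).symm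
  · right; exact SimpleGraph.dist_eq_one_iff_adj.mp h1

lemma step_legal_fst (hG : G.Connected) (u : V) (ρ : ℕ) (s : V × V) (r : V) :
    (step G hG u ρ s r).1 = s.1 ∨ G.Adj s.1 (step G hG u ρ s r).1 := by
  unfold step
  split_ifs with h1 h2 h3 h4 h5 h6
  · exact toward_eq_or_adj hG u s.1
  · exact dist_le_one_cases hG h3
  · exact toward_eq_or_adj hG u s.1
  · left; rfl
  · exact toward_eq_or_adj hG u s.1
  · exact dist_le_one_cases hG h6
  · left; rfl

lemma step_legal_snd (hG : G.Connected) (u : V) (ρ : ℕ) (s : V × V) (r : V) :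
    (step G hG u ρ s r).2 = s.2 ∨ G.Adj s.2 (step G hG u ρ s r).2 := by
  unfold step
  split_ifs with h1 h2 h3 h4 h5 h6
  · exact toward_eq_or_adj hG u s.2
  · exact toward_eq_or_adj hG u s.2
  · exact dist_le_one_cases hG h4
  · left; rfl
  · exact dist_le_one_cases hG h5
  · exact toward_eq_or_adj hG u s.2
  · left; rfl

/-- evaluation lemmas for `step` -/
lemma step_eval_far (hG : G.Connected) (u : V) (ρ : ℕ) (s : V × V) {r : V}
    (h : 2 * ρ ≤ G.dist u r) :
    step G hG u ρ s r = (toward G hG u s.1, toward G hG u s.2) := by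
  unfold step; rw [if_pos h]

lemma step_eval_first (hG : G.Connected) (u : V) (ρ : ℕ) (s : V × V) {r : V}
    (hfar : ¬ 2 * ρ ≤ G.dist u r) (hord : G.dist u s.2 ≤ G.dist u s.1)
    (h1 : G.dist s.1 (tgt G hG u ρ r) ≤ 1) :
    step G hG u ρ s r = (tgt G hG u ρ r, toward G hG u s.2) := by
  unfold step; rw [if_neg hfar, if_pos hord, if_pos h1]

lemma step_eval_second (hG : G.Connected) (u : V) (ρ : ℕ) (s : V × V) {r : V}
    (hfar : ¬ 2 * ρ ≤ G.dist u r) (hord : G.dist u s.2 ≤ G.dist u s.1)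
    (h1 : ¬ G.dist s.1 (tgt G hG u ρ r) ≤ 1) (h2 : G.dist s.2 (tgt G hG u ρ r) ≤ 1) :
    step G hG u ρ s r = (toward G hG u s.1, tgt G hG u ρ r) := by
  unfold step; rw [if_neg hfar, if_pos hord, if_neg h1, if_pos h2]

lemma step_eval_first' (hG : G.Connected) (u : V) (ρ : ℕ) (s : V × V) {r : V}
    (hfar : ¬ 2 * ρ ≤ G.dist u r) (hord : ¬ G.dist u s.2 ≤ G.dist u s.1)
    (h2 : G.dist s.2 (tgt G hG u ρ r) ≤ 1) :
    step G hG u ρ s r = (toward G hG u s.1, tgt G hG u ρ r) := by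
  unfold step; rw [if_neg hfar, if_neg hord, if_pos h2]

lemma step_eval_second' (hG : G.Connected) (u : V) (ρ : ℕ) (s : V × V) {r : V}
    (hfar : ¬ 2 * ρ ≤ G.dist u r) (hord : ¬ G.dist u s.2 ≤ G.dist u s.1)
    (h2 : ¬ G.dist s.2 (tgt G hG u ρ r) ≤ 1) (h1 : G.dist s.1 (tgt G hG u ρ r) ≤ 1) :
    step G hG u ρ s r = (tgt G hG u ρ r, toward G hG u s.2) := by
  unfold step; rw [if_neg hfar, if_neg hord, if_neg h2, if_pos h1]

variable (G) in
/-- the invariant maintained by the cops: either the robber is far and both cops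
sit at `u`, or the robber is in the critical zone and one cop sits on the chosen
geodesic towards the robber at level `2ρ - d`, the other at `u`. -/
def InvShape (hG : G.Connected) (u : V) (ρ : ℕ) (s : V × V) (r : V) : Prop :=
  (2 * ρ ≤ G.dist u r ∧ s = (u, u)) ∨
  (ρ + 1 ≤ G.dist u r ∧ G.dist u r ≤ 2 * ρ - 1 ∧
    (s = ((geo G hG u r).getVert (2 * ρ - G.dist u r), u) ∨
     s = (u, (geo G hG u r).getVert (2 * ρ - G.dist u r))))

/-- starting (or restarting) from both cops at the centre. -/
lemma step_from_center {g : ℕ} (hG : G.Connected) (hgT : (g : ℕ∞) ≤ G.egirth)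
    (hg4 : 4 * ρ ≤ g + 1) (hρ1 : 1 ≤ ρ) (u : V) {r' : V}
    (hd : 2 * ρ - 1 ≤ G.dist u r')
    (hnc : (step G hG u ρ (u, u) r').1 ≠ r' ∧ (step G hG u ρ (u, u) r').2 ≠ r') :
    InvShape G hG u ρ (step G hG u ρ (u, u) r') r' := by
  by_cases h2 : 2 * ρ ≤ G.dist u r'
  · left
    refine ⟨h2, ?_⟩
    rw [step_eval_far hG u ρ _ h2]
    simp [toward_self hG u]
  · -- d' = 2ρ - 1
    have hd' : G.dist u r' = 2 * ρ - 1 := by omega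
    have htgt : tgt G hG u ρ r' = (geo G hG u r').getVert 1 := by
      unfold tgt; congr 1; omega
    have hdt : G.dist u (tgt G hG u ρ r') = 1 := by
      rw [htgt]; exact dist_geo_getVert hG u r' (by omega)
    have hstep : step G hG u ρ (u, u) r' = (tgt G hG u ρ r', u) := by
      rw [step_eval_first hG u ρ _ h2 (by simp) (by simpa [SimpleGraph.dist_self] using hdt.le)]
      rw [toward_self hG u]
    by_cases hρ2 : 2 ≤ ρ
    · right
      refine ⟨by omega, by omega, Or.inl ?_⟩
      rw [hstep, htgt]
      congr 2
      omega
    · -- ρ = 1 : the robber is adjacent to u and gets caught, contradiction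
      exfalso
      have hρ1' : ρ = 1 := by omega
      have h1 : G.dist u r' = 1 := by omega
      have : tgt G hG u ρ r' = r' := by
        rw [htgt]
        have : (1 : ℕ) = (geo G hG u r').length := by rw [geo_length]; omega
        rw [this, Walk.getVert_length]
      exact hnc.1 (by rw [hstep, this])


lemma dist_getVert_succ_le_one (hG : G.Connected) {a b : V} (p : G.Walk a b) {k : ℕ}
    (hk : k < p.length) :
    G.dist (p.getVert (k+1)) (p.getVert k) ≤ 1 ∧ G.dist (p.getVert k) (p.getVert (k+1)) ≤ 1 := by
  have h := Walk.adj_getVert_succ p hk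
  exact ⟨le_of_eq (SimpleGraph.dist_eq_one_iff_adj.mpr h.symm),
    le_of_eq (SimpleGraph.dist_eq_one_iff_adj.mpr h)⟩

lemma dist_adj_bound (hG : G.Connected) (u : V) {a b : V} (h : G.Adj a b) :
    G.dist u b ≤ G.dist u a + 1 := by
  have h1 : G.dist u b ≤ G.dist u a + G.dist a b := hG.dist_triangle
  rwa [SimpleGraph.dist_eq_one_iff_adj.mpr h] at h1

/-- the inductive step from a zone state. -/
lemma step_zone {g : ℕ} (hG : G.Connected) (hgT : (g : ℕ∞) ≤ G.egirth)
    (hg4 : 4 * ρ ≤ g + 1) (u : V) {r r' : V}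
    (hmove : r' = r ∨ G.Adj r r')
    (hz1 : ρ + 1 ≤ G.dist u r) (hz2 : G.dist u r ≤ 2 * ρ - 1)
    {s : V × V}
    (hs : s = ((geo G hG u r).getVert (2 * ρ - G.dist u r), u) ∨
          s = (u, (geo G hG u r).getVert (2 * ρ - G.dist u r)))
    (hnc : (step G hG u ρ s r').1 ≠ r' ∧ (step G hG u ρ s r').2 ≠ r') :
    InvShape G hG u ρ (step G hG u ρ s r') r' := by
  have hρ2 : 2 ≤ ρ := by omega
  set A := (geo G hG u r).getVert (2 * ρ - G.dist u r) with hA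
  have hdA : G.dist u A = 2 * ρ - G.dist u r := dist_geo_getVert hG u r (by omega)
  rcases hmove with rfl | hadj
  · -- robber stays put (`r` has been substituted by `r'`)
    have htgt : tgt G hG u ρ r' = A := by
      rw [hA]; unfold tgt; congr 1; omega
    have hfar : ¬ 2 * ρ ≤ G.dist u r' := by omega
    rcases hs with rfl | rfl
    · have he := step_eval_first hG u ρ (A, u) hfar
        (show G.dist u u ≤ G.dist u A by rw [SimpleGraph.dist_self]; exact Nat.zero_le _)
        (show G.dist A (tgt G hG u ρ r') ≤ 1 by rw [htgt, SimpleGraph.dist_self]; omega)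
      rw [he, toward_self hG u, htgt]
      right; exact ⟨hz1, hz2, Or.inl rfl⟩
    · have hord : ¬ G.dist u A ≤ G.dist u u := by
        rw [SimpleGraph.dist_self]; omega
      have he := step_eval_first' hG u ρ (u, A) hfar hord
        (show G.dist A (tgt G hG u ρ r') ≤ 1 by rw [htgt, SimpleGraph.dist_self]; omega)
      rw [he, toward_self hG u, htgt]
      right; exact ⟨hz1, hz2, Or.inr rfl⟩
  · -- robber moves along an edge
    have h2d : G.dist u r' ≤ G.dist u r + 1 := dist_adj_bound hG u hadj
    have h1d : G.dist u r ≤ G.dist u r' + 1 := dist_adj_bound hG u hadj.symm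
    have htri : G.dist u r' = G.dist u r + 1 ∨ G.dist u r' = G.dist u r
        ∨ G.dist u r' + 1 = G.dist u r := by omega
    rcases htri with hup | hsame | hdown
    · -- robber retreats
      by_cases hfar' : 2 * ρ ≤ G.dist u r'
      · -- exits the zone: then d = 2ρ-1 and the active cop is at level 1
        have hA1 : G.dist u A = 1 := by rw [hdA]; omega
        rw [step_eval_far hG u ρ s hfar']
        left
        refine ⟨hfar', ?_⟩
        rcases hs with rfl | rfl
        · show (toward G hG u A, toward G hG u u) = (u, u)
          rw [toward_dist_one hG hA1, toward_self hG u]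
        · show (toward G hG u u, toward G hG u A) = (u, u)
          rw [toward_dist_one hG hA1, toward_self hG u]
      · -- stays in the zone
        have hd'z : G.dist u r' ≤ 2 * ρ - 1 := by omega
        have hsum : G.dist u r + G.dist u r' + 1 < g := by omega
        rcases geo_master hG hgT hadj hsum with ⟨hlen, hpre⟩ | ⟨hlen, _⟩
        swap
        · omega
        have htgt : tgt G hG u ρ r' = (geo G hG u r').getVert (2 * ρ - G.dist u r') := by
          unfold tgt; congr 1; omega
        have hAr' : A = (geo G hG u r').getVert (2 * ρ - G.dist u r) := by
          rw [hA, hpre _ (by omega)]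
        have hadjA : G.dist A (tgt G hG u ρ r') ≤ 1 := by
          rw [hAr', htgt]
          have hidx2 : 2 * ρ - G.dist u r = (2 * ρ - G.dist u r') + 1 := by omega
          rw [hidx2]
          refine (dist_getVert_succ_le_one hG _ ?_).1
          rw [geo_length]; omega
        rcases hs with rfl | rfl
        · have he := step_eval_first hG u ρ (A, u) hfar'
            (show G.dist u u ≤ G.dist u A by rw [SimpleGraph.dist_self]; exact Nat.zero_le _)
            hadjA
          rw [he, toward_self hG u, htgt]
          right; exact ⟨by omega, hd'z, Or.inl rfl⟩
        · have hord : ¬ G.dist u A ≤ G.dist u u := by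
            rw [SimpleGraph.dist_self, hdA]; omega
          have he := step_eval_first' hG u ρ (u, A) hfar' hord hadjA
          rw [he, toward_self hG u, htgt]
          right; exact ⟨by omega, hd'z, Or.inr rfl⟩
    · -- robber moves sideways
      by_cases htop : G.dist u r = 2 * ρ - 1
      · -- at the top level: a hand-off between the cops may happen
        have hA1 : G.dist u A = 1 := by rw [hdA]; omega
        have htgt : tgt G hG u ρ r' = (geo G hG u r').getVert 1 := by
          unfold tgt; congr 1; omega
        have hdt : G.dist u (tgt G hG u ρ r') = 1 := by
          rw [htgt]; exact dist_geo_getVert hG u r' (by omega)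
        have hfar : ¬ 2 * ρ ≤ G.dist u r' := by omega
        have hAr'tgt : (geo G hG u r').getVert (2 * ρ - G.dist u r') = tgt G hG u ρ r' := by
          rw [htgt]; congr 1; omega
        rcases hs with rfl | rfl
        · by_cases hAt : G.dist A (tgt G hG u ρ r') ≤ 1
          · have he := step_eval_first hG u ρ (A, u) hfar
              (show G.dist u u ≤ G.dist u A by rw [SimpleGraph.dist_self]; exact Nat.zero_le _)
              hAt
            rw [he, toward_self hG u]
            right; exact ⟨by omega, by omega, Or.inl (by rw [hAr'tgt])⟩
          · have he := step_eval_second hG u ρ (A, u) hfar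
              (show G.dist u u ≤ G.dist u A by rw [SimpleGraph.dist_self]; exact Nat.zero_le _)
              hAt (show G.dist u (tgt G hG u ρ r') ≤ 1 from hdt.le)
            rw [he, toward_dist_one hG hA1]
            right; exact ⟨by omega, by omega, Or.inr (by rw [hAr'tgt])⟩
        · have hord : ¬ G.dist u A ≤ G.dist u u := by rw [SimpleGraph.dist_self]; omega
          by_cases hAt : G.dist A (tgt G hG u ρ r') ≤ 1
          · have he := step_eval_first' hG u ρ (u, A) hfar hord hAt
            rw [he, toward_self hG u]
            right; exact ⟨by omega, by omega, Or.inr (by rw [hAr'tgt])⟩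
          · have he := step_eval_second' hG u ρ (u, A) hfar hord hAt
              (show G.dist u (tgt G hG u ρ r') ≤ 1 from hdt.le)
            rw [he, toward_dist_one hG hA1]
            right; exact ⟨by omega, by omega, Or.inl (by rw [hAr'tgt])⟩
      · -- below the top level: impossible by the girth bound
        exfalso
        have hsum : G.dist u r + G.dist u r' + 1 < g := by omega
        rcases geo_master hG hgT hadj hsum with ⟨hlen, _⟩ | ⟨hlen, _⟩ <;> omega
    · -- robber approaches
      by_cases hcatch : G.dist u r' ≤ ρ
      · -- the robber would enter the ball: it is caught, contradiction
        exfalso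
        have hd'ρ : G.dist u r' = ρ := by omega
        have hsum : G.dist u r + G.dist u r' + 1 < g := by omega
        rcases geo_master hG hgT hadj hsum with ⟨hlen, _⟩ | ⟨hlen, hpre⟩
        · omega
        have htgt : tgt G hG u ρ r' = r' := by
          have h1 : tgt G hG u ρ r' = (geo G hG u r').getVert (G.dist u r') := by
            unfold tgt; congr 1; omega
          rw [h1, ← geo_length hG u r', Walk.getVert_length]
        have hAr' : A = (geo G hG u r').getVert (2 * ρ - G.dist u r) := by
          rw [hA, hpre _ (by omega)]
        have hadjA : G.dist A (tgt G hG u ρ r') ≤ 1 := by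
          have hlt : 2 * ρ - G.dist u r < (geo G hG u r').length := by
            rw [geo_length]; omega
          have h2 := (dist_getVert_succ_le_one hG (geo G hG u r') hlt).2
          have h3 : r' = (geo G hG u r').getVert (2 * ρ - G.dist u r + 1) := by
            have hidx : 2 * ρ - G.dist u r + 1 = (geo G hG u r').length := by
              rw [geo_length]; omega
            rw [hidx, Walk.getVert_length]
          rw [← h3] at h2
          rw [hAr', htgt]
          exact h2
        have hfar : ¬ 2 * ρ ≤ G.dist u r' := by omega
        rcases hs with rfl | rfl
        · have he := step_eval_first hG u ρ (A, u) hfar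
            (show G.dist u u ≤ G.dist u A by rw [SimpleGraph.dist_self]; exact Nat.zero_le _)
            hadjA
          exact hnc.1 (by rw [he]; exact htgt)
        · have hord : ¬ G.dist u A ≤ G.dist u u := by
            rw [SimpleGraph.dist_self, hdA]; omega
          have he := step_eval_first' hG u ρ (u, A) hfar hord hadjA
          exact hnc.2 (by rw [he]; exact htgt)
      · -- stays in the zone
        have hz1' : ρ + 1 ≤ G.dist u r' := by omega
        have hd'z : G.dist u r' ≤ 2 * ρ - 1 := by omega
        have hsum : G.dist u r + G.dist u r' + 1 < g := by omega
        rcases geo_master hG hgT hadj hsum with ⟨hlen, _⟩ | ⟨hlen, hpre⟩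
        · omega
        have htgt : tgt G hG u ρ r' = (geo G hG u r').getVert (2 * ρ - G.dist u r') := by
          unfold tgt; congr 1; omega
        have hAr' : A = (geo G hG u r').getVert (2 * ρ - G.dist u r) := by
          rw [hA, hpre _ (by omega)]
        have hadjA : G.dist A (tgt G hG u ρ r') ≤ 1 := by
          rw [hAr', htgt]
          have hidx : 2 * ρ - G.dist u r' = (2 * ρ - G.dist u r) + 1 := by omega
          rw [hidx]
          refine (dist_getVert_succ_le_one hG _ ?_).2
          rw [geo_length]; omega
        have hfar : ¬ 2 * ρ ≤ G.dist u r' := by omega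
        rcases hs with rfl | rfl
        · have he := step_eval_first hG u ρ (A, u) hfar
            (show G.dist u u ≤ G.dist u A by rw [SimpleGraph.dist_self]; exact Nat.zero_le _)
            hadjA
          rw [he, toward_self hG u, htgt]
          right; exact ⟨hz1', hd'z, Or.inl rfl⟩
        · have hord : ¬ G.dist u A ≤ G.dist u u := by
            rw [SimpleGraph.dist_self, hdA]; omega
          have he := step_eval_first' hG u ρ (u, A) hfar hord hadjA
          rw [he, toward_self hG u, htgt]
          right; exact ⟨hz1', hd'z, Or.inr rfl⟩

/-- combined inductive step. -/
lemma step_inv {g : ℕ} (hG : G.Connected) (hgT : (g : ℕ∞) ≤ G.egirth)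
    (hg4 : 4 * ρ ≤ g + 1) (hρ1 : 1 ≤ ρ) (u : V) {r r' : V}
    (hmove : r' = r ∨ G.Adj r r') {s : V × V}
    (hs : InvShape G hG u ρ s r)
    (hnc : (step G hG u ρ s r').1 ≠ r' ∧ (step G hG u ρ s r').2 ≠ r') :
    InvShape G hG u ρ (step G hG u ρ s r') r' := by
  rcases hs with ⟨hfar, rfl⟩ | ⟨hz1, hz2, hz⟩
  · apply step_from_center hG hgT hg4 hρ1 u ?_ hnc
    rcases hmove with rfl | hadj
    · omega
    · have := dist_adj_bound hG u hadj.symm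
      omega
  · exact step_zone hG hgT hg4 u hmove hz1 hz2 hz hnc

def pairFun {V' : Type} (s : V' × V') : Fin 2 → V' := fun i => if i.val = 0 then s.1 else s.2

end Strategy

end TwoCopsGuard

/-- Lemma 6.1: Let `G` be a connected graph of girth `g ≥ 3`, let `ρ = ⌊(g+1)/4⌋` and
let `u` be a vertex of `G`.  Two cops, both starting at `u`, have a strategy (a
function `move` from full histories of the play to the cops' next positions) such
that against any robber starting outside `B(u, 2ρ-2)`, the cops always move legally
and, as long as the robber is never caught, the robber's position never lies in
`B(u, ρ)`.  The robber is modelled by an arbitrary sequence `r : ℕ → V` in which each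
step either stays put or moves along an edge; the robber is caught at time `t` if
some cop stands on `r t` right after the cops' `(t+1)`-st move. -/
theorem two_cops_guard_ball
    {V : Type} [Fintype V] (G : SimpleGraph V) (hG : G.Connected)
    (g : ℕ) (hg : 3 ≤ g) (hgirth : G.egirth = (g : ℕ∞))
    (ρ : ℕ) (hρ : ρ = (g + 1) / 4) (u : V) :
    ∃ move : List ((Fin 2 → V) × V) → Fin 2 → V,
      ∀ r : ℕ → V,
        (∀ t, r (t + 1) = r t ∨ G.Adj (r t) (r (t + 1))) →
        2 * ρ - 2 < G.dist u (r 0) →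
        ∀ c : ℕ → Fin 2 → V,
          c 0 = (fun _ => u) →
          (∀ t, c (t + 1) = move (List.ofFn fun j : Fin (t + 1) => (c j.val, r j.val))) →
          (∀ t i, c (t + 1) i = c t i ∨ G.Adj (c t i) (c (t + 1) i)) ∧
          ((∀ t i, c (t + 1) i ≠ r t) → ∀ t, ρ < G.dist u (r t)) := by
  classical
  have hgT : (g : ℕ∞) ≤ G.egirth := le_of_eq hgirth.symm
  have hg4 : 4 * ρ ≤ g + 1 := by omega
  have hρ1 : 1 ≤ ρ := by omega
  refine ⟨fun hist =>
    TwoCopsGuard.pairFun (TwoCopsGuard.frev G hG u ρ ((hist.map Prod.snd).reverse)), ?_⟩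
  intro r hr hr0 c hc0 hcmove
  set P : ℕ → V × V :=
    fun t => TwoCopsGuard.frev G hG u ρ ((List.ofFn fun j : Fin (t+1) => r j.val).reverse)
    with hP
  have hPc : ∀ t, c (t+1) = TwoCopsGuard.pairFun (P t) := by
    intro t
    rw [hcmove t]
    simp only [List.map_ofFn]
    rfl
  have hP0 : P 0 = TwoCopsGuard.step G hG u ρ (u, u) (r 0) := by
    have h01 : (List.ofFn fun j : Fin 1 => r j.val).reverse = [r 0] := by
      simp
    show TwoCopsGuard.frev G hG u ρ ((List.ofFn fun j : Fin 1 => r j.val).reverse)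
      = TwoCopsGuard.step G hG u ρ (u, u) (r 0)
    rw [h01]
    rfl
  have hPs : ∀ t, P (t+1) = TwoCopsGuard.step G hG u ρ (P t) (r (t+1)) := by
    intro t
    show TwoCopsGuard.frev G hG u ρ ((List.ofFn fun j : Fin (t+2) => r j.val).reverse)
      = TwoCopsGuard.step G hG u ρ
          (TwoCopsGuard.frev G hG u ρ ((List.ofFn fun j : Fin (t+1) => r j.val).reverse))
          (r (t+1))
    have h1 : (List.ofFn fun j : Fin (t+2) => r j.val)
        = (List.ofFn fun j : Fin (t+1) => r j.val).concat (r (t+1)) := by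
      rw [List.ofFn_succ']
      rfl
    rw [h1, List.concat_eq_append, List.reverse_append]
    rfl
  constructor
  · -- legality of the cops' moves
    intro t i
    have hleg1 := TwoCopsGuard.step_legal_fst hG u ρ
    have hleg2 := TwoCopsGuard.step_legal_snd hG u ρ
    cases t with
    | zero =>
      rw [hPc 0, hc0, hP0]
      fin_cases i
      · simpa [TwoCopsGuard.pairFun] using hleg1 (u, u) (r 0)
      · simpa [TwoCopsGuard.pairFun] using hleg2 (u, u) (r 0)
    | succ t =>
      rw [hPc (t+1), hPc t, hPs t]
      fin_cases i
      · simpa [TwoCopsGuard.pairFun] using hleg1 (P t) (r (t+1))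
      · simpa [TwoCopsGuard.pairFun] using hleg2 (P t) (r (t+1))
  · -- the robber never enters the ball of radius ρ
    intro hnc t
    have hncP : ∀ t, (P t).1 ≠ r t ∧ (P t).2 ≠ r t := by
      intro t
      constructor
      · have h0 := hnc t 0
        rw [hPc t] at h0
        simpa [TwoCopsGuard.pairFun] using h0
      · have h1 := hnc t 1
        rw [hPc t] at h1
        simpa [TwoCopsGuard.pairFun] using h1
    have hInv : ∀ t, TwoCopsGuard.InvShape G hG u ρ (P t) (r t) := by
      intro t
      induction t with
      | zero =>
        rw [hP0]
        refine TwoCopsGuard.step_from_center hG hgT hg4 hρ1 u (by omega) ?_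
        rw [← hP0]
        exact hncP 0
      | succ t ih =>
        rw [hPs t]
        refine TwoCopsGuard.step_inv hG hgT hg4 hρ1 u (hr t) ih ?_
        rw [← hPs t]
        exact hncP (t+1)
    rcases hInv t with ⟨hfar, _⟩ | ⟨hz1, _, _⟩ <;> omega
end

section
/- Let D be a finite strongly connected digraph on n vertices that either has diameter at most 2 or is bipartite with diameter at most 3. Then c(D) ≤ √(2n). -/
/-- `dirCopsCanWin D S H k` says that `k` cops have a winning strategy in the game of
Cops and Robbers in which the cops move along the arcs of a digraph with adjacency
relation `D` while the robber must start on a vertex of the subdigraph with vertex set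
`S` and move only along its arcs `H`.  A cop strategy consists of initial positions
`init` together with a function `move` from full histories of the play (the list of
pairs (cop positions, robber position) at times `0, …, t`) to the cops' next
positions.  The robber is an arbitrary sequence `r : ℕ → V` starting in `S` in which
each step either stays put or follows an arc of `H`; the strategy is winning if along
every such play the cops' moves are legal (each cop stays put or follows an arc of
`D`) and at some point, right after the cops' move, some cop stands on the robber's
current vertex. -/
def dirCopsCanWin {V : Type*} (D : V → V → Prop) (S : Set V) (H : V → V → Prop)
    (k : ℕ) : Prop :=
  ∃ (init : Fin k → V) (move : List ((Fin k → V) × V) → Fin k → V),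
    ∀ r : ℕ → V,
      r 0 ∈ S →
      (∀ t, r (t + 1) = r t ∨ H (r t) (r (t + 1))) →
      ∀ c : ℕ → Fin k → V,
        c 0 = init →
        (∀ t, c (t + 1) = move (List.ofFn fun j : Fin (t + 1) => (c j.val, r j.val))) →
        (∀ t i, c (t + 1) i = c t i ∨ D (c t i) (c (t + 1) i)) ∧
        ∃ t i, c (t + 1) i = r t

/-- `dirCopNumber D S H` is the cop number `c(D,H)` of the restricted game: the least
number of cops moving on `D` that can catch a robber confined to the subdigraph of
`D` with vertex set `S` and arc relation `H`. -/
noncomputable def dirCopNumber {V : Type*} (D : V → V → Prop) (S : Set V)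
    (H : V → V → Prop) : ℕ :=
  sInf {k | dirCopsCanWin D S H k}

/-- A digraph with adjacency relation `D` is strongly connected if every vertex can
reach every other vertex by a directed path. -/
def dirStronglyConnected {V : Type*} (D : V → V → Prop) : Prop :=
  ∀ u v : V, Relation.ReflTransGen D u v

/-- A digraph has diameter at most 2 if for every ordered pair of vertices there is a
directed path of length at most 2 from the first to the second. -/
def dirDiamLE2 {V : Type*} (D : V → V → Prop) : Prop :=
  ∀ u v : V, u = v ∨ D u v ∨ ∃ w, D u w ∧ D w v

/-- A digraph has diameter at most 3 if for every ordered pair of vertices there is a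
directed path of length at most 3 from the first to the second. -/
def dirDiamLE3 {V : Type*} (D : V → V → Prop) : Prop :=
  ∀ u v : V, u = v ∨ D u v ∨ (∃ w, D u w ∧ D w v) ∨ ∃ w x, D u w ∧ D w x ∧ D x v

/-- A digraph is bipartite if its underlying graph is bipartite, i.e. its vertices can
be two-coloured so that every arc joins vertices of different colours. -/
def dirBipartite {V : Type*} (D : V → V → Prop) : Prop :=
  ∃ f : V → Bool, ∀ u v : V, D u v → f u ≠ f v


namespace DirCops
set_option linter.unusedSectionVars false

noncomputable section
attribute [local instance] Classical.propDecidable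

variable {V : Type} [Fintype V]

/-- closed out-neighbourhood as a finset -/
def outCl (D : V → V → Prop) (v : V) : Finset V :=
  insert v (Finset.univ.filter (fun u => D v u))

lemma mem_outCl {D : V → V → Prop} {v u : V} : u ∈ outCl D v ↔ (u = v ∨ D v u) := by
  simp [outCl]

/-- `m2 a b` is a good midpoint from `a` to `b` -/
def good2 (D : V → V → Prop) (m2 : V → V → V) (a b : V) : Prop :=
  (m2 a b = a ∨ D a (m2 a b)) ∧ (m2 a b = b ∨ D (m2 a b) b)

def safe2 (D : V → V → Prop) (m2 : V → V → V) (a b : V) : V :=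
  if good2 D m2 a b then m2 a b else a

lemma safe2_left (D : V → V → Prop) (m2 : V → V → V) (a b : V) :
    safe2 D m2 a b = a ∨ D a (safe2 D m2 a b) := by
  unfold safe2; split
  · exact (by assumption : good2 D m2 a b).1
  · exact Or.inl rfl

lemma safe2_eq {D : V → V → Prop} {m2 : V → V → V} {a b : V} (h : good2 D m2 a b) :
    safe2 D m2 a b = m2 a b := if_pos h

lemma safe2_right {D : V → V → Prop} {m2 : V → V → V} {a b : V} (h : good2 D m2 a b) :
    safe2 D m2 a b = b ∨ D (safe2 D m2 a b) b := by
  rw [safe2_eq h]; exact h.2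

variable (D : V → V → Prop) (m2 m3a m3b : V → V → V) (dir : V → Prop) (v₀ : V) (k : ℕ)

/-- vertex guarded at stage `j` -/
def wj (r : ℕ → V) (j : ℕ) : V :=
  if dir (r (3*j)) then r (3*j) else r (3*j+1)

/-- guarded set before stage `j` -/
def Gset (r : ℕ → V) : ℕ → Finset V
  | 0 => ∅
  | j+1 =>
    if (outCl D (wj dir r j) \ Gset r j).card ≤ k - j
    then Gset r j else Gset r j ∪ outCl D (wj dir r j)

/-- stage `j` is a capture stage -/
def capj (r : ℕ → V) (j : ℕ) : Prop :=
  (outCl D (wj dir r j) \ Gset D dir k r j).card ≤ k - j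

lemma Gset_succ (r : ℕ → V) (j : ℕ) :
    Gset D dir k r (j+1) =
      if capj D dir k r j then Gset D dir k r j
      else Gset D dir k r j ∪ outCl D (wj dir r j) := by
  unfold capj
  conv_lhs => rw [Gset]
  congr

def FirstCap (r : ℕ → V) (j : ℕ) : Prop :=
  j < k ∧ capj D dir k r j ∧ ∀ j' < j, ¬ capj D dir k r j'

lemma FirstCap_unique {r : ℕ → V} {j j' : ℕ}
    (h : FirstCap D dir k r j) (h' : FirstCap D dir k r j') : j = j' := by
  rcases lt_trichotomy j j' with hlt | he | hgt
  · exact absurd h.2.1 (h'.2.2 j hlt)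
  · exact he
  · exact absurd h'.2.1 (h.2.2 j' hgt)

/-- the `m`-th squad target at capture stage `jc` -/
def tgt (r : ℕ → V) (jc m : ℕ) : Option V :=
  ((outCl D (wj dir r jc) \ Gset D dir k r jc).erase (wj dir r jc)).toList[m]?

/-- trajectory of the stage-`j` actor cop -/
def actorPos (r : ℕ → V) (j t : ℕ) : V :=
  if t ≤ 3*j then v₀
  else if dir (r (3*j)) then
    (if t = 3*j+1 then m3a v₀ (r (3*j))
     else if t = 3*j+2 then m3b v₀ (r (3*j)) else r (3*j))
  else
    (if t = 3*j+1 then safe2 D m2 v₀ (r (3*j))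
     else if t = 3*j+2 then safe2 D m2 (safe2 D m2 v₀ (r (3*j))) (r (3*j+1))
     else if good2 D m2 (safe2 D m2 v₀ (r (3*j))) (r (3*j+1)) then r (3*j+1)
       else safe2 D m2 (safe2 D m2 v₀ (r (3*j))) (r (3*j+1)))

/-- trajectory of the `m`-th squad cop for capture stage `jc` -/
def squadPos (r : ℕ → V) (jc m t : ℕ) : V :=
  match tgt D dir k r jc m with
  | none => v₀
  | some b =>
    if dir (r (3*jc)) then
      (if t ≤ 3*jc then v₀ else if t = 3*jc+1 then safe2 D m2 v₀ b
       else if good2 D m2 v₀ b then b else safe2 D m2 v₀ b)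
    else
      (if t ≤ 3*jc+1 then v₀ else if t = 3*jc+2 then safe2 D m2 v₀ b
       else if good2 D m2 v₀ b then b else safe2 D m2 v₀ b)

/-- is cop `i` an active squad member at time `t`? -/
def SqAct (r : ℕ → V) (i t : ℕ) : Prop :=
  ∃ jc, jc < i ∧ FirstCap D dir k r jc ∧
    3*jc + (if dir (r (3*jc)) then 1 else 2) ≤ t

/-- the full cop program -/
def prog (r : ℕ → V) (i t : ℕ) : V :=
  if h : SqAct D dir k r i t then
    squadPos D m2 dir v₀ k r h.choose (i - h.choose - 1) t
  else actorPos D m2 m3a m3b dir v₀ r i t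

section
variable {V : Type} [Fintype V]
variable (D : V → V → Prop) (m2 m3a m3b : V → V → V) (dir : V → Prop) (v₀ : V) (k : ℕ)
variable (r : ℕ → V)

lemma mem_Gset {x : V} : ∀ {J : ℕ}, x ∈ Gset D dir k r J →
    ∃ j, j < J ∧ ¬ capj D dir k r j ∧ x ∈ outCl D (wj dir r j) := by
  intro J
  induction J with
  | zero => intro hx; simp [Gset] at hx
  | succ J ih =>
    rw [Gset_succ]
    split
    · intro hx; obtain ⟨j, hj, h1, h2⟩ := ih hx; exact ⟨j, by omega, h1, h2⟩
    · intro hx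
      rcases Finset.mem_union.1 hx with hx | hx
      · obtain ⟨j, hj, h1, h2⟩ := ih hx; exact ⟨j, by omega, h1, h2⟩
      · exact ⟨J, by omega, by assumption, hx⟩

lemma Gcard : ∀ J, J ≤ k → (∀ j, j < J → ¬ capj D dir k r j) →
    2*k*J + 3*J ≤ 2*(Gset D dir k r J).card + J*J := by
  intro J
  induction J with
  | zero => intro _ _; simp
  | succ J ih =>
    intro hJk hall
    have hc : ¬ capj D dir k r J := hall J (by omega)
    have IH := ih (by omega) (fun j hj => hall j (by omega))
    have hcard : k - J < (outCl D (wj dir r J) \ Gset D dir k r J).card := by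
      unfold capj at hc; omega
    have hunion : (outCl D (wj dir r J) \ Gset D dir k r J).card
        + (Gset D dir k r J).card
        = (Gset D dir k r (J+1)).card := by
      rw [Gset_succ, if_neg hc, Finset.union_comm]
      exact Finset.card_sdiff_add_card _ _
    have hx : (J+1)*(J+1) = J*J + 2*J + 1 := by ring
    have hy : 2*k*(J+1) = 2*k*J + 2*k := by ring
    have hz : k - J + 1 ≤ (outCl D (wj dir r J) \ Gset D dir k r J).card := hcard
    have hJk' : J < k := by omega
    zify at IH hz hunion ⊢
    have hsub : ((k : ℤ) - J) + 1 ≤ ((outCl D (wj dir r J) \ Gset D dir k r J).card : ℤ) := by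
      have := hz
      omega
    push_cast [hx, hy]
    nlinarith [IH, hsub, hunion]

lemma exists_firstcap (hcount : 2 * Fintype.card V < k*k + 3*k) :
    ∃ j, FirstCap D dir k r j := by
  by_cases hex : ∃ j, j < k ∧ capj D dir k r j
  · classical
    have hfk : Nat.find hex < k := (Nat.find_spec hex).1
    refine ⟨Nat.find hex, hfk, (Nat.find_spec hex).2, ?_⟩
    intro j' hj' hcap
    exact (Nat.find_min hex hj') ⟨by omega, hcap⟩
  · exfalso
    push_neg at hex
    have hall : ∀ j, j < k → ¬ capj D dir k r j := hex
    have h1 := Gcard D dir k r k le_rfl hall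
    have h2 : (Gset D dir k r k).card ≤ Fintype.card V := by
      classical
      calc (Gset D dir k r k).card ≤ (Finset.univ : Finset V).card :=
            Finset.card_le_card (Finset.subset_univ _)
        _ = Fintype.card V := Finset.card_univ
    nlinarith [h1, h2, hcount]

end
section
variable {V : Type} [Fintype V]
variable (D : V → V → Prop) (m2 m3a m3b : V → V → V) (dir : V → Prop) (v₀ : V) (k : ℕ)
variable (r : ℕ → V)

lemma actor_v0 {j t : ℕ} (h : t ≤ 3*j) :
    actorPos D m2 m3a m3b dir v₀ r j t = v₀ := if_pos h

lemma squad_v0 {jc m t : ℕ} (h : t ≤ 3*jc) :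
    squadPos D m2 dir v₀ k r jc m t = v₀ := by
  unfold squadPos
  cases tgt D dir k r jc m with
  | none => rfl
  | some b =>
    simp only
    by_cases hd : dir (r (3*jc))
    · rw [if_pos hd, if_pos h]
    · rw [if_neg hd, if_pos (by omega : t ≤ 3*jc+1)]

lemma squad_v0' {jc m t : ℕ} (hd : ¬ dir (r (3*jc))) (h : t ≤ 3*jc+1) :
    squadPos D m2 dir v₀ k r jc m t = v₀ := by
  unfold squadPos
  cases tgt D dir k r jc m with
  | none => rfl
  | some b =>
    simp only
    rw [if_neg hd, if_pos h]

lemma actor_step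
    (Hm3 : ∀ a b : V, (m3a a b = a ∨ D a (m3a a b)) ∧
      (m3b a b = m3a a b ∨ D (m3a a b) (m3b a b)) ∧ (m3b a b = b ∨ D (m3b a b) b))
    (j t : ℕ) :
    actorPos D m2 m3a m3b dir v₀ r j (t+1) = actorPos D m2 m3a m3b dir v₀ r j t ∨
      D (actorPos D m2 m3a m3b dir v₀ r j t) (actorPos D m2 m3a m3b dir v₀ r j (t+1)) := by
  unfold actorPos
  by_cases hd : dir (r (3*j)) <;>
    [simp only [if_pos hd]; skip] <;>
    [skip; simp only [if_neg hd]]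
  · -- dir case
    rcases Nat.lt_or_ge t (3*j) with h | h
    · rw [if_pos (by omega : t+1 ≤ 3*j), if_pos (by omega : t ≤ 3*j)]; exact Or.inl rfl
    rcases eq_or_lt_of_le h with h0 | h1
    · rw [if_pos (by omega : t ≤ 3*j), if_neg (by omega : ¬ (t+1 ≤ 3*j)),
        if_pos (by omega : t+1 = 3*j+1)]
      exact (Hm3 v₀ (r (3*j))).1
    rcases (by omega : t = 3*j+1 ∨ t = 3*j+2 ∨ 3*j+3 ≤ t) with h2 | h2 | h2
    · rw [if_neg (by omega : ¬ (t ≤ 3*j)), if_neg (by omega : ¬ (t+1 ≤ 3*j)),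
        if_pos (by omega : t = 3*j+1), if_neg (by omega : ¬ (t+1 = 3*j+1)),
        if_pos (by omega : t+1 = 3*j+2)]
      exact (Hm3 v₀ (r (3*j))).2.1
    · rw [if_neg (by omega : ¬ (t ≤ 3*j)), if_neg (by omega : ¬ (t+1 ≤ 3*j)),
        if_neg (by omega : ¬ (t = 3*j+1)), if_pos (by omega : t = 3*j+2),
        if_neg (by omega : ¬ (t+1 = 3*j+1)), if_neg (by omega : ¬ (t+1 = 3*j+2))]
      rcases (Hm3 v₀ (r (3*j))).2.2 with h3 | h3
      · exact Or.inl h3.symm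
      · exact Or.inr h3
    · rw [if_neg (by omega : ¬ (t ≤ 3*j)), if_neg (by omega : ¬ (t+1 ≤ 3*j)),
        if_neg (by omega : ¬ (t = 3*j+1)), if_neg (by omega : ¬ (t = 3*j+2)),
        if_neg (by omega : ¬ (t+1 = 3*j+1)), if_neg (by omega : ¬ (t+1 = 3*j+2))]
      exact Or.inl rfl
  · -- non-dir case
    rcases Nat.lt_or_ge t (3*j) with h | h
    · rw [if_pos (by omega : t+1 ≤ 3*j), if_pos (by omega : t ≤ 3*j)]; exact Or.inl rfl
    rcases eq_or_lt_of_le h with h0 | h1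
    · rw [if_pos (by omega : t ≤ 3*j), if_neg (by omega : ¬ (t+1 ≤ 3*j)),
        if_pos (by omega : t+1 = 3*j+1)]
      exact safe2_left D m2 v₀ (r (3*j))
    rcases (by omega : t = 3*j+1 ∨ t = 3*j+2 ∨ 3*j+3 ≤ t) with h2 | h2 | h2
    · rw [if_neg (by omega : ¬ (t ≤ 3*j)), if_neg (by omega : ¬ (t+1 ≤ 3*j)),
        if_pos (by omega : t = 3*j+1), if_neg (by omega : ¬ (t+1 = 3*j+1)),
        if_pos (by omega : t+1 = 3*j+2)]
      exact safe2_left D m2 _ _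
    · rw [if_neg (by omega : ¬ (t ≤ 3*j)), if_neg (by omega : ¬ (t+1 ≤ 3*j)),
        if_neg (by omega : ¬ (t = 3*j+1)), if_pos (by omega : t = 3*j+2),
        if_neg (by omega : ¬ (t+1 = 3*j+1)), if_neg (by omega : ¬ (t+1 = 3*j+2))]
      by_cases hg : good2 D m2 (safe2 D m2 v₀ (r (3*j))) (r (3*j+1))
      · rw [if_pos hg]
        rcases safe2_right hg with h3 | h3
        · exact Or.inl h3.symm
        · exact Or.inr h3
      · rw [if_neg hg]; exact Or.inl rfl
    · rw [if_neg (by omega : ¬ (t ≤ 3*j)), if_neg (by omega : ¬ (t+1 ≤ 3*j)),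
        if_neg (by omega : ¬ (t = 3*j+1)), if_neg (by omega : ¬ (t = 3*j+2)),
        if_neg (by omega : ¬ (t+1 = 3*j+1)), if_neg (by omega : ¬ (t+1 = 3*j+2))]
      exact Or.inl rfl

lemma squad_step (jc m t : ℕ) :
    squadPos D m2 dir v₀ k r jc m (t+1) = squadPos D m2 dir v₀ k r jc m t ∨
      D (squadPos D m2 dir v₀ k r jc m t) (squadPos D m2 dir v₀ k r jc m (t+1)) := by
  unfold squadPos
  cases tgt D dir k r jc m with
  | none => exact Or.inl rfl
  | some b =>
    simp only
    by_cases hd : dir (r (3*jc)) <;> [simp only [if_pos hd]; simp only [if_neg hd]]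
    · rcases (by omega : t+1 ≤ 3*jc ∨ t = 3*jc ∨ t = 3*jc+1 ∨ 3*jc+2 ≤ t)
        with h | h | h | h
      · rw [if_pos h, if_pos (by omega : t ≤ 3*jc)]; exact Or.inl rfl
      · rw [if_pos (by omega : t ≤ 3*jc), if_neg (by omega : ¬ (t+1 ≤ 3*jc)),
          if_pos (by omega : t+1 = 3*jc+1)]
        exact safe2_left D m2 v₀ b
      · rw [if_neg (by omega : ¬ (t ≤ 3*jc)), if_neg (by omega : ¬ (t+1 ≤ 3*jc)),
          if_pos (by omega : t = 3*jc+1), if_neg (by omega : ¬ (t+1 = 3*jc+1))]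
        by_cases hg : good2 D m2 v₀ b
        · rw [if_pos hg]
          rcases safe2_right hg with h3 | h3
          · exact Or.inl h3.symm
          · exact Or.inr h3
        · rw [if_neg hg]; exact Or.inl rfl
      · rw [if_neg (by omega : ¬ (t ≤ 3*jc)), if_neg (by omega : ¬ (t+1 ≤ 3*jc)),
          if_neg (by omega : ¬ (t = 3*jc+1)), if_neg (by omega : ¬ (t+1 = 3*jc+1))]
        exact Or.inl rfl
    · rcases (by omega : t+1 ≤ 3*jc+1 ∨ t = 3*jc+1 ∨ t = 3*jc+2 ∨ 3*jc+3 ≤ t)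
        with h | h | h | h
      · rw [if_pos h, if_pos (by omega : t ≤ 3*jc+1)]; exact Or.inl rfl
      · rw [if_pos (by omega : t ≤ 3*jc+1), if_neg (by omega : ¬ (t+1 ≤ 3*jc+1)),
          if_pos (by omega : t+1 = 3*jc+2)]
        exact safe2_left D m2 v₀ b
      · rw [if_neg (by omega : ¬ (t ≤ 3*jc+1)), if_neg (by omega : ¬ (t+1 ≤ 3*jc+1)),
          if_pos (by omega : t = 3*jc+2), if_neg (by omega : ¬ (t+1 = 3*jc+2))]
        by_cases hg : good2 D m2 v₀ b
        · rw [if_pos hg]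
          rcases safe2_right hg with h3 | h3
          · exact Or.inl h3.symm
          · exact Or.inr h3
        · rw [if_neg hg]; exact Or.inl rfl
      · rw [if_neg (by omega : ¬ (t ≤ 3*jc+1)), if_neg (by omega : ¬ (t+1 ≤ 3*jc+1)),
          if_neg (by omega : ¬ (t = 3*jc+2)), if_neg (by omega : ¬ (t+1 = 3*jc+2))]
        exact Or.inl rfl

lemma prog_eq_squad {jc i t : ℕ} (hfc : FirstCap D dir k r jc) (hji : jc < i)
    (hto : 3*jc + (if dir (r (3*jc)) then 1 else 2) ≤ t) :
    prog D m2 m3a m3b dir v₀ k r i t = squadPos D m2 dir v₀ k r jc (i - jc - 1) t := by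
  have hs : SqAct D dir k r i t := ⟨jc, hji, hfc, hto⟩
  unfold prog
  rw [dif_pos hs]
  have hspec := hs.choose_spec
  have : hs.choose = jc := FirstCap_unique D dir k hspec.2.1 hfc
  rw [this]

lemma prog_eq_actor {i t : ℕ} (hns : ¬ SqAct D dir k r i t) :
    prog D m2 m3a m3b dir v₀ k r i t = actorPos D m2 m3a m3b dir v₀ r i t :=
  dif_neg hns

lemma prog_zero (i : ℕ) : prog D m2 m3a m3b dir v₀ k r i 0 = v₀ := by
  have hns : ¬ SqAct D dir k r i 0 := by
    rintro ⟨jc, _, _, hle⟩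
    have : 3*jc + 1 ≤ 0 := le_trans (by split <;> omega) hle
    omega
  rw [prog_eq_actor D m2 m3a m3b dir v₀ k r hns]
  exact actor_v0 D m2 m3a m3b dir v₀ r (by omega)

lemma prog_step
    (Hm3 : ∀ a b : V, (m3a a b = a ∨ D a (m3a a b)) ∧
      (m3b a b = m3a a b ∨ D (m3a a b) (m3b a b)) ∧ (m3b a b = b ∨ D (m3b a b) b))
    (i t : ℕ) :
    prog D m2 m3a m3b dir v₀ k r i (t+1) = prog D m2 m3a m3b dir v₀ k r i t ∨
      D (prog D m2 m3a m3b dir v₀ k r i t) (prog D m2 m3a m3b dir v₀ k r i (t+1)) := by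
  by_cases h1 : SqAct D dir k r i t
  · obtain ⟨jc, hji, hfc, hto⟩ := h1
    rw [prog_eq_squad D m2 m3a m3b dir v₀ k r hfc hji hto,
      prog_eq_squad D m2 m3a m3b dir v₀ k r hfc hji (by omega)]
    exact squad_step D m2 dir v₀ k r jc (i - jc - 1) (t+1-1)
  · by_cases h2 : SqAct D dir k r i (t+1)
    · obtain ⟨jc, hji, hfc, hto⟩ := h2
      have hnt : ¬ (3*jc + (if dir (r (3*jc)) then 1 else 2) ≤ t) :=
        fun hh => h1 ⟨jc, hji, hfc, hh⟩
      have hts : t+1 = 3*jc + (if dir (r (3*jc)) then 1 else 2) := by omega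
      rw [prog_eq_actor D m2 m3a m3b dir v₀ k r h1,
        prog_eq_squad D m2 m3a m3b dir v₀ k r hfc hji hto,
        actor_v0 D m2 m3a m3b dir v₀ r (by
          have : 3*jc + (if dir (r (3*jc)) then 1 else 2) ≤ 3*jc + 2 := by split <;> omega
          omega : t ≤ 3*i)]
      unfold squadPos
      cases tgt D dir k r jc (i - jc - 1) with
      | none => exact Or.inl rfl
      | some b =>
        simp only
        by_cases hd : dir (r (3*jc)) <;> [simp only [if_pos hd]; simp only [if_neg hd]]
        · rw [if_pos hd] at hts
          rw [if_neg (by omega : ¬ (t+1 ≤ 3*jc)), if_pos (by omega : t+1 = 3*jc+1)]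
          exact safe2_left D m2 v₀ b
        · rw [if_neg hd] at hts
          rw [if_neg (by omega : ¬ (t+1 ≤ 3*jc+1)), if_pos (by omega : t+1 = 3*jc+2)]
          exact safe2_left D m2 v₀ b
    · rw [prog_eq_actor D m2 m3a m3b dir v₀ k r h1,
        prog_eq_actor D m2 m3a m3b dir v₀ k r h2]
      exact actor_step D m2 m3a m3b dir v₀ r Hm3 i t

end
section
variable {V : Type} [Fintype V]
variable (D : V → V → Prop) (m2 m3a m3b : V → V → V) (dir : V → Prop) (v₀ : V) (k : ℕ)
variable (r₁ r₂ : ℕ → V)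

lemma Gset_congr : ∀ J : ℕ, (∀ s < 3*J, r₁ s = r₂ s) →
    Gset D dir k r₁ J = Gset D dir k r₂ J := by
  intro J
  induction J with
  | zero => intro _; rfl
  | succ J ih =>
    intro h
    have hw : wj dir r₁ J = wj dir r₂ J := by
      unfold wj; rw [h (3*J) (by omega), h (3*J+1) (by omega)]
    have hg : Gset D dir k r₁ J = Gset D dir k r₂ J := ih (fun s hs => h s (by omega))
    rw [Gset_succ, Gset_succ]
    unfold capj
    rw [hw, hg]

lemma capj_congr {j : ℕ} (h : ∀ s < 3*j+2, r₁ s = r₂ s) :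
    capj D dir k r₁ j ↔ capj D dir k r₂ j := by
  unfold capj
  have hw : wj dir r₁ j = wj dir r₂ j := by
    unfold wj; rw [h (3*j) (by omega), h (3*j+1) (by omega)]
  rw [hw, Gset_congr D dir k r₁ r₂ j (fun s hs => h s (by omega))]

lemma capj_congr' {j : ℕ} (hd : dir (r₁ (3*j))) (h : ∀ s < 3*j+1, r₁ s = r₂ s) :
    capj D dir k r₁ j ↔ capj D dir k r₂ j := by
  unfold capj
  have e0 : r₁ (3*j) = r₂ (3*j) := h _ (by omega)
  have hw : wj dir r₁ j = wj dir r₂ j := by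
    unfold wj; rw [← e0, if_pos hd, if_pos hd]
  rw [hw, Gset_congr D dir k r₁ r₂ j (fun s hs => h s (by omega))]

lemma FirstCap_congr {j : ℕ} (h : ∀ s < 3*j+2, r₁ s = r₂ s) :
    FirstCap D dir k r₁ j ↔ FirstCap D dir k r₂ j := by
  unfold FirstCap
  have hj := capj_congr D dir k r₁ r₂ (j := j) h
  have hj' : ∀ j' < j, (capj D dir k r₁ j' ↔ capj D dir k r₂ j') := fun j' hlt =>
    capj_congr D dir k r₁ r₂ (fun s hs => h s (by omega))
  constructor <;> rintro ⟨a, b, c⟩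
  · exact ⟨a, hj.mp b, fun j' hlt hc => c j' hlt ((hj' j' hlt).mpr hc)⟩
  · exact ⟨a, hj.mpr b, fun j' hlt hc => c j' hlt ((hj' j' hlt).mp hc)⟩

lemma FirstCap_congr' {j : ℕ} (hd : dir (r₁ (3*j))) (h : ∀ s < 3*j+1, r₁ s = r₂ s) :
    FirstCap D dir k r₁ j ↔ FirstCap D dir k r₂ j := by
  unfold FirstCap
  have hj := capj_congr' D dir k r₁ r₂ (j := j) hd h
  have hj' : ∀ j' < j, (capj D dir k r₁ j' ↔ capj D dir k r₂ j') := fun j' hlt =>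
    capj_congr D dir k r₁ r₂ (fun s hs => h s (by omega))
  constructor <;> rintro ⟨a, b, c⟩
  · exact ⟨a, hj.mp b, fun j' hlt hc => c j' hlt ((hj' j' hlt).mpr hc)⟩
  · exact ⟨a, hj.mpr b, fun j' hlt hc => c j' hlt ((hj' j' hlt).mp hc)⟩

lemma sq_transfer {t jc : ℕ} (h : ∀ s < t, r₁ s = r₂ s)
    (hfc : FirstCap D dir k r₁ jc)
    (hto : 3*jc + (if dir (r₁ (3*jc)) then 1 else 2) ≤ t) :
    FirstCap D dir k r₂ jc ∧ 3*jc + (if dir (r₂ (3*jc)) then 1 else 2) ≤ t := by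
  have hle : 3*jc+1 ≤ t := le_trans (by split <;> omega) hto
  have e0 : r₁ (3*jc) = r₂ (3*jc) := h _ (by omega)
  by_cases hd : dir (r₁ (3*jc))
  · have hto' : 3*jc+1 ≤ t := by rw [if_pos hd] at hto; exact hto
    refine ⟨(FirstCap_congr' D dir k r₁ r₂ hd (fun s hs => h s (by omega))).mp hfc, ?_⟩
    rw [← e0, if_pos hd]; exact hto'
  · have hto' : 3*jc+2 ≤ t := by rw [if_neg hd] at hto; exact hto
    refine ⟨(FirstCap_congr D dir k r₁ r₂ (fun s hs => h s (by omega))).mp hfc, ?_⟩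
    rw [← e0, if_neg hd]; exact hto'

lemma SqAct_congr {i t : ℕ} (h : ∀ s < t, r₁ s = r₂ s) :
    SqAct D dir k r₁ i t ↔ SqAct D dir k r₂ i t := by
  constructor
  · rintro ⟨jc, hji, hfc, hto⟩
    obtain ⟨a, b⟩ := sq_transfer D dir k r₁ r₂ h hfc hto
    exact ⟨jc, hji, a, b⟩
  · rintro ⟨jc, hji, hfc, hto⟩
    obtain ⟨a, b⟩ := sq_transfer D dir k r₂ r₁ (fun s hs => (h s hs).symm) hfc hto
    exact ⟨jc, hji, a, b⟩

lemma actor_congr {t : ℕ} (h : ∀ s < t, r₁ s = r₂ s) (i : ℕ) :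
    actorPos D m2 m3a m3b dir v₀ r₁ i t = actorPos D m2 m3a m3b dir v₀ r₂ i t := by
  unfold actorPos
  by_cases h0 : t ≤ 3*i
  · rw [if_pos h0, if_pos h0]
  · have e0 : r₁ (3*i) = r₂ (3*i) := h _ (by omega)
    rw [if_neg h0, if_neg h0, ← e0]
    by_cases hd : dir (r₁ (3*i))
    · rw [if_pos hd, if_pos hd]
    · rw [if_neg hd, if_neg hd]
      by_cases ht1 : t = 3*i+1
      · rw [if_pos ht1, if_pos ht1]
      · have e1 : r₁ (3*i+1) = r₂ (3*i+1) := h _ (by omega)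
        rw [← e1]

lemma squad_congr {t jc : ℕ} (h : ∀ s < t, r₁ s = r₂ s)
    (hact : 3*jc + (if dir (r₁ (3*jc)) then 1 else 2) ≤ t) (m : ℕ) :
    squadPos D m2 dir v₀ k r₁ jc m t = squadPos D m2 dir v₀ k r₂ jc m t := by
  have hle : 3*jc+1 ≤ t := le_trans (by split <;> omega) hact
  have e0 : r₁ (3*jc) = r₂ (3*jc) := h _ (by omega)
  have hg : Gset D dir k r₁ jc = Gset D dir k r₂ jc :=
    Gset_congr D dir k r₁ r₂ jc (fun s hs => h s (by omega))
  by_cases hd : dir (r₁ (3*jc))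
  · have hw : wj dir r₁ jc = wj dir r₂ jc := by
      unfold wj; rw [← e0, if_pos hd, if_pos hd]
    unfold squadPos tgt
    rw [hw, hg, ← e0]
  · have hto : 3*jc+2 ≤ t := by rw [if_neg hd] at hact; exact hact
    have e1 : r₁ (3*jc+1) = r₂ (3*jc+1) := h _ (by omega)
    have hw : wj dir r₁ jc = wj dir r₂ jc := by
      unfold wj; rw [← e0, ← e1]
    unfold squadPos tgt
    rw [hw, hg, ← e0]

lemma prog_congr {t : ℕ} (h : ∀ s < t, r₁ s = r₂ s) (i : ℕ) :
    prog D m2 m3a m3b dir v₀ k r₁ i t = prog D m2 m3a m3b dir v₀ k r₂ i t := by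
  by_cases h1 : SqAct D dir k r₁ i t
  · obtain ⟨jc, hji, hfc, hto⟩ := h1
    obtain ⟨hfc₂, hto₂⟩ := sq_transfer D dir k r₁ r₂ h hfc hto
    rw [prog_eq_squad D m2 m3a m3b dir v₀ k r₁ hfc hji hto,
      prog_eq_squad D m2 m3a m3b dir v₀ k r₂ hfc₂ hji hto₂]
    exact squad_congr D m2 dir v₀ k r₁ r₂ h hto _
  · have h2 : ¬ SqAct D dir k r₂ i t := fun hs =>
      h1 ((SqAct_congr D dir k r₁ r₂ h).mpr hs)
    rw [prog_eq_actor D m2 m3a m3b dir v₀ k r₁ h1,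
      prog_eq_actor D m2 m3a m3b dir v₀ k r₂ h2]
    exact actor_congr D m2 m3a m3b dir v₀ r₁ r₂ h i

end
section
variable {V : Type} [Fintype V]
variable (D : V → V → Prop) (m2 m3a m3b : V → V → V) (dir : V → Prop) (v₀ : V) (k : ℕ)

lemma squad_eval {r : ℕ → V} {jc m : ℕ} {b : V} (hm : tgt D dir k r jc m = some b) (t : ℕ) :
    squadPos D m2 dir v₀ k r jc m t =
      (if dir (r (3*jc)) then
        (if t ≤ 3*jc then v₀ else if t = 3*jc+1 then safe2 D m2 v₀ b
         else if good2 D m2 v₀ b then b else safe2 D m2 v₀ b)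
      else
        (if t ≤ 3*jc+1 then v₀ else if t = 3*jc+2 then safe2 D m2 v₀ b
         else if good2 D m2 v₀ b then b else safe2 D m2 v₀ b)) := by
  unfold squadPos
  rw [hm]

lemma contradiction_lemma
    (Hm3 : ∀ a b : V, (m3a a b = a ∨ D a (m3a a b)) ∧
      (m3b a b = m3a a b ∨ D (m3a a b) (m3b a b)) ∧ (m3b a b = b ∨ D (m3b a b) b))
    (H1 : ∀ v u : V, dir v → D v u → good2 D m2 v₀ u)
    (H2 : ∀ v : V, ¬ dir v → v ≠ v₀ → ¬ D v₀ v → good2 D m2 v₀ v)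
    (H3 : ∀ v u : V, ¬ dir v → v ≠ v₀ → ¬ D v₀ v → D v u → good2 D m2 (m2 v₀ v) u)
    (H4 : ∀ v u u' : V, ¬ dir v → D v u → D u u' → good2 D m2 v₀ u')
    (hcount : 2 * Fintype.card V < k*k + 3*k)
    (r : ℕ → V)
    (hrstep : ∀ t, r (t + 1) = r t ∨ D (r t) (r (t + 1)))
    (hstar : ∀ (t : ℕ) (i : ℕ), i < k →
      ¬ (prog D m2 m3a m3b dir v₀ k r i t = r t ∨
          D (prog D m2 m3a m3b dir v₀ k r i t) (r t))) :
    False := by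
  obtain ⟨J, hfcJ'⟩ := exists_firstcap D dir k r hcount
  obtain ⟨hJk, hcapJ, hmin⟩ := hfcJ'
  have hfcJ : FirstCap D dir k r J := ⟨hJk, hcapJ, hmin⟩
  have hnact : ∀ (i : ℕ), i ≤ J → ∀ t, ¬ SqAct D dir k r i t := by
    rintro i hiJ t ⟨jc, hji, hfc, _⟩
    have : jc = J := FirstCap_unique D dir k hfc hfcJ
    omega
  have hprogA : ∀ (i : ℕ), i ≤ J → ∀ t,
      prog D m2 m3a m3b dir v₀ k r i t = actorPos D m2 m3a m3b dir v₀ r i t :=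
    fun i hi t => prog_eq_actor D m2 m3a m3b dir v₀ k r (hnact i hi t)
  have hv0 : ∀ j, j ≤ J → (r (3*j) ≠ v₀ ∧ ¬ D v₀ (r (3*j))) := by
    intro j hj
    have hs := hstar (3*j) j (by omega)
    rw [hprogA j hj (3*j), actor_v0 D m2 m3a m3b dir v₀ r (le_refl (3*j))] at hs
    push_neg at hs
    exact ⟨fun he => hs.1 he.symm, hs.2⟩
  have hfacts : ∀ j, j ≤ J → ¬ dir (r (3*j)) →
      good2 D m2 v₀ (r (3*j)) ∧ r (3*j+1) ≠ r (3*j) ∧ D (r (3*j)) (r (3*j+1)) ∧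
        good2 D m2 (m2 v₀ (r (3*j))) (r (3*j+1)) := by
    intro j hj hd
    obtain ⟨hne0, hnD0⟩ := hv0 j hj
    have hg1 : good2 D m2 v₀ (r (3*j)) := H2 _ hd hne0 hnD0
    have hpos1 : prog D m2 m3a m3b dir v₀ k r j (3*j+1) = m2 v₀ (r (3*j)) := by
      rw [hprogA j hj (3*j+1)]
      unfold actorPos
      rw [if_neg (by omega : ¬ (3*j+1 ≤ 3*j)), if_neg hd, if_pos rfl]
      exact safe2_eq hg1
    have hs := hstar (3*j+1) j (by omega)
    rw [hpos1] at hs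
    push_neg at hs
    have hne1 : r (3*j+1) ≠ r (3*j) := by
      intro he
      rcases hg1.2 with h | h
      · exact hs.1 (by rw [h, ← he])
      · exact hs.2 (by rw [he]; exact h)
    have hDvu : D (r (3*j)) (r (3*j+1)) := (hrstep (3*j)).resolve_left hne1
    exact ⟨hg1, hne1, hDvu, H3 _ _ hd hne0 hnD0 hDvu⟩
  have hparked : ∀ j, j ≤ J → ∀ t, 3*j+3 ≤ t →
      prog D m2 m3a m3b dir v₀ k r j t = wj dir r j := by
    intro j hj t ht
    rw [hprogA j hj t]
    unfold actorPos wj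
    by_cases hd : dir (r (3*j))
    · rw [if_neg (by omega : ¬ (t ≤ 3*j)), if_pos hd, if_pos hd,
        if_neg (by omega : ¬ (t = 3*j+1)), if_neg (by omega : ¬ (t = 3*j+2))]
    · obtain ⟨hg1, _, _, hg2⟩ := hfacts j hj hd
      rw [if_neg (by omega : ¬ (t ≤ 3*j)), if_neg hd, if_neg hd,
        if_neg (by omega : ¬ (t = 3*j+1)), if_neg (by omega : ¬ (t = 3*j+2))]
      rw [safe2_eq hg1, if_pos hg2]
  have hguard : ∀ t, 3*J ≤ t → r t ∉ Gset D dir k r J := by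
    intro t ht hx
    obtain ⟨j, hjJ, _, hmem⟩ := mem_Gset D dir k r hx
    have hs := hstar t j (by omega)
    rw [hparked j (by omega) t (by omega)] at hs
    rcases mem_outCl.1 hmem with he | ha
    · exact hs (Or.inl he.symm)
    · exact hs (Or.inr ha)
  unfold capj at hcapJ
  have hwB : wj dir r J ∈ outCl D (wj dir r J) \ Gset D dir k r J := by
    rw [Finset.mem_sdiff]
    refine ⟨mem_outCl.2 (Or.inl rfl), ?_⟩
    unfold wj
    by_cases hd : dir (r (3*J))
    · rw [if_pos hd]; exact hguard (3*J) le_rfl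
    · rw [if_neg hd]; exact hguard (3*J+1) (by omega)
  set B := outCl D (wj dir r J) \ Gset D dir k r J with hB
  set E := B.erase (wj dir r J) with hEdef
  have hEcard : E.card + 1 = B.card := Finset.card_erase_add_one hwB
  -- squad coverage of any vertex of `E`
  have hcover : ∀ b ∈ E,
      ((dir (r (3*J)) → r (3*J+1) ≠ b ∧ r (3*J+2) ≠ b) ∧
       (¬ dir (r (3*J)) → r (3*J+2) ≠ b)) := by
    intro b hb
    have hbE := Finset.mem_erase.1 hb
    have hDwb : D (wj dir r J) b := by
      rcases mem_outCl.1 (Finset.mem_sdiff.1 hbE.2).1 with he | ha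
      · exact absurd he hbE.1
      · exact ha
    have hgb : good2 D m2 v₀ b := by
      by_cases hd : dir (r (3*J))
      · refine H1 (r (3*J)) b hd ?_
        have : wj dir r J = r (3*J) := if_pos hd
        rw [← this]; exact hDwb
      · obtain ⟨_, _, hDvu, _⟩ := hfacts J le_rfl hd
        refine H4 (r (3*J)) (r (3*J+1)) b hd hDvu ?_
        have : wj dir r J = r (3*J+1) := if_neg hd
        rw [← this]; exact hDwb
    obtain ⟨m, hm⟩ := List.mem_iff_getElem?.1 (Finset.mem_toList.2 hb)
    have hmlen : m < E.toList.length := by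
      by_contra hh
      push_neg at hh
      rw [List.getElem?_eq_none hh] at hm
      cases hm
    have hmE : m < E.card := by rw [← Finset.length_toList]; exact hmlen
    have hik : J + 1 + m < k := by omega
    have htgt : tgt D dir k r J m = some b := by
      unfold tgt; rw [← hB, ← hEdef]; exact hm
    have hsq : ∀ t, 3*J + (if dir (r (3*J)) then 1 else 2) ≤ t →
        prog D m2 m3a m3b dir v₀ k r (J+1+m) t = squadPos D m2 dir v₀ k r J m t := by
      intro t ht
      rw [prog_eq_squad D m2 m3a m3b dir v₀ k r hfcJ (by omega) ht,
        show J+1+m-J-1 = m by omega]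
    constructor
    · intro hd
      have h1 : prog D m2 m3a m3b dir v₀ k r (J+1+m) (3*J+1) = safe2 D m2 v₀ b := by
        rw [hsq (3*J+1) (by rw [if_pos hd]), squad_eval D m2 dir v₀ k htgt,
          if_pos hd, if_neg (by omega : ¬ (3*J+1 ≤ 3*J)), if_pos rfl]
      have h2 : prog D m2 m3a m3b dir v₀ k r (J+1+m) (3*J+2) = b := by
        rw [hsq (3*J+2) (by rw [if_pos hd]; omega), squad_eval D m2 dir v₀ k htgt,
          if_pos hd, if_neg (by omega : ¬ (3*J+2 ≤ 3*J)),
          if_neg (by omega : ¬ (3*J+2 = 3*J+1)), if_pos hgb]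
      have hs1 := hstar (3*J+1) (J+1+m) hik
      have hs2 := hstar (3*J+2) (J+1+m) hik
      rw [h1] at hs1; rw [h2] at hs2
      push_neg at hs1 hs2
      constructor
      · intro he
        rcases safe2_right hgb with hx | hx
        · exact hs1.1 (by rw [hx, he])
        · exact hs1.2 (by rw [he]; exact hx)
      · intro he; exact hs2.1 he.symm
    · intro hd
      have h2 : prog D m2 m3a m3b dir v₀ k r (J+1+m) (3*J+2) = safe2 D m2 v₀ b := by
        rw [hsq (3*J+2) (by rw [if_neg hd]), squad_eval D m2 dir v₀ k htgt,
          if_neg hd, if_neg (by omega : ¬ (3*J+2 ≤ 3*J+1)), if_pos rfl]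
      have hs2 := hstar (3*J+2) (J+1+m) hik
      rw [h2] at hs2; push_neg at hs2
      intro he
      rcases safe2_right hgb with hx | hx
      · exact hs2.1 (by rw [hx, he])
      · exact hs2.2 (by rw [he]; exact hx)
  -- final case analysis
  by_cases hd : dir (r (3*J))
  · have hw : wj dir r J = r (3*J) := if_pos hd
    have hpA : prog D m2 m3a m3b dir v₀ k r J (3*J+2) = m3b v₀ (r (3*J)) := by
      rw [hprogA J le_rfl]
      unfold actorPos
      rw [if_neg (by omega : ¬ (3*J+2 ≤ 3*J)), if_pos hd,
        if_neg (by omega : ¬ (3*J+2 = 3*J+1)), if_pos rfl]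
    have hsA := hstar (3*J+2) J (by omega)
    rw [hpA] at hsA; push_neg at hsA
    have hcovV : r (3*J+2) ≠ r (3*J) := by
      intro he
      rcases (Hm3 v₀ (r (3*J))).2.2 with hx | hx
      · exact hsA.1 (by rw [hx, he])
      · exact hsA.2 (by rw [he]; exact hx)
    have hmemB : ∀ t, 3*J ≤ t → (r t = r (3*J) ∨ D (r (3*J)) (r t)) →
        r t = r (3*J) ∨ r t ∈ E := by
      intro t ht hor
      have hmB : r t ∈ B := by
        rw [hB, Finset.mem_sdiff]
        exact ⟨mem_outCl.2 (by rw [hw]; exact hor), hguard t ht⟩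
      rcases eq_or_ne (r t) (wj dir r J) with he | hne
      · exact Or.inl (by rw [he, hw])
      · exact Or.inr (Finset.mem_erase.2 ⟨hne, hmB⟩)
    have hs1 : r (3*J+1) = r (3*J) := by
      rcases hmemB (3*J+1) (by omega) (hrstep (3*J)) with he | hE1
      · exact he
      · exact absurd rfl ((hcover _ hE1).1 hd).1
    rcases hrstep (3*J+1) with he | hD2
    · exact hcovV (by rw [he, hs1])
    · rcases hmemB (3*J+2) (by omega) (Or.inr (by rw [← hs1]; exact hD2)) with he | hE2
      · exact hcovV he
      · exact absurd rfl ((hcover _ hE2).1 hd).2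
  · have hw : wj dir r J = r (3*J+1) := if_neg hd
    obtain ⟨hg1, hne1, hDvu, hg2⟩ := hfacts J le_rfl hd
    have hpA : prog D m2 m3a m3b dir v₀ k r J (3*J+2)
        = m2 (m2 v₀ (r (3*J))) (r (3*J+1)) := by
      rw [hprogA J le_rfl]
      unfold actorPos
      rw [if_neg (by omega : ¬ (3*J+2 ≤ 3*J)), if_neg hd,
        if_neg (by omega : ¬ (3*J+2 = 3*J+1)), if_pos rfl, safe2_eq hg1, safe2_eq hg2]
    have hsA := hstar (3*J+2) J (by omega)
    rw [hpA] at hsA; push_neg at hsA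
    have hcovU : r (3*J+2) ≠ r (3*J+1) := by
      intro he
      rcases hg2.2 with hx | hx
      · exact hsA.1 (by rw [hx, he])
      · exact hsA.2 (by rw [he]; exact hx)
    have hmemB : ∀ t, 3*J+1 ≤ t → (r t = r (3*J+1) ∨ D (r (3*J+1)) (r t)) →
        r t = r (3*J+1) ∨ r t ∈ E := by
      intro t ht hor
      have hmB : r t ∈ B := by
        rw [hB, Finset.mem_sdiff]
        exact ⟨mem_outCl.2 (by rw [hw]; exact hor), hguard t (by omega)⟩
      rcases eq_or_ne (r t) (wj dir r J) with he | hne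
      · exact Or.inl (by rw [he, hw])
      · exact Or.inr (Finset.mem_erase.2 ⟨hne, hmB⟩)
    rcases hmemB (3*J+2) (by omega) (hrstep (3*J+1)) with he | hE2
    · exact hcovU he
    · exact absurd rfl ((hcover _ hE2).2 hd)

end
section
variable {V : Type} [Fintype V]
variable (D : V → V → Prop) (m2 m3a m3b : V → V → V) (dir : V → Prop) (v₀ : V) (k : ℕ)

/-- the cops' move function -/
def copMove (hist : List ((Fin k → V) × V)) (i : Fin k) : V :=
  if ((hist.map Prod.fst).getD (hist.length - 1) (fun _ => v₀)) i
        = (hist.map Prod.snd).getD (hist.length - 1) v₀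
      ∨ D (((hist.map Prod.fst).getD (hist.length - 1) (fun _ => v₀)) i)
          ((hist.map Prod.snd).getD (hist.length - 1) v₀)
  then (hist.map Prod.snd).getD (hist.length - 1) v₀
  else if ((hist.map Prod.fst).getD (hist.length - 1) (fun _ => v₀)) i
      = prog D m2 m3a m3b dir v₀ k (fun s => (hist.map Prod.snd).getD s v₀) i
          (hist.length - 1)
    then prog D m2 m3a m3b dir v₀ k (fun s => (hist.map Prod.snd).getD s v₀) i
          ((hist.length - 1)+1)
  else ((hist.map Prod.fst).getD (hist.length - 1) (fun _ => v₀)) i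

lemma getD_ofFn {α : Type*} {n : ℕ} (f : Fin n → α) (s : ℕ) (d : α) :
    (List.ofFn f).getD s d = if h : s < n then f ⟨s, h⟩ else d := by
  rw [List.getD_eq_getElem?_getD, List.getElem?_ofFn]
  split
  · rfl
  · rfl

lemma copMove_spec (r : ℕ → V) (c : ℕ → Fin k → V) (t : ℕ) (i : Fin k) :
    copMove D m2 m3a m3b dir v₀ k
        (List.ofFn fun j : Fin (t+1) => (c j.val, r j.val)) i =
      (if c t i = r t ∨ D (c t i) (r t) then r t
       else if c t i = prog D m2 m3a m3b dir v₀ k r i t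
        then prog D m2 m3a m3b dir v₀ k r i (t+1)
       else c t i) := by
  have hlen : (List.ofFn fun j : Fin (t+1) => (c j.val, r j.val)).length = t+1 :=
    List.length_ofFn
  have hmap2 : (List.ofFn fun j : Fin (t+1) => (c j.val, r j.val)).map Prod.snd
      = List.ofFn (fun j : Fin (t+1) => r j.val) := by
    rw [List.map_ofFn]; rfl
  have hmap1 : (List.ofFn fun j : Fin (t+1) => (c j.val, r j.val)).map Prod.fst
      = List.ofFn (fun j : Fin (t+1) => c j.val) := by
    rw [List.map_ofFn]; rfl
  have hρ : ∀ s, s ≤ t →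
      ((List.ofFn fun j : Fin (t+1) => (c j.val, r j.val)).map Prod.snd).getD s v₀
        = r s := by
    intro s hs
    rw [hmap2, getD_ofFn]
    rw [dif_pos (by omega : s < t+1)]
  have hprog1 : prog D m2 m3a m3b dir v₀ k
      (fun s => ((List.ofFn fun j : Fin (t+1) => (c j.val, r j.val)).map Prod.snd).getD s v₀)
      i t = prog D m2 m3a m3b dir v₀ k r i t :=
    prog_congr D m2 m3a m3b dir v₀ k _ r (fun s hs => hρ s (by omega)) i
  have hprog2 : prog D m2 m3a m3b dir v₀ k
      (fun s => ((List.ofFn fun j : Fin (t+1) => (c j.val, r j.val)).map Prod.snd).getD s v₀)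
      i (t+1) = prog D m2 m3a m3b dir v₀ k r i (t+1) :=
    prog_congr D m2 m3a m3b dir v₀ k _ r (fun s hs => hρ s (by omega)) i
  have hct : ((List.ofFn fun j : Fin (t+1) => (c j.val, r j.val)).map Prod.fst).getD t
      (fun _ => v₀) = c t := by
    rw [hmap1, getD_ofFn, dif_pos (by omega : t < t+1)]
  unfold copMove
  rw [hlen]
  simp only [Nat.add_sub_cancel]
  rw [hct, hρ t le_rfl, hprog1, hprog2]

/-- master strategy theorem -/
theorem master
    (Hm3 : ∀ a b : V, (m3a a b = a ∨ D a (m3a a b)) ∧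
      (m3b a b = m3a a b ∨ D (m3a a b) (m3b a b)) ∧ (m3b a b = b ∨ D (m3b a b) b))
    (H1 : ∀ v u : V, dir v → D v u → good2 D m2 v₀ u)
    (H2 : ∀ v : V, ¬ dir v → v ≠ v₀ → ¬ D v₀ v → good2 D m2 v₀ v)
    (H3 : ∀ v u : V, ¬ dir v → v ≠ v₀ → ¬ D v₀ v → D v u → good2 D m2 (m2 v₀ v) u)
    (H4 : ∀ v u u' : V, ¬ dir v → D v u → D u u' → good2 D m2 v₀ u')
    (hcount : 2 * Fintype.card V < k*k + 3*k) :
    dirCopsCanWin D Set.univ D k := by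
  refine ⟨fun _ => v₀, copMove D m2 m3a m3b dir v₀ k, ?_⟩
  intro r _ hrstep c hc0 hcrec
  have hstep : ∀ t (i : Fin k), c (t+1) i =
      (if c t i = r t ∨ D (c t i) (r t) then r t
       else if c t i = prog D m2 m3a m3b dir v₀ k r i.val t
        then prog D m2 m3a m3b dir v₀ k r i.val (t+1)
       else c t i) := by
    intro t i
    rw [hcrec t]
    exact copMove_spec D m2 m3a m3b dir v₀ k r c t i
  constructor
  · intro t i
    rw [hstep t i]
    split
    · rename_i hcat
      rcases hcat with h | h
      · exact Or.inl h.symm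
      · exact Or.inr h
    · split
      · rename_i hne heq
        rw [heq]
        exact prog_step D m2 m3a m3b dir v₀ k r Hm3 i.val t
      · exact Or.inl rfl
  · by_contra hno
    push_neg at hno
    have hAB : ∀ t (i : Fin k), ¬ (c t i = r t ∨ D (c t i) (r t)) := by
      intro t i hor
      exact hno t i (by rw [hstep t i, if_pos hor])
    have hcp : ∀ t (i : Fin k), c t i = prog D m2 m3a m3b dir v₀ k r i.val t := by
      intro t
      induction t with
      | zero =>
        intro i
        rw [hc0]
        exact (prog_zero D m2 m3a m3b dir v₀ k r i.val).symm
      | succ t ih =>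
        intro i
        rw [hstep t i, if_neg (hAB t i), if_pos (ih i)]
    have hstar : ∀ (t : ℕ) (i : ℕ), i < k →
        ¬ (prog D m2 m3a m3b dir v₀ k r i t = r t ∨
            D (prog D m2 m3a m3b dir v₀ k r i t) (r t)) := by
      intro t i hik
      have := hAB t ⟨i, hik⟩
      rw [hcp t ⟨i, hik⟩] at this
      exact this
    exact contradiction_lemma D m2 m3a m3b dir v₀ k Hm3 H1 H2 H3 H4 hcount r hrstep hstar

end
section
variable {V : Type} [Fintype V]

def P2 (D : V → V → Prop) (a b : V) : Prop :=
  ∃ x, (x = a ∨ D a x) ∧ (x = b ∨ D x b)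

def m2c (D : V → V → Prop) (a b : V) : V :=
  if h : P2 D a b then h.choose else a

lemma good2_m2c {D : V → V → Prop} {a b : V} (h : P2 D a b) : good2 D (m2c D) a b := by
  unfold good2 m2c
  rw [dif_pos h]
  exact h.choose_spec

def P3 (D : V → V → Prop) (a b : V) : Prop :=
  ∃ x1 x2, (x1 = a ∨ D a x1) ∧ (x2 = x1 ∨ D x1 x2) ∧ (x2 = b ∨ D x2 b)

def m3ac (D : V → V → Prop) (a b : V) : V :=
  if h : P3 D a b then h.choose else a

def m3bc (D : V → V → Prop) (a b : V) : V :=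
  if h : P3 D a b then h.choose_spec.choose else a

lemma Hm3_of {D : V → V → Prop} (h : ∀ a b, P3 D a b) :
    ∀ a b : V, (m3ac D a b = a ∨ D a (m3ac D a b)) ∧
      (m3bc D a b = m3ac D a b ∨ D (m3ac D a b) (m3bc D a b)) ∧
      (m3bc D a b = b ∨ D (m3bc D a b) b) := by
  intro a b
  unfold m3ac m3bc
  rw [dif_pos (h a b), dif_pos (h a b)]
  exact ⟨(h a b).choose_spec.choose_spec.1, (h a b).choose_spec.choose_spec.2.1,
    (h a b).choose_spec.choose_spec.2.2⟩

lemma diam2_to_3 {D : V → V → Prop} (h : dirDiamLE2 D) : dirDiamLE3 D :=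
  fun u v => (h u v).imp id (Or.imp id Or.inl)

lemma P3_total {D : V → V → Prop} (hd : dirDiamLE3 D) : ∀ a b, P3 D a b := by
  intro a b
  rcases hd a b with he | h1 | ⟨w, h1, h2⟩ | ⟨w, x, h1, h2, h3⟩
  · exact ⟨a, a, Or.inl rfl, Or.inl rfl, Or.inl (by rw [he])⟩
  · exact ⟨a, a, Or.inl rfl, Or.inl rfl, Or.inr h1⟩
  · exact ⟨w, w, Or.inr h1, Or.inl rfl, Or.inr h2⟩
  · exact ⟨w, x, Or.inr h1, Or.inr h2, Or.inr h3⟩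

lemma P2_of_diam2 {D : V → V → Prop} (hd : dirDiamLE2 D) : ∀ a b, P2 D a b := by
  intro a b
  rcases hd a b with he | h1 | ⟨w, h1, h2⟩
  · exact ⟨a, Or.inl rfl, Or.inl (by rw [he])⟩
  · exact ⟨b, Or.inr h1, Or.inl rfl⟩
  · exact ⟨w, Or.inr h1, Or.inr h2⟩

lemma P2_of_bip {D : V → V → Prop} (f : V → Bool) (hf : ∀ u v, D u v → f u ≠ f v)
    (hd : dirDiamLE3 D) {a b : V} (hab : f a = f b) : P2 D a b := by
  rcases hd a b with he | h1 | ⟨w, h1, h2⟩ | ⟨w, x, h1, h2, h3⟩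
  · exact ⟨a, Or.inl rfl, Or.inl (by rw [he])⟩
  · exact absurd hab (hf a b h1)
  · exact ⟨w, Or.inr h1, Or.inr h2⟩
  · exfalso
    have t1 := hf a w h1
    have t2 := hf w x h2
    have t3 := hf x b h3
    cases ha : f a <;> cases hw : f w <;> cases hx : f x <;> cases hb : f b <;>
      simp_all

end

end
end DirCops

/-- Theorem 7.2: Let `D` be a strongly connected digraph on `n` vertices which has
diameter at most 2 or is bipartite of diameter at most 3.  Then `c(D) ≤ √(2n)`. -/
theorem dirCopNumber_le_sqrt
    {V : Type} [Fintype V] (D : V → V → Prop)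
    (hconn : dirStronglyConnected D)
    (hdiam : dirDiamLE2 D ∨ (dirBipartite D ∧ dirDiamLE3 D)) :
    (dirCopNumber D Set.univ D : ℝ) ≤ Real.sqrt (2 * Fintype.card V) := by
  classical
  by_cases hn : Fintype.card V = 0
  · have hwin : dirCopsCanWin D Set.univ D 0 := by
      refine ⟨Fin.elim0, fun _ => Fin.elim0, ?_⟩
      intro r _ _ c _ _
      exact ((Fintype.card_eq_zero_iff.mp hn).false (r 0)).elim
    have h0 : dirCopNumber D Set.univ D = 0 := Nat.le_zero.mp (Nat.sInf_le hwin)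
    rw [h0]
    exact le_trans (by norm_num) (Real.sqrt_nonneg _)
  · have hpos : 0 < Fintype.card V := Nat.pos_of_ne_zero hn
    obtain ⟨v₀⟩ : Nonempty V := Fintype.card_pos_iff.mp hpos
    set k := Nat.sqrt (2 * Fintype.card V) with hk
    have hk1 : 1 ≤ k := by
      rw [hk]
      have : 1 ≤ 2 * Fintype.card V := by omega
      calc 1 = Nat.sqrt 1 := by simp
        _ ≤ Nat.sqrt (2 * Fintype.card V) := Nat.sqrt_le_sqrt this
    have hcount : 2 * Fintype.card V < k*k + 3*k := by
      have h1 : 2 * Fintype.card V < (k+1)*(k+1) := Nat.lt_succ_sqrt (2 * Fintype.card V)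
      nlinarith [h1, hk1]
    have hwin : dirCopsCanWin D Set.univ D k := by
      rcases hdiam with h2 | ⟨⟨f, hf⟩, h3⟩
      · exact DirCops.master D (DirCops.m2c D) (DirCops.m3ac D) (DirCops.m3bc D)
          (fun _ => True) v₀ k
          (DirCops.Hm3_of (DirCops.P3_total (DirCops.diam2_to_3 h2)))
          (fun v u _ _ => DirCops.good2_m2c (DirCops.P2_of_diam2 h2 v₀ u))
          (fun v hv => absurd trivial hv)
          (fun v u hv => absurd trivial hv)
          (fun v u u' hv => absurd trivial hv)
          hcount
      · refine DirCops.master D (DirCops.m2c D) (DirCops.m3ac D) (DirCops.m3bc D)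
          (fun v => f v ≠ f v₀) v₀ k
          (DirCops.Hm3_of (DirCops.P3_total h3)) ?_ ?_ ?_ ?_ hcount
        · intro v u hv hD
          refine DirCops.good2_m2c (DirCops.P2_of_bip f hf h3 ?_)
          have h4 := hf v u hD
          cases h0 : f v₀ <;> cases h5 : f v <;> cases h6 : f u <;> simp_all
        · intro v hv _ _
          refine DirCops.good2_m2c (DirCops.P2_of_bip f hf h3 ?_)
          rw [not_ne_iff] at hv
          exact hv.symm
        · intro v u hv hne hnD hD
          refine DirCops.good2_m2c (DirCops.P2_of_bip f hf h3 ?_)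
          rw [not_ne_iff] at hv
          have hp : DirCops.P2 D v₀ v := DirCops.P2_of_bip f hf h3 hv.symm
          have hg := DirCops.good2_m2c hp
          have hy : f (DirCops.m2c D v₀ v) ≠ f v₀ := by
            rcases hg.1 with h | h
            · exfalso
              rcases hg.2 with h' | h'
              · exact hne (by rw [← h', h])
              · rw [h] at h'
                exact hnD h'
            · exact fun he => (hf v₀ _ h) he.symm
          have hu : f u ≠ f v₀ := by
            have := hf v u hD
            rw [hv] at this
            exact fun he => this (he.symm)
          cases h0 : f v₀ <;> cases h5 : f (DirCops.m2c D v₀ v) <;> cases h6 : f u <;>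
            simp_all
        · intro v u u' hv hD1 hD2
          refine DirCops.good2_m2c (DirCops.P2_of_bip f hf h3 ?_)
          rw [not_ne_iff] at hv
          have t1 := hf v u hD1
          have t2 := hf u u' hD2
          cases h0 : f v₀ <;> cases h5 : f v <;> cases h6 : f u <;> cases h7 : f u' <;>
            simp_all
    have hle : dirCopNumber D Set.univ D ≤ k := Nat.sInf_le hwin
    have hcast : (dirCopNumber D Set.univ D : ℝ) ≤ (k : ℝ) := Nat.cast_le.mpr hle
    refine le_trans hcast ?_
    have h2 : ((k : ℝ))^2 ≤ ((2 * Fintype.card V : ℕ) : ℝ) := by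
      exact_mod_cast Nat.sqrt_le' (2 * Fintype.card V)
    have h3 : (k : ℝ) ≤ Real.sqrt ((2 * Fintype.card V : ℕ) : ℝ) :=
      (Real.le_sqrt (by positivity) (by positivity)).mpr h2
    have h4 : ((2 * Fintype.card V : ℕ) : ℝ) = 2 * (Fintype.card V : ℝ) := by
      push_cast; ring
    rw [h4] at h3
    exact h3
end

section
/- Let D be a finite strongly connected digraph that either has diameter at most 2 or is bipartite with diameter at most 3. Then for every subdigraph H of D on m ≥ 1 vertices, c(D,H) ≤ √(2m). -/
namespace DirCops
open scoped Classical

noncomputable section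
variable {V : Type}

/-- The list of robber positions `r 0, …, r (t-1)`. -/
def rList (r : ℕ → V) (t : ℕ) : List V := List.ofFn fun j : Fin t => r j.val

lemma rList_length (r : ℕ → V) (t : ℕ) : (rList r t).length = t := by
  simp [rList]

lemma rList_getD (r : ℕ → V) (x₀ : V) {j t : ℕ} (h : j < t) :
    (rList r t).getD j x₀ = r j := by
  rw [List.getD_eq_getElem?_getD]
  simp [rList, List.getElem?_ofFn, h]

lemma rList_succ (r : ℕ → V) (t : ℕ) :
    rList r (t + 1) = r 0 :: rList (fun n => r (n+1)) t := by
  simp [rList, List.ofFn_succ]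

/-- `c` is the play determined by the strategy `(init, move)` against robber `r`. -/
def Follows {k : ℕ} (init : Fin k → V) (move : List ((Fin k → V) × V) → Fin k → V)
    (r : ℕ → V) (c : ℕ → Fin k → V) : Prop :=
  c 0 = init ∧ ∀ t, c (t + 1) = move (List.ofFn fun j : Fin (t + 1) => (c j.val, r j.val))

/-- Strong winning: the strategy is legal against *every* robber sequence, and catches
every robber that is legal for `(S, H)`. -/
def WinS (D : V → V → Prop) (S : Set V) (H : V → V → Prop) (k : ℕ) : Prop :=
  ∃ (init : Fin k → V) (move : List ((Fin k → V) × V) → Fin k → V),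
    (∀ r c, Follows init move r c → ∀ t i, c (t+1) i = c t i ∨ D (c t i) (c (t+1) i)) ∧
    (∀ r, r 0 ∈ S → (∀ t, r (t+1) = r t ∨ H (r t) (r (t+1))) →
      ∀ c, Follows init move r c → ∃ t i, c (t+1) i = r t)

lemma WinS.toCanWin {D : V → V → Prop} {S : Set V} {H : V → V → Prop} {k : ℕ}
    (h : WinS D S H k) : dirCopsCanWin D S H k := by
  obtain ⟨init, move, hleg, hcatch⟩ := h
  exact ⟨init, move, fun r hr0 hrstep c hc0 hcstep =>
    ⟨hleg r c ⟨hc0, hcstep⟩, hcatch r hr0 hrstep c ⟨hc0, hcstep⟩⟩⟩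

/-- robber stays in S -/
lemma robber_mem {S : Set V} {H : V → V → Prop} {r : ℕ → V}
    (hsub : ∀ u v : V, H u v → u ∈ S ∧ v ∈ S)
    (hr0 : r 0 ∈ S) (hrstep : ∀ t, r (t+1) = r t ∨ H (r t) (r (t+1))) :
    ∀ t, r t ∈ S := by
  intro t
  induction t with
  | zero => exact hr0
  | succ t ih =>
    rcases hrstep t with h | h
    · rwa [h]
    · exact (hsub _ _ h).2

/-- a surjection-onto-a-small-set chooser -/
lemma exists_cover {T : Set V} (hfin : T.Finite) {k : ℕ} (hcard : T.ncard ≤ k)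
    (hne : T.Nonempty) : ∃ g : ℕ → V, ∀ w ∈ T, ∃ i < k, g i = w := by
  classical
  refine ⟨fun n => hfin.toFinset.toList.getD n hne.choose, fun w hw => ?_⟩
  have hwl : w ∈ hfin.toFinset.toList := by
    simp [Finset.mem_toList, hfin.mem_toFinset, hw]
  have hlen : hfin.toFinset.toList.length = T.ncard := by
    rw [Finset.length_toList]
    exact (Set.ncard_eq_toFinset_card T hfin).symm
  have hidx : hfin.toFinset.toList.idxOf w < hfin.toFinset.toList.length :=
    List.idxOf_lt_length_iff.mpr hwl
  refine ⟨hfin.toFinset.toList.idxOf w, by omega, ?_⟩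
  show hfin.toFinset.toList.getD _ _ = w
  rw [List.getD_eq_getElem?_getD, List.getElem?_eq_getElem hidx]
  simp [List.getElem_idxOf]

def cover (T : Set V) (k : ℕ) (x₀ : V) : ℕ → V :=
  if h : T.Finite ∧ T.ncard ≤ k ∧ T.Nonempty then (exists_cover h.1 h.2.1 h.2.2).choose
  else fun _ => x₀

lemma cover_spec {T : Set V} {k : ℕ} {x₀ : V} (hfin : T.Finite) (hcard : T.ncard ≤ k)
    {w : V} (hw : w ∈ T) : ∃ i < k, cover T k x₀ i = w := by
  rw [cover, dif_pos ⟨hfin, hcard, ⟨w, hw⟩⟩]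
  exact (exists_cover hfin hcard ⟨w, hw⟩).choose_spec w hw


/-! ### step gadgets -/

/-- A middle point for a lazy path of length two from `u` to `w`, if one exists. -/
def mid2 (D : V → V → Prop) (u w : V) : V :=
  if h : ∃ m, (u = m ∨ D u m) ∧ (m = w ∨ D m w) then h.choose else u

/-- The endpoint of the attempted two-step path: `w` if a lazy 2-path exists, else `u`. -/
def snd2 (D : V → V → Prop) (u w : V) : V :=
  if _ : ∃ m, (u = m ∨ D u m) ∧ (m = w ∨ D m w) then w else u

lemma mid2_legal (D : V → V → Prop) (u w : V) :
    (u = mid2 D u w ∨ D u (mid2 D u w)) ∧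
    (mid2 D u w = snd2 D u w ∨ D (mid2 D u w) (snd2 D u w)) := by
  unfold mid2 snd2
  by_cases h : ∃ m, (u = m ∨ D u m) ∧ (m = w ∨ D m w)
  · rw [dif_pos h, dif_pos h]
    exact h.choose_spec
  · rw [dif_neg h, dif_neg h]
    exact ⟨Or.inl rfl, Or.inl rfl⟩

lemma snd2_eq {D : V → V → Prop} {u w : V}
    (h : ∃ m, (u = m ∨ D u m) ∧ (m = w ∨ D m w)) : snd2 D u w = w := by
  rw [snd2, dif_pos h]

lemma exists2_of_diam2 {D : V → V → Prop} (hd : dirDiamLE2 D) (u w : V) :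
    ∃ m, (u = m ∨ D u m) ∧ (m = w ∨ D m w) := by
  rcases hd u w with h | h | ⟨m, h1, h2⟩
  · exact ⟨u, Or.inl rfl, Or.inl h⟩
  · exact ⟨u, Or.inl rfl, Or.inr h⟩
  · exact ⟨m, Or.inr h1, Or.inr h2⟩

lemma exists2_of_bip {D : V → V → Prop} {f : V → Bool}
    (hf : ∀ u v, D u v → f u ≠ f v) (hd : dirDiamLE3 D) {u w : V} (hc : f u = f w) :
    ∃ m, (u = m ∨ D u m) ∧ (m = w ∨ D m w) := by
  rcases hd u w with h | h | ⟨m, h1, h2⟩ | ⟨m, x, h1, h2, h3⟩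
  · exact ⟨u, Or.inl rfl, Or.inl h⟩
  · exact absurd hc (hf u w h)
  · exact ⟨m, Or.inr h1, Or.inr h2⟩
  · exfalso
    have a1 := hf _ _ h1; have a2 := hf _ _ h2; have a3 := hf _ _ h3
    rw [hc] at a1
    revert a1 a2 a3
    cases f w <;> cases f m <;> cases f x <;> simp

/-- two middle points of a lazy path of length three, freezing if impossible. -/
def path3a (D : V → V → Prop) (u w : V) : V :=
  if h : ∃ p q, (u = p ∨ D u p) ∧ (p = q ∨ D p q) ∧ (q = w ∨ D q w) then h.choose else u

def path3b (D : V → V → Prop) (u w : V) : V :=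
  if h : ∃ p q, (u = p ∨ D u p) ∧ (p = q ∨ D p q) ∧ (q = w ∨ D q w) then
    h.choose_spec.choose else u

def path3c (D : V → V → Prop) (u w : V) : V :=
  if _ : ∃ p q, (u = p ∨ D u p) ∧ (p = q ∨ D p q) ∧ (q = w ∨ D q w) then w else u

lemma path3_legal (D : V → V → Prop) (u w : V) :
    (u = path3a D u w ∨ D u (path3a D u w)) ∧
    (path3a D u w = path3b D u w ∨ D (path3a D u w) (path3b D u w)) ∧
    (path3b D u w = path3c D u w ∨ D (path3b D u w) (path3c D u w)) := by
  unfold path3a path3b path3c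
  by_cases h : ∃ p q, (u = p ∨ D u p) ∧ (p = q ∨ D p q) ∧ (q = w ∨ D q w)
  · rw [dif_pos h, dif_pos h, dif_pos h]
    exact h.choose_spec.choose_spec
  · rw [dif_neg h, dif_neg h, dif_neg h]
    exact ⟨Or.inl rfl, Or.inl rfl, Or.inl rfl⟩

lemma path3c_eq {D : V → V → Prop} (hd : dirDiamLE3 D) (u w : V) : path3c D u w = w := by
  rw [path3c, dif_pos]
  rcases hd u w with h | h | ⟨m, h1, h2⟩ | ⟨m, x, h1, h2, h3⟩
  · exact ⟨u, u, Or.inl rfl, Or.inl rfl, Or.inl h⟩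
  · exact ⟨u, u, Or.inl rfl, Or.inl rfl, Or.inr h⟩
  · exact ⟨m, m, Or.inr h1, Or.inl rfl, Or.inr h2⟩
  · exact ⟨m, x, Or.inr h1, Or.inr h2, Or.inr h3⟩

lemma path3c_eq' {D : V → V → Prop} (hd : dirDiamLE2 D) (u w : V) : path3c D u w = w := by
  rw [path3c, dif_pos]
  obtain ⟨m, h1, h2⟩ := exists2_of_diam2 hd u w
  exact ⟨m, m, h1, Or.inl rfl, h2⟩

/-- a choice of out-neighbour (or `u` itself, if none exists) -/
def nbr (D : V → V → Prop) (u : V) : V :=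
  if h : ∃ w, D u w then h.choose else u

lemma nbr_legal (D : V → V → Prop) (u : V) : u = nbr D u ∨ D u (nbr D u) := by
  rw [nbr]
  by_cases h : ∃ w, D u w
  · rw [dif_pos h]; exact Or.inr h.choose_spec
  · rw [dif_neg h]; exact Or.inl rfl

lemma nbr_arc {D : V → V → Prop} {u : V} (h : ∃ w, D u w) : D u (nbr D u) := by
  rw [nbr, dif_pos h]; exact h.choose_spec

lemma exists_out {D : V → V → Prop} (hconn : dirStronglyConnected D) {u y : V}
    (hne : y ≠ u) : ∃ w, D u w := by
  rcases (Relation.ReflTransGen.cases_head (hconn u y)) with h | ⟨w, hw, _⟩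
  · exact absurd h.symm hne
  · exact ⟨w, hw⟩

/-! ### trivial and monotone wins -/

lemma winS_empty (D : V → V → Prop) (H : V → V → Prop) : WinS D (∅ : Set V) H 0 := by
  refine ⟨fun i => i.elim0, fun _ i => i.elim0, ?_, ?_⟩
  · intro r c _ t i; exact i.elim0
  · intro r hr0; exact absurd hr0 (Set.notMem_empty _)

lemma winS_mono {D : V → V → Prop} {S : Set V} {H : V → V → Prop} {k K : ℕ}
    (x₀ : V) (h : WinS D S H k) (hkK : k ≤ K) : WinS D S H K := by
  obtain ⟨init, move, hleg, hcatch⟩ := h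
  set bigInit : Fin K → V := fun i => if h' : i.val < k then init ⟨i.val, h'⟩ else x₀ with hbi
  set bigMove : List ((Fin K → V) × V) → Fin K → V := fun hist i => if h' : i.val < k then
      move (hist.map fun p => (fun j : Fin k => p.1 (Fin.castLE hkK j), p.2)) ⟨i.val, h'⟩
    else x₀ with hbm
  have hfol : ∀ (r : ℕ → V) (c : ℕ → Fin K → V), Follows bigInit bigMove r c →
      Follows init move r (fun t j => c t (Fin.castLE hkK j)) := by
    intro r c hc
    constructor
    · funext j
      show c 0 (Fin.castLE hkK j) = init j
      rw [hc.1, hbi]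
      have hj : (Fin.castLE hkK j).val < k := j.isLt
      simp only [dif_pos hj]
      exact congrArg init (Fin.ext rfl)
    · intro t
      funext j
      show c (t+1) (Fin.castLE hkK j) = _
      rw [hc.2 t, hbm]
      have hj : (Fin.castLE hkK j).val < k := j.isLt
      simp only [dif_pos hj, List.map_ofFn]
      rfl
  refine ⟨bigInit, bigMove, ?_, ?_⟩
  · intro r c hc t i
    by_cases h' : i.val < k
    · have := hleg r _ (hfol r c hc) t ⟨i.val, h'⟩
      simpa [show Fin.castLE hkK ⟨i.val, h'⟩ = i from by ext; rfl] using this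
    · have hx : ∀ t, c t i = x₀ := by
        intro t
        induction t with
        | zero => rw [hc.1, hbi]; simp [dif_neg h']
        | succ t _ => rw [hc.2 t, hbm]; simp [dif_neg h']
      rw [hx t, hx (t+1)]; exact Or.inl rfl
  · intro r hr0 hrstep c hc
    obtain ⟨t, i, hcatch'⟩ := hcatch r hr0 hrstep _ (hfol r c hc)
    exact ⟨t, Fin.castLE hkK i, hcatch'⟩

/-! ### the guard cop -/

/-- The guard's position: sits at `v` until the robber is first seen inside `Z`, then
jumps onto the robber's vertex and stays there. -/
def gm (Z : Set V) (v : V) (rs : List V) : V :=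
  if h : ∃ j, j < rs.length ∧ rs.getD j v ∈ Z then rs.getD (Nat.find h) v else v

lemma gm_none {Z : Set V} {v : V} {r : ℕ → V} {t : ℕ} (h : ∀ j ≤ t, r j ∉ Z) :
    gm Z v (rList r (t+1)) = v := by
  rw [gm, dif_neg]
  rintro ⟨j, hj, hmem⟩
  rw [rList_length] at hj
  rw [rList_getD _ _ hj] at hmem
  exact h j (by omega) hmem

lemma gm_some {Z : Set V} {v : V} {r : ℕ → V} {t j₀ : ℕ} (hj₀ : r j₀ ∈ Z)
    (hmin : ∀ j < j₀, r j ∉ Z) (hle : j₀ ≤ t) :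
    gm Z v (rList r (t+1)) = r j₀ := by
  have hex : ∃ j, j < (rList r (t+1)).length ∧ (rList r (t+1)).getD j v ∈ Z := by
    refine ⟨j₀, by rw [rList_length]; omega, ?_⟩
    rw [rList_getD _ _ (by omega)]; exact hj₀
  rw [gm, dif_pos hex]
  have hfind : Nat.find hex = j₀ := by
    apply le_antisymm
    · exact Nat.find_le ⟨by rw [rList_length]; omega,
        by rw [rList_getD _ _ (by omega)]; exact hj₀⟩
    · by_contra hlt
      push_neg at hlt
      obtain ⟨h1, h2⟩ := Nat.find_spec hex
      have h1' : Nat.find hex < t + 1 := lt_of_lt_of_le h1 (le_of_eq (rList_length r (t+1)))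
      rw [rList_getD _ _ h1'] at h2
      exact hmin _ hlt h2
  rw [hfind, rList_getD _ _ (by omega)]

lemma winS_guard {D : V → V → Prop} {S : Set V} {H : V → V → Prop} {k : ℕ} (v : V)
    (hsub : ∀ u w : V, H u w → D u w ∧ u ∈ S ∧ w ∈ S)
    (hW : WinS D (S \ {w | w = v ∨ D v w})
      (fun u w => H u w ∧ u ∈ S \ {w' | w' = v ∨ D v w'} ∧ w ∈ S \ {w' | w' = v ∨ D v w'}) k) :
    WinS D S H (k + 1) := by
  classical
  set Z : Set V := {w | w = v ∨ D v w} with hZ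
  obtain ⟨init, move, hleg, hcatch⟩ := hW
  set bigInit : Fin (k+1) → V := Fin.cons v init with hbi
  set bigMove : List ((Fin (k+1) → V) × V) → Fin (k+1) → V := fun hist =>
    Fin.cons (gm Z v (hist.map Prod.snd))
      (move (hist.map fun p => (fun j : Fin k => p.1 j.succ, p.2))) with hbm
  have hguard : ∀ (r : ℕ → V) (c : ℕ → Fin (k+1) → V), Follows bigInit bigMove r c →
      ∀ t, c (t+1) 0 = gm Z v (rList r (t+1)) := by
    intro r c hc t
    rw [hc.2 t, hbm]
    simp only [Fin.cons_zero, List.map_ofFn]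
    rfl
  have hfol : ∀ (r : ℕ → V) (c : ℕ → Fin (k+1) → V), Follows bigInit bigMove r c →
      Follows init move r (fun t j => c t j.succ) := by
    intro r c hc
    constructor
    · funext j
      show c 0 j.succ = init j
      rw [hc.1, hbi, Fin.cons_succ]
    · intro t
      funext j
      show c (t+1) j.succ = _
      rw [hc.2 t, hbm]
      simp only [Fin.cons_succ, List.map_ofFn]
      rfl
  refine ⟨bigInit, bigMove, ?_, ?_⟩
  · intro r c hc t i
    refine Fin.cases ?_ (fun j => ?_) i
    · -- the guard
      by_cases hex : ∃ j, r j ∈ Z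
      · set j₀ := Nat.find hex with hj₀def
        have hj₀ : r j₀ ∈ Z := Nat.find_spec hex
        have hmin : ∀ j < j₀, r j ∉ Z := fun j hj => Nat.find_min hex hj
        have hpos : ∀ s, c (s+1) 0 = if j₀ ≤ s then r j₀ else v := by
          intro s
          rw [hguard r c hc s]
          by_cases hls : j₀ ≤ s
          · rw [if_pos hls]; exact gm_some hj₀ hmin hls
          · rw [if_neg hls]
            exact gm_none (fun j hj hmem => hls (le_trans (Nat.find_le hmem) hj))
        rcases t with _ | t
        · have h00 : c 0 0 = v := by rw [hc.1, hbi]; simp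
          rw [h00, hpos 0]
          by_cases h0 : j₀ ≤ 0
          · rw [if_pos h0]
            exact hj₀
          · rw [if_neg h0]; exact Or.inl rfl
        · rw [hpos t, hpos (t+1)]
          by_cases hls : j₀ ≤ t
          · rw [if_pos hls, if_pos (by omega)]; exact Or.inl rfl
          · rw [if_neg hls]
            by_cases hls' : j₀ ≤ t + 1
            · rw [if_pos hls']
              rcases hj₀ with h | h
              · exact Or.inl h
              · exact Or.inr h
            · rw [if_neg hls']; exact Or.inl rfl
      · push_neg at hex
        have hpos : ∀ s, c (s+1) 0 = v := by
          intro s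
          rw [hguard r c hc s]
          exact gm_none (fun j _ hm => hex j hm)
        rcases t with _ | t
        · have h00 : c 0 0 = v := by rw [hc.1, hbi]; simp
          rw [h00, hpos 0]
          exact Or.inl rfl
        · rw [hpos t, hpos (t+1)]; exact Or.inl rfl
    · have := hleg r _ (hfol r c hc) t j
      exact this
  · intro r hr0 hrstep c hc
    by_cases hex : ∃ j, r j ∈ Z
    · set j₀ := Nat.find hex
      have hj₀ : r j₀ ∈ Z := Nat.find_spec hex
      have hmin : ∀ j < j₀, r j ∉ Z := fun j hj => Nat.find_min hex hj
      refine ⟨j₀, 0, ?_⟩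
      rw [hguard r c hc j₀]
      exact gm_some hj₀ hmin le_rfl
    · push_neg at hex
      have hmem : ∀ t, r t ∈ S := robber_mem (fun u w h => (hsub u w h).2) hr0 hrstep
      have hr0' : r 0 ∈ S \ Z := ⟨hr0, hex 0⟩
      have hrstep' : ∀ t, r (t+1) = r t ∨ (H (r t) (r (t+1)) ∧ r t ∈ S \ Z ∧ r (t+1) ∈ S \ Z) := by
        intro t
        rcases hrstep t with h | h
        · exact Or.inl h
        · exact Or.inr ⟨h, ⟨hmem t, hex t⟩, ⟨hmem (t+1), hex (t+1)⟩⟩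
      obtain ⟨t, j, hcj⟩ := hcatch r hr0' hrstep' _ (hfol r c hc)
      exact ⟨t, j.succ, hcj⟩

/-! ### diameter-2 light strategy: the pounce -/

/-- closed out-neighbourhood of `a` inside `S` -/
def Ta (D : V → V → Prop) (S : Set V) (a : V) : Set V := {w | (w = a ∨ D a w) ∧ w ∈ S}

def GA (D : V → V → Prop) (S : Set V) (k : ℕ) (x₀ : V) (rs : List V) (idx : ℕ) : V :=
  match rs with
  | [] => x₀
  | [a] => mid2 D x₀ (cover (Ta D S a) k x₀ idx)
  | a :: _ :: _ => snd2 D x₀ (cover (Ta D S a) k x₀ idx)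

lemma GA_one (D : V → V → Prop) (S : Set V) (k : ℕ) (x₀ : V) (r : ℕ → V) (idx : ℕ) :
    GA D S k x₀ (rList r 1) idx = mid2 D x₀ (cover (Ta D S (r 0)) k x₀ idx) := by
  have : rList r 1 = [r 0] := by simp [rList, List.ofFn_succ]
  rw [this, GA]

lemma GA_big (D : V → V → Prop) (S : Set V) (k : ℕ) (x₀ : V) (r : ℕ → V) (t idx : ℕ) :
    GA D S k x₀ (rList r (t+2)) idx = snd2 D x₀ (cover (Ta D S (r 0)) k x₀ idx) := by
  rw [rList_succ, rList_succ, GA]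

lemma winS_diam2 [Fintype V] {D : V → V → Prop} {S : Set V} {H : V → V → Prop} {k : ℕ}
    {x₀ : V} (hd : dirDiamLE2 D)
    (hsub : ∀ u w : V, H u w → D u w ∧ u ∈ S ∧ w ∈ S)
    (hlight : ∀ a : V, (Ta D S a).ncard ≤ k) (hx₀ : x₀ ∈ S) : WinS D S H k := by
  classical
  set sm : List ((Fin k → V) × V) → Fin k → V :=
    fun hist i => GA D S k x₀ (hist.map Prod.snd) i.val with hsm
  have hval : ∀ (r : ℕ → V) (c : ℕ → Fin k → V), Follows (fun _ => x₀) sm r c →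
      ∀ t (i : Fin k), c (t+1) i = GA D S k x₀ (rList r (t+1)) i.val := by
    intro r c hc t i
    rw [hc.2 t, hsm]
    simp only [List.map_ofFn]
    rfl
  refine ⟨fun _ => x₀, sm, ?_, ?_⟩
  · intro r c hc t i
    rcases t with _ | t
    · rw [show c 0 i = x₀ from by rw [hc.1], hval r c hc 0 i, GA_one]
      exact ((mid2_legal D x₀ _).1).imp Eq.symm id
    · rcases t with _ | t
      · rw [hval r c hc 0 i, hval r c hc 1 i, GA_one]
        rw [show (0:ℕ)+1+1 = 0+2 from rfl, GA_big]
        exact ((mid2_legal D x₀ _).2).imp Eq.symm id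
      · rw [hval r c hc (t+1) i, hval r c hc (t+2) i]
        rw [show t+1+1 = t+2 from rfl, show t+2+1 = (t+1)+2 from rfl, GA_big, GA_big]
        exact Or.inl rfl
  · intro r hr0 hrstep c hc
    have hr1 : r 1 ∈ Ta D S (r 0) := by
      rcases hrstep 0 with h | h
      · exact ⟨Or.inl h, by rw [h]; exact hr0⟩
      · exact ⟨Or.inr (hsub _ _ h).1, (hsub _ _ h).2.2⟩
    obtain ⟨j, hjk, hj⟩ := cover_spec (Set.toFinite _) (hlight (r 0)) hr1 (x₀ := x₀)
    refine ⟨1, ⟨j, hjk⟩, ?_⟩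
    rw [hval r c hc 1 ⟨j, hjk⟩, show (0:ℕ)+1+1 = 0+2 from rfl, GA_big]
    show snd2 D x₀ (cover (Ta D S (r 0)) k x₀ j) = r 1
    rw [snd2_eq (exists2_of_diam2 hd _ _), hj]

/-! ### bipartite diameter-3 light strategy -/

/-- index of the robber's first move, as seen in the history list -/
def fdIdx (x₀ : V) (rs : List V) : Option ℕ :=
  if h : ∃ s, s + 1 < rs.length ∧ rs.getD (s+1) x₀ ≠ rs.getD s x₀ then some (Nat.find h)
  else none

lemma fd_none {x₀ : V} {r : ℕ → V} {t : ℕ} (h : ∀ j < t, r (j+1) = r j) :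
    fdIdx x₀ (rList r (t+1)) = none := by
  rw [fdIdx, dif_neg]
  rintro ⟨s, hs, hne⟩
  rw [rList_length] at hs
  rw [rList_getD _ _ hs, rList_getD _ _ (by omega)] at hne
  exact hne (h s (by omega))

lemma fd_some {x₀ : V} {r : ℕ → V} {t d : ℕ} (hd : r (d+1) ≠ r d)
    (hmin : ∀ j < d, r (j+1) = r j) (hlt : d < t) :
    fdIdx x₀ (rList r (t+1)) = some d := by
  have hwit : d + 1 < (rList r (t+1)).length ∧
      (rList r (t+1)).getD (d+1) x₀ ≠ (rList r (t+1)).getD d x₀ := by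
    refine ⟨by rw [rList_length]; omega, ?_⟩
    rw [rList_getD _ _ (by omega), rList_getD _ _ (by omega)]
    exact hd
  have hex : ∃ s, s + 1 < (rList r (t+1)).length ∧
      (rList r (t+1)).getD (s+1) x₀ ≠ (rList r (t+1)).getD s x₀ := ⟨d, hwit⟩
  rw [fdIdx, dif_pos hex]
  congr 1
  apply le_antisymm (Nat.find_le hwit)
  by_contra hlt2
  push_neg at hlt2
  obtain ⟨h1, h2⟩ := Nat.find_spec hex
  have h1' : Nat.find hex + 1 < t + 1 := lt_of_lt_of_le h1 (le_of_eq (rList_length r (t+1)))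
  rw [rList_getD _ _ h1', rList_getD _ _ (by omega)] at h2
  exact h2 (hmin _ hlt2)

/-- open out-neighbourhood of `a` inside `S` -/
def Tb (D : V → V → Prop) (S : Set V) (a : V) : Set V := {w | D a w ∧ w ∈ S}

/-- the colour-adjusted base vertex of the squad -/
def baseB (D : V → V → Prop) (f : V → Bool) (x₀ a : V) : V :=
  if f x₀ = f a then x₀ else nbr D x₀

lemma baseB_legal (D : V → V → Prop) (f : V → Bool) (x₀ a : V) :
    x₀ = baseB D f x₀ a ∨ D x₀ (baseB D f x₀ a) := by
  rw [baseB]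
  split
  · exact Or.inl rfl
  · exact nbr_legal D x₀

/-- squad cop positions -/
def GB (D : V → V → Prop) (S : Set V) (f : V → Bool) (k : ℕ) (x₀ : V)
    (rs : List V) (idx : ℕ) : V :=
  (fdIdx x₀ rs).elim (baseB D f x₀ (rs.getD 0 x₀)) fun s =>
    if rs.length = s + 2 then
      mid2 D (baseB D f x₀ (rs.getD 0 x₀)) (cover (Tb D S (rs.getD (s+1) x₀)) (k-1) x₀ idx)
    else
      snd2 D (baseB D f x₀ (rs.getD 0 x₀)) (cover (Tb D S (rs.getD (s+1) x₀)) (k-1) x₀ idx)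

lemma GB_none {D : V → V → Prop} {S : Set V} {f : V → Bool} {k : ℕ} {x₀ : V}
    {r : ℕ → V} {t : ℕ} (h : ∀ j < t, r (j+1) = r j) (idx : ℕ) :
    GB D S f k x₀ (rList r (t+1)) idx = baseB D f x₀ (r 0) := by
  rw [GB, fd_none h, Option.elim_none, rList_getD _ _ (by omega)]

lemma GB_mid {D : V → V → Prop} {S : Set V} {f : V → Bool} {k : ℕ} {x₀ : V}
    {r : ℕ → V} {d : ℕ} (hd : r (d+1) ≠ r d) (hmin : ∀ j < d, r (j+1) = r j) (idx : ℕ) :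
    GB D S f k x₀ (rList r (d+2)) idx =
      mid2 D (baseB D f x₀ (r 0)) (cover (Tb D S (r (d+1))) (k-1) x₀ idx) := by
  have : rList r (d+2) = rList r ((d+1)+1) := rfl
  rw [this, GB, fd_some hd hmin (by omega), Option.elim_some, rList_length,
    if_pos (by omega), rList_getD _ _ (by omega), rList_getD _ _ (by omega)]

lemma GB_snd {D : V → V → Prop} {S : Set V} {f : V → Bool} {k : ℕ} {x₀ : V}
    {r : ℕ → V} {d t : ℕ} (hd : r (d+1) ≠ r d) (hmin : ∀ j < d, r (j+1) = r j)
    (hlt : d + 2 ≤ t) (idx : ℕ) :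
    GB D S f k x₀ (rList r (t+1)) idx =
      snd2 D (baseB D f x₀ (r 0)) (cover (Tb D S (r (d+1))) (k-1) x₀ idx) := by
  rw [GB, fd_some hd hmin (by omega), Option.elim_some, rList_length,
    if_neg (by omega), rList_getD _ _ (by omega), rList_getD _ _ (by omega)]

/-- spare cop positions -/
def GC (D : V → V → Prop) (x₀ : V) (rs : List V) : V :=
  if _ : dirDiamLE3 D then
    let τ := rs.length - 1
    let j := τ / 4
    let u := if j = 0 then x₀ else rs.getD (4*(j-1)) x₀
    let w := rs.getD (4*j) x₀
    if τ % 4 = 0 then u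
    else if τ % 4 = 1 then path3a D u w
    else if τ % 4 = 2 then path3b D u w
    else path3c D u w
  else x₀

lemma GC_val {D : V → V → Prop} (hd3 : dirDiamLE3 D) (x₀ : V) (r : ℕ → V) (t : ℕ) :
    GC D x₀ (rList r (t+1)) =
      (fun (u w : V) =>
        if t % 4 = 0 then u
        else if t % 4 = 1 then path3a D u w
        else if t % 4 = 2 then path3b D u w
        else path3c D u w)
      (if t / 4 = 0 then x₀ else r (4*(t/4 - 1))) (r (4*(t/4))) := by
  rw [GC, dif_pos hd3]
  simp only [rList_length, Nat.add_sub_cancel]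
  by_cases hj : t / 4 = 0
  · rw [if_pos hj, if_pos hj, rList_getD _ _ (by omega)]
  · rw [if_neg hj, if_neg hj, rList_getD _ _ (by omega), rList_getD _ _ (by omega)]
lemma bool_trans {a b c : Bool} (h1 : a ≠ b) (h2 : c ≠ b) : a = c := by
  cases a <;> cases b <;> cases c <;> simp_all

lemma winS_bip3 [Fintype V] {D : V → V → Prop} {S : Set V} {H : V → V → Prop} {k : ℕ}
    {x₀ : V} {f : V → Bool}
    (hf : ∀ u v, D u v → f u ≠ f v) (hd3 : dirDiamLE3 D)
    (hconn : dirStronglyConnected D)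
    (hsub : ∀ u w : V, H u w → D u w ∧ u ∈ S ∧ w ∈ S)
    (hlight : ∀ a : V, (Ta D S a).ncard ≤ k) (hk : 1 ≤ k) :
    WinS D S H k := by
  classical
  set sm : List ((Fin k → V) × V) → Fin k → V := fun hist i =>
    if i.val + 1 = k then GC D x₀ (hist.map Prod.snd)
    else GB D S f k x₀ (hist.map Prod.snd) i.val with hsm
  have hval : ∀ (r : ℕ → V) (c : ℕ → Fin k → V), Follows (fun _ => x₀) sm r c →
      ∀ t (i : Fin k), c (t+1) i =
        if i.val + 1 = k then GC D x₀ (rList r (t+1))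
        else GB D S f k x₀ (rList r (t+1)) i.val := by
    intro r c hc t i
    rw [hc.2 t, hsm]
    simp only [List.map_ofFn]
    rfl
  refine ⟨fun _ => x₀, sm, ?_, ?_⟩
  · -- legality
    intro r c hc t i
    have hc0 : c 0 i = x₀ := by rw [hc.1]
    by_cases hsp : i.val + 1 = k
    · -- the spare cop
      have hp : ∀ s, c (s+1) i = GC D x₀ (rList r (s+1)) := by
        intro s; rw [hval r c hc s i, if_pos hsp]
      rcases t with _ | s
      · rw [hc0, hp 0, GC_val hd3]
        norm_num
      · rw [hp s, hp (s+1), GC_val hd3, GC_val hd3]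
        have hq : s % 4 = 0 ∨ s % 4 = 1 ∨ s % 4 = 2 ∨ s % 4 = 3 := by omega
        rcases hq with h0 | h1 | h2 | h3
        · have e1 : (s+1) % 4 = 1 := by omega
          have e2 : (s+1) / 4 = s / 4 := by omega
          rw [h0, e1, e2]
          norm_num
          exact ((path3_legal D _ _).1).imp Eq.symm id
        · have e1 : (s+1) % 4 = 2 := by omega
          have e2 : (s+1) / 4 = s / 4 := by omega
          rw [h1, e1, e2]
          norm_num
          exact ((path3_legal D _ _).2.1).imp Eq.symm id
        · have e1 : (s+1) % 4 = 3 := by omega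
          have e2 : (s+1) / 4 = s / 4 := by omega
          rw [h2, e1, e2]
          norm_num
          exact ((path3_legal D _ _).2.2).imp Eq.symm id
        · have e1 : (s+1) % 4 = 0 := by omega
          have e2 : (s+1) / 4 = s / 4 + 1 := by omega
          rw [h3, e1, e2]
          refine Or.inl ?_
          norm_num
          rw [path3c_eq hd3]
    · -- a squad cop
      have hp : ∀ s, c (s+1) i = GB D S f k x₀ (rList r (s+1)) i.val := by
        intro s; rw [hval r c hc s i, if_neg hsp]
      by_cases hmove : ∃ n, r (n+1) ≠ r n
      · set d := Nat.find hmove with hddef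
        have hd : r (d+1) ≠ r d := Nat.find_spec hmove
        have hmin : ∀ j < d, r (j+1) = r j := by
          intro j hj
          by_contra hne
          have hle : d ≤ j := hddef ▸ Nat.find_le hne
          omega
        have hcbase : ∀ s, s ≤ d → c (s+1) i = baseB D f x₀ (r 0) := by
          intro s hs
          rw [hp s]
          exact GB_none (fun j hj => hmin j (by omega)) i.val
        have hcmid : c (d+1+1) i =
            mid2 D (baseB D f x₀ (r 0)) (cover (Tb D S (r (d+1))) (k-1) x₀ i.val) := by
          rw [hp (d+1)]
          exact GB_mid hd hmin i.val
        have hcsnd : ∀ s, d + 2 ≤ s → c (s+1) i =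
            snd2 D (baseB D f x₀ (r 0)) (cover (Tb D S (r (d+1))) (k-1) x₀ i.val) := by
          intro s hs
          rw [hp s]
          exact GB_snd hd hmin hs i.val
        rcases t with _ | s
        · rw [hc0, hcbase 0 (by omega)]
          exact (baseB_legal D f x₀ (r 0)).imp Eq.symm id
        · rcases Nat.lt_trichotomy (s+1) (d+1) with hs | hs | hs
          · rw [hcbase s (by omega), hcbase (s+1) (by omega)]
            exact Or.inl rfl
          · rw [hcbase s (by omega), show s+1+1 = d+1+1 by omega, hcmid]
            exact ((mid2_legal D _ _).1).imp Eq.symm id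
          · rcases Nat.lt_trichotomy (s+1) (d+2) with hs2 | hs2 | hs2
            · omega
            · rw [show s+1 = d+1+1 by omega, hcmid, hcsnd (d+1+1) (by omega)]
              exact ((mid2_legal D _ _).2).imp Eq.symm id
            · rw [hcsnd s (by omega), hcsnd (s+1) (by omega)]
              exact Or.inl rfl
      · push_neg at hmove
        have hconst : ∀ s, c (s+1) i = baseB D f x₀ (r 0) := by
          intro s
          rw [hp s]
          exact GB_none (fun j _ => hmove j) i.val
        rcases t with _ | s
        · rw [hc0, hconst 0]
          exact (baseB_legal D f x₀ (r 0)).imp Eq.symm id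
        · rw [hconst s, hconst (s+1)]
          exact Or.inl rfl
  · -- catching
    intro r hr0 hrstep c hc
    have hmem : ∀ t, r t ∈ S := robber_mem (fun u w h => (hsub u w h).2) hr0 hrstep
    have hspare : ∀ T, (∀ s, T ≤ s → r s = r T) →
        ∃ (t : ℕ) (i : Fin k), c (t+1) i = r t := by
      -- the spare cop catches an eventually constant robber
      intro T hT
      have hik : k - 1 < k := by omega
      refine ⟨4*T+3, ⟨k-1, hik⟩, ?_⟩
      rw [hval r c hc (4*T+3) ⟨k-1, hik⟩,
        if_pos (show ((⟨k-1, hik⟩ : Fin k) : ℕ) + 1 = k by simp; omega), GC_val hd3]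
      have e1 : (4*T+3) % 4 = 3 := by omega
      have e2 : (4*T+3) / 4 = T := by omega
      rw [e1, e2]
      norm_num
      rw [path3c_eq hd3]
      rw [hT (4*T) (by omega), hT (4*T+3) (by omega)]
    by_cases hmove : ∃ n, r (n+1) ≠ r n
    · set d := Nat.find hmove with hddef
      have hd : r (d+1) ≠ r d := Nat.find_spec hmove
      have hmin : ∀ j < d, r (j+1) = r j := by
        intro j hj
        by_contra hne
        have hle : d ≤ j := hddef ▸ Nat.find_le hne
        omega
      by_cases hmove2 : ∃ e, d + 1 ≤ e ∧ r (e+1) ≠ r e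
      · -- the robber moves a second time: a squad cop is already sitting there
        set e := Nat.find hmove2 with hedef
        have hespec : d + 1 ≤ e ∧ r (e+1) ≠ r e := Nat.find_spec hmove2
        obtain ⟨hde, he⟩ := hespec
        have hemin : ∀ j, d + 1 ≤ j → j < e → r (j+1) = r j := by
          intro j h1 h2
          by_contra hne
          have hle : e ≤ j := hedef ▸ Nat.find_le (⟨h1, hne⟩ : d + 1 ≤ j ∧ r (j+1) ≠ r j)
          omega
        have hconst2 : ∀ j, d + 1 ≤ j → j ≤ e → r j = r (d+1) := by
          intro j h1 h2
          induction j with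
          | zero => omega
          | succ n ih =>
            rcases Nat.lt_or_ge n (d+1) with h | h
            · have hnd : n + 1 = d + 1 := by omega
              rw [hnd]
            · rw [hemin n h (by omega), ih h (by omega)]
        have hHd : H (r d) (r (d+1)) := (hrstep d).resolve_left hd
        have hDd : D (r d) (r (d+1)) := (hsub _ _ hHd).1
        have hre : r e = r (d+1) := hconst2 e hde (le_refl e)
        have hHe : H (r e) (r (e+1)) := (hrstep e).resolve_left he
        have hDe : D (r (d+1)) (r (e+1)) := by rw [← hre]; exact (hsub _ _ hHe).1
        have hmemTb : r (e+1) ∈ Tb D S (r (d+1)) := ⟨hDe, hmem (e+1)⟩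
        have hconst1 : ∀ j, j ≤ d → r j = r 0 := by
          intro j hj
          induction j with
          | zero => rfl
          | succ n ih => rw [hmin n (by omega), ih (by omega)]
        have hTbcard : (Tb D S (r (d+1))).ncard ≤ k - 1 := by
          have hsub1 : Tb D S (r (d+1)) ⊆ Ta D S (r (d+1)) \ {r (d+1)} := by
            rintro w ⟨hw1, hw2⟩
            refine ⟨⟨Or.inr hw1, hw2⟩, ?_⟩
            intro hww
            rw [Set.mem_singleton_iff] at hww
            subst hww
            exact hf _ _ hw1 rfl
          have hmemTa : r (d+1) ∈ Ta D S (r (d+1)) := ⟨Or.inl rfl, hmem (d+1)⟩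
          calc (Tb D S (r (d+1))).ncard
              ≤ (Ta D S (r (d+1)) \ {r (d+1)}).ncard :=
                Set.ncard_le_ncard hsub1 (Set.toFinite _)
            _ = (Ta D S (r (d+1))).ncard - 1 := by
                rw [Set.ncard_diff_singleton_of_mem hmemTa]
            _ ≤ k - 1 := by
                have := hlight (r (d+1))
                omega
        obtain ⟨j, hjk, hj⟩ := cover_spec (Set.toFinite _) hTbcard hmemTb (x₀ := x₀)
        have hbase : f (baseB D f x₀ (r 0)) = f (r 0) := by
          rw [baseB]
          split
          · assumption
          · rename_i hne
            have hout : ∃ w, D x₀ w := by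
              rcases Classical.em (r d = x₀) with hcase | hcase
              · exact exists_out hconn (by rw [← hcase]; exact hd)
              · exact exists_out hconn hcase
            exact bool_trans (hf _ _ (nbr_arc hout)).symm (Ne.symm hne)
        have hcol : f (baseB D f x₀ (r 0)) = f (r (e+1)) := by
          rw [hbase]
          have c1 : f (r 0) = f (r d) := by rw [hconst1 d (le_refl d)]
          have c2 : f (r d) ≠ f (r (d+1)) := hf _ _ hDd
          have c3 : f (r (e+1)) ≠ f (r (d+1)) := (hf _ _ hDe).symm
          rw [c1]
          exact bool_trans c2 c3
        have hjk' : j < k := by omega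
        refine ⟨e+1, ⟨j, hjk'⟩, ?_⟩
        rw [hval r c hc (e+1) ⟨j, hjk'⟩,
          if_neg (show ¬ (((⟨j, hjk'⟩ : Fin k) : ℕ) + 1 = k) by simp; omega)]
        show GB D S f k x₀ (rList r ((e+1)+1)) j = r (e+1)
        rw [GB_snd hd hmin (by omega) j, ← hj]
        apply snd2_eq
        apply exists2_of_bip hf hd3
        rw [hj, hcol]
      · -- the robber moves exactly once and then stands still
        push_neg at hmove2
        apply hspare (d+1)
        intro s hs
        induction s with
        | zero => omega
        | succ n ih =>
          rcases Nat.lt_or_ge n (d+1) with h | h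
          · have hnd : n + 1 = d + 1 := by omega
            rw [hnd]
          · rw [hmove2 n h, ih (by omega)]
    · -- the robber never moves
      push_neg at hmove
      apply hspare 0
      intro s _
      induction s with
      | zero => rfl
      | succ n ih => rw [hmove n, ih (by omega)]

/-! ### the main induction -/

lemma winS_sqrt [Fintype V] {D : V → V → Prop} (hconn : dirStronglyConnected D)
    (hdiam : dirDiamLE2 D ∨ (dirBipartite D ∧ dirDiamLE3 D)) :
    ∀ (n : ℕ) (S : Set V) (H : V → V → Prop),
      (∀ u w : V, H u w → D u w ∧ u ∈ S ∧ w ∈ S) → S.ncard = n →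
      WinS D S H (Nat.sqrt (2*n)) := by
  intro n
  induction n using Nat.strong_induction_on with
  | _ n ih =>
  intro S H hsub hcard
  rcases Nat.eq_zero_or_pos n with h0 | hpos
  · subst h0
    have hS : S = ∅ := (Set.ncard_eq_zero (Set.toFinite S)).mp hcard
    subst hS
    simpa using winS_empty D H
  · have hSne : S.Nonempty := by
      rw [← Set.ncard_pos (Set.toFinite S)]
      omega
    obtain ⟨x₀, hx₀⟩ := hSne
    set k := Nat.sqrt (2*n) with hk
    have hk1 : 1 ≤ k := Nat.le_sqrt.mpr (by omega)
    by_cases heavy : ∃ v : V, k + 1 ≤ (Ta D S v).ncard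
    · obtain ⟨v, hv⟩ := heavy
      have hsub' : ∀ u w : V,
          (fun u w => H u w ∧ u ∈ S \ {w' | w' = v ∨ D v w'} ∧ w ∈ S \ {w' | w' = v ∨ D v w'}) u w →
          D u w ∧ u ∈ S \ {w' | w' = v ∨ D v w'} ∧ w ∈ S \ {w' | w' = v ∨ D v w'} :=
        fun u w h => ⟨(hsub u w h.1).1, h.2.1, h.2.2⟩
      have hTa_sub : Ta D S v ⊆ S := fun w hw => hw.2
      have hS'eq : S \ {w' | w' = v ∨ D v w'} = S \ Ta D S v := by
        ext w
        simp only [Set.mem_diff, Set.mem_setOf_eq, Ta]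
        tauto
      have hS'card : (S \ {w' | w' = v ∨ D v w'}).ncard = n - (Ta D S v).ncard := by
        rw [hS'eq, Set.ncard_diff hTa_sub, hcard]
      have hTan : (Ta D S v).ncard ≤ n := by
        rw [← hcard]
        exact Set.ncard_le_ncard hTa_sub (Set.toFinite S)
      set n' := (S \ {w' | w' = v ∨ D v w'}).ncard with hn'
      have hn'lt : n' < n := by omega
      have hrec := ih n' hn'lt (S \ {w' | w' = v ∨ D v w'}) _ hsub' rfl
      have hsq : Nat.sqrt (2*n') ≤ k - 1 := by
        have h1 : 2*n < (k+1)*(k+1) := by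
          rw [hk]
          exact Nat.lt_succ_sqrt (2*n)
        have h1' : 2*n < k*k + 2*k + 1 := by nlinarith
        have h2 : n' + (Ta D S v).ncard = n := by omega
        have h3 : 2*n' < k*k := by linarith
        have h4 : Nat.sqrt (2*n') < k := Nat.sqrt_lt'.mpr (by rwa [pow_two])
        omega
      have hmono := winS_mono x₀ hrec hsq
      have hguard := winS_guard v hsub hmono
      rw [show k - 1 + 1 = k by omega] at hguard
      exact hguard
    · push_neg at heavy
      have hlight : ∀ a : V, (Ta D S a).ncard ≤ k := fun a => by
        have := heavy a
        omega
      rcases hdiam with hd2 | ⟨⟨f, hf⟩, hd3⟩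
      · exact winS_diam2 hd2 hsub hlight hx₀
      · exact winS_bip3 (x₀ := x₀) hf hd3 hconn hsub hlight hk1

end
end DirCops

/-- The inductive statement in the proof of Theorem 7.2: for every subdigraph `H`
(with vertex set `S` of size `m ≥ 1` and arc relation `H`) of a strongly connected
digraph `D` which has diameter at most 2 or is bipartite of diameter at most 3, we
have `c(D,H) ≤ √(2m)`. -/
theorem dirCopNumber_sub_le_sqrt
    {V : Type} [Fintype V] (D : V → V → Prop)
    (hconn : dirStronglyConnected D)
    (hdiam : dirDiamLE2 D ∨ (dirBipartite D ∧ dirDiamLE3 D))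
    (S : Set V) (H : V → V → Prop)
    (hsub : ∀ u v : V, H u v → D u v ∧ u ∈ S ∧ v ∈ S)
    (hm : 1 ≤ S.ncard) :
    (dirCopNumber D S H : ℝ) ≤ Real.sqrt (2 * S.ncard) := by
  have hwin : dirCopsCanWin D S H (Nat.sqrt (2 * S.ncard)) :=
    (DirCops.winS_sqrt hconn hdiam S.ncard S H hsub rfl).toCanWin
  have hle : dirCopNumber D S H ≤ Nat.sqrt (2 * S.ncard) := Nat.sInf_le hwin
  calc (dirCopNumber D S H : ℝ) ≤ (Nat.sqrt (2 * S.ncard) : ℝ) := by exact_mod_cast hle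
    _ ≤ Real.sqrt (2 * S.ncard) := by
        rw [Real.le_sqrt (by positivity) (by positivity)]
        have := Nat.sqrt_le' (2 * S.ncard)
        exact_mod_cast this
end
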